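/- arXiv:1310.5201 — 4 statements merged into one kernel-verified Lean document; each statement's English description precedes it below -/
import Mathlib

section
/- Let a, b be positive integers and let n = a+b. For any order ideal I of [a]×[b], the sign-word of the promotion image ∂(I) is the leftward cyclic shift of the sign-word of I: s(∂I)_i = s(I)_{i+1} for 1 ≤ i ≤ n−1 and s(∂I)_n = s(I)_1. -/
open scoped symmDiff

open scoped Classical in
/-- The toggle `σ_x` on order ideals (lower sets) of a finite poset,
as an operation on finsets: send `I` to `I ∆ {x}` if that is again a
lower set, and to `I` otherwise. -/
noncomputable def toggle {P : Type*} [PartialOrder P] [DecidableEq P]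
    (x : P) (I : Finset P) : Finset P :=
  if IsLowerSet (↑(I ∆ {x}) : Set P) then I ∆ {x} else I

/-- The height function of an order ideal of `[a] × [b]`:
`h_I(k) = |k| + 2·#{elements of I in file k}`. -/
def ht (a b : ℕ) (I : Finset (Fin a × Fin b)) (k : ℤ) : ℤ :=
  |k| + 2 * (I.filter (fun p => ((p.2 : ℕ) : ℤ) - ((p.1 : ℕ) : ℤ) = k)).card

/-- The `i`-th letter (`1 ≤ i ≤ a+b`) of the sign-word of an order ideal
of `[a] × [b]`: `s(I)_i = h_I(i-a) - h_I(i-a-1)`. -/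
def sgn (a b : ℕ) (I : Finset (Fin a × Fin b)) (i : ℕ) : ℤ :=
  ht a b I ((i : ℤ) - (a : ℤ)) - ht a b I ((i : ℤ) - (a : ℤ) - 1)

namespace PromShift

variable {a b : ℕ}

def fl (p : Fin a × Fin b) : ℤ := ((p.2 : ℕ) : ℤ) - ((p.1 : ℕ) : ℤ)

def cnt (J : Finset (Fin a × Fin b)) (m : ℤ) : ℕ :=
  (J.filter (fun p => ((p.2 : ℕ) : ℤ) - ((p.1 : ℕ) : ℤ) = m)).card

def bd (J : Finset (Fin a × Fin b)) (m : ℤ) : ℤ := max 0 (-m) + (cnt J m : ℤ)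

lemma ht_eq_bd (J : Finset (Fin a × Fin b)) (m : ℤ) :
    ht a b J m = 2 * bd J m + m := by
  unfold ht bd cnt
  have : |m| = 2 * max 0 (-m) + m := by
    rcases abs_cases m with ⟨h1, h2⟩ | ⟨h1, h2⟩ <;> omega
  omega

lemma fl_lb (p : Fin a × Fin b) : 1 - (a : ℤ) ≤ fl p := by
  have h1 := p.1.isLt; have h2 := p.2.isLt
  unfold fl; omega

lemma fl_ub (p : Fin a × Fin b) : fl p ≤ (b : ℤ) - 1 := by
  have h1 := p.1.isLt; have h2 := p.2.isLt
  unfold fl; omega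

lemma cnt_out (J : Finset (Fin a × Fin b)) (m : ℤ) (h : m ≤ -(a : ℤ) ∨ (b : ℤ) ≤ m) :
    cnt J m = 0 := by
  unfold cnt
  rw [Finset.card_eq_zero, Finset.filter_eq_empty_iff]
  intro p _
  have h1 := fl_lb p; have h2 := fl_ub p
  unfold fl at h1 h2; omega

lemma bd_lo (J : Finset (Fin a × Fin b)) (m : ℤ) : max 0 (-m) ≤ bd J m := by
  unfold bd; omega

lemma bd_congr {J J' : Finset (Fin a × Fin b)} {m : ℤ} (h : cnt J' m = cnt J m) :
    bd J' m = bd J m := by unfold bd; rw [h]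

/-- a downward-closed finite set of integers bounded below is an interval -/
lemma ico_of_dc (T : Finset ℤ) (lo : ℤ) (hlo : ∀ i ∈ T, lo ≤ i)
    (hdc : ∀ i ∈ T, ∀ i' : ℤ, lo ≤ i' → i' < i → i' ∈ T) :
    ∀ i : ℤ, i ∈ T ↔ lo ≤ i ∧ i < lo + T.card := by
  intro i
  constructor
  · intro hi
    refine ⟨hlo _ hi, ?_⟩
    have hsub : Finset.Ico lo (i + 1) ⊆ T := by
      intro x hx
      rw [Finset.mem_Ico] at hx
      rcases eq_or_lt_of_le (by omega : x ≤ i) with h | h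
      · subst h; exact hi
      · exact hdc i hi x hx.1 h
    have := Finset.card_le_card hsub
    rw [Int.card_Ico] at this
    omega
  · rintro ⟨h1, h2⟩
    by_contra hi
    have hsub : T ⊆ Finset.Ico lo i := by
      intro x hx
      rw [Finset.mem_Ico]
      refine ⟨hlo _ hx, ?_⟩
      rcases lt_trichotomy x i with h | h | h
      · exact h
      · exact absurd (h ▸ hx) hi
      · exact absurd (hdc x hx i h1 h) hi
    have := Finset.card_le_card hsub
    rw [Int.card_Ico] at this
    omega

end PromShift

namespace PromShift

variable {a b : ℕ}

lemma mem_and_ex {J : Finset (Fin a × Fin b)} (hJ : IsLowerSet (↑J : Set (Fin a × Fin b))) (m : ℤ) :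
    (∀ p : Fin a × Fin b, fl p = m → (p ∈ J ↔ ((p.1 : ℕ) : ℤ) < bd J m)) ∧
    (∀ i : ℤ, max 0 (-m) ≤ i → i < bd J m →
      ∃ p, p ∈ J ∧ fl p = m ∧ ((p.1 : ℕ) : ℤ) = i) := by
  classical
  set F := J.filter (fun p => ((p.2 : ℕ) : ℤ) - ((p.1 : ℕ) : ℤ) = m) with hF
  set T := F.image (fun p => ((p.1 : ℕ) : ℤ)) with hT
  have hmemF : ∀ p, p ∈ F ↔ p ∈ J ∧ fl p = m := by
    intro p; rw [hF, Finset.mem_filter]; rfl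
  have hcard : T.card = cnt J m := by
    rw [hT, Finset.card_image_of_injOn, hF]; rfl
    intro p hp q hq hpq
    simp only [Finset.mem_coe, hmemF] at hp hq
    have hpq' : ((p.1 : ℕ) : ℤ) = ((q.1 : ℕ) : ℤ) := hpq
    have e1 : (p.1 : ℕ) = (q.1 : ℕ) := by exact_mod_cast hpq'
    have hp2 := hp.2; have hq2 := hq.2
    unfold fl at hp2 hq2
    have e2 : (p.2 : ℕ) = (q.2 : ℕ) := by omega
    exact Prod.ext (Fin.ext e1) (Fin.ext e2)
  have hlo : ∀ i ∈ T, max 0 (-m) ≤ i := by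
    intro i hi
    rw [hT, Finset.mem_image] at hi
    obtain ⟨p, hp, rfl⟩ := hi
    rw [hmemF] at hp
    have hp2 := hp.2; unfold fl at hp2
    omega
  have hdc : ∀ i ∈ T, ∀ i' : ℤ, max 0 (-m) ≤ i' → i' < i → i' ∈ T := by
    intro i hi i' h1 h2
    rw [hT, Finset.mem_image] at hi ⊢
    obtain ⟨p, hpF, hpi⟩ := hi
    rw [hmemF] at hpF
    obtain ⟨hpJ, hpm⟩ := hpF
    unfold fl at hpm
    have hpa : ((p.1 : ℕ) : ℤ) < a := by exact_mod_cast p.1.isLt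
    have hpb : ((p.2 : ℕ) : ℤ) < b := by exact_mod_cast p.2.isLt
    refine ⟨(⟨i'.toNat, by omega⟩, ⟨(i' + m).toNat, by omega⟩), ?_, by simp; omega⟩
    rw [hmemF]
    constructor
    · refine hJ ?_ hpJ
      simp only [Prod.le_def, Fin.le_def]
      constructor <;> simp <;> omega
    · unfold fl; simp; omega
  have hico := ico_of_dc T (max 0 (-m)) hlo hdc
  have hbd : max 0 (-m) + (T.card : ℤ) = bd J m := by rw [hcard]; rfl
  constructor
  · intro p hpm
    have h1 : p ∈ J ↔ ((p.1 : ℕ) : ℤ) ∈ T := by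
      constructor
      · intro h; rw [hT, Finset.mem_image]; exact ⟨p, (hmemF p).mpr ⟨h, hpm⟩, rfl⟩
      · intro h
        rw [hT, Finset.mem_image] at h
        obtain ⟨q, hq, hqe⟩ := h
        rw [hmemF] at hq
        have e1 : (q.1 : ℕ) = (p.1 : ℕ) := by exact_mod_cast hqe
        have hq2 := hq.2; unfold fl at hq2 hpm
        have e2 : (q.2 : ℕ) = (p.2 : ℕ) := by omega
        have : q = p := Prod.ext (Fin.ext e1) (Fin.ext e2)
        exact this ▸ hq.1
    rw [h1, hico]
    unfold fl at hpm
    omega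
  · intro i h1 h2
    have hiT : i ∈ T := (hico i).mpr ⟨h1, by omega⟩
    rw [hT, Finset.mem_image] at hiT
    obtain ⟨p, hp, hpi⟩ := hiT
    rw [hmemF] at hp
    exact ⟨p, hp.1, hp.2, hpi⟩

lemma mem_iff_bd {J : Finset (Fin a × Fin b)} (hJ : IsLowerSet (↑J : Set (Fin a × Fin b)))
    (p : Fin a × Fin b) : p ∈ J ↔ ((p.1 : ℕ) : ℤ) < bd J (fl p) :=
  (mem_and_ex hJ (fl p)).1 p rfl

lemma exists_bd {J : Finset (Fin a × Fin b)} (hJ : IsLowerSet (↑J : Set (Fin a × Fin b)))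
    (m i : ℤ) (h1 : max 0 (-m) ≤ i) (h2 : i < bd J m) :
    ∃ p, p ∈ J ∧ fl p = m ∧ ((p.1 : ℕ) : ℤ) = i :=
  (mem_and_ex hJ m).2 i h1 h2

lemma bd_ub {J : Finset (Fin a × Fin b)} (hJ : IsLowerSet (↑J : Set (Fin a × Fin b)))
    (m : ℤ) (h1 : -(a : ℤ) ≤ m) (h2 : m ≤ (b : ℤ)) : bd J m ≤ a ∧ bd J m + m ≤ b := by
  rcases Nat.eq_zero_or_pos (cnt J m) with h | h
  · unfold bd; rw [h]; simp; omega
  · obtain ⟨p, hpJ, hpm, hpi⟩ := exists_bd hJ m (bd J m - 1)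
      (by unfold bd; omega) (by omega)
    have hpa : ((p.1 : ℕ) : ℤ) < a := by exact_mod_cast p.1.isLt
    have hpb : ((p.2 : ℕ) : ℤ) < b := by exact_mod_cast p.2.isLt
    unfold fl at hpm
    omega

lemma bd_step {J : Finset (Fin a × Fin b)} (hJ : IsLowerSet (↑J : Set (Fin a × Fin b)))
    (m : ℤ) : bd J m ≤ bd J (m - 1) ∧ bd J (m - 1) ≤ bd J m + 1 := by
  constructor
  · rcases Nat.eq_zero_or_pos (cnt J m) with h | h
    · have e : bd J m = max 0 (-m) := by unfold bd; rw [h]; simp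
      have := bd_lo J (m - 1)
      omega
    · obtain ⟨p, hpJ, hpm, hpi⟩ := exists_bd hJ m (bd J m - 1)
        (by unfold bd; omega) (by omega)
      unfold fl at hpm
      by_cases h0 : (p.2 : ℕ) = 0
      · have h0' : ((p.2 : ℕ) : ℤ) = 0 := by exact_mod_cast h0
        have := bd_lo J (m - 1)
        omega
      · have hq : ((p.1, ⟨(p.2 : ℕ) - 1, by omega⟩) : Fin a × Fin b) ∈ J := by
          refine hJ ?_ hpJ
          simp only [Prod.le_def, Fin.le_def]
          constructor <;> simp
        have hfl : fl ((p.1, ⟨(p.2 : ℕ) - 1, by omega⟩) : Fin a × Fin b) = m - 1 := by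
          unfold fl; simp; omega
        rw [mem_iff_bd hJ, hfl] at hq
        simp at hq
        omega
  · rcases Nat.eq_zero_or_pos (cnt J (m - 1)) with h | h
    · have e : bd J (m - 1) = max 0 (-(m - 1)) := by unfold bd; rw [h]; simp
      have := bd_lo J m
      omega
    · obtain ⟨p, hpJ, hpm, hpi⟩ := exists_bd hJ (m - 1) (bd J (m - 1) - 1)
        (by unfold bd; omega) (by omega)
      unfold fl at hpm
      by_cases h0 : (p.1 : ℕ) = 0
      · have h0' : ((p.1 : ℕ) : ℤ) = 0 := by exact_mod_cast h0
        have := bd_lo J m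
        omega
      · have hq : ((⟨(p.1 : ℕ) - 1, by omega⟩, p.2) : Fin a × Fin b) ∈ J := by
          refine hJ ?_ hpJ
          simp only [Prod.le_def, Fin.le_def]
          constructor <;> simp
        have hfl : fl ((⟨(p.1 : ℕ) - 1, by omega⟩, p.2) : Fin a × Fin b) = m := by
          unfold fl; simp; omega
        rw [mem_iff_bd hJ, hfl] at hq
        simp at hq
        omega

lemma bd_mono {J : Finset (Fin a × Fin b)} (hJ : IsLowerSet (↑J : Set (Fin a × Fin b)))
    (m m' : ℤ) (h : m ≤ m') : bd J m' ≤ bd J m ∧ bd J m ≤ bd J m' + (m' - m) := by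
  refine Int.le_induction
    (motive := fun n _ => bd J n ≤ bd J m ∧ bd J m ≤ bd J n + (n - m)) ?_ ?_ m' h
  · simp
  · intro n hn ih
    have hs := bd_step hJ (n + 1)
    have e : n + 1 - 1 = n := by ring
    rw [e] at hs
    omega

end PromShift

namespace PromShift

variable {a b : ℕ}

section GenToggle

variable {P : Type*} [PartialOrder P] [DecidableEq P]

set_option linter.unusedSectionVars false

lemma symmDiff_not_mem {J : Finset P} {x : P} (hx : x ∉ J) : J ∆ {x} = insert x J := by
  ext y
  by_cases h : y = x <;> simp [Finset.mem_symmDiff, h, hx]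

lemma symmDiff_mem {J : Finset P} {x : P} (hx : x ∈ J) : J ∆ {x} = J.erase x := by
  ext y
  by_cases h : y = x <;> simp [Finset.mem_symmDiff, h, hx]

lemma toggle_lower {J : Finset P} (hJ : IsLowerSet (↑J : Set P)) (x : P) :
    IsLowerSet (↑(toggle x J) : Set P) := by
  unfold toggle; split_ifs with h; exacts [h, hJ]

lemma mem_toggle {J : Finset P} {x y : P} (h : y ≠ x) : y ∈ toggle x J ↔ y ∈ J := by
  unfold toggle
  split_ifs with hls
  · simp [Finset.mem_symmDiff, h]
  · exact Iff.rfl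

lemma toggle_eq {J : Finset P} {x : P} (h : IsLowerSet (↑(J ∆ {x}) : Set P)) :
    toggle x J = J ∆ {x} := by
  unfold toggle; rw [if_pos h]

lemma toggle_not_addable {J : Finset P} {x z : P} (hx : x ∉ J) (hz : z < x) (hzJ : z ∉ J) :
    toggle x J = J := by
  unfold toggle
  rw [if_neg]
  rw [symmDiff_not_mem hx]
  intro h
  have hmem : x ∈ (↑(insert x J) : Set P) := by simp
  have := h (le_of_lt hz) hmem
  simp at this
  rcases this with h' | h'
  · exact (ne_of_lt hz) h'
  · exact hzJ h'

lemma toggle_not_removable {J : Finset P} {x z : P} (hx : x ∈ J) (hz : x < z) (hzJ : z ∈ J) :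
    toggle x J = J := by
  unfold toggle
  rw [if_neg]
  rw [symmDiff_mem hx]
  intro h
  have hzE : z ∈ (↑(J.erase x) : Set P) := by
    simp [Finset.mem_erase]
    exact ⟨hzJ, ne_of_gt hz⟩
  have := h (le_of_lt hz) hzE
  simp at this

lemma foldl_const (L : List P) (S : Finset P) (h : ∀ p ∈ L, toggle p S = S) :
    L.foldl (fun J p => toggle p J) S = S := by
  induction L with
  | nil => rfl
  | cons x xs ih =>
      rw [List.foldl_cons, h x (by simp)]
      exact ih (fun p hp => h p (by simp [hp]))

end GenToggle

lemma cnt_congr {J J' : Finset (Fin a × Fin b)} {m : ℤ}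
    (h : ∀ p : Fin a × Fin b, fl p = m → (p ∈ J' ↔ p ∈ J)) : cnt J' m = cnt J m := by
  unfold cnt
  congr 1
  ext p
  simp only [Finset.mem_filter]
  exact and_congr_left (fun hm => h p hm)

lemma cnt_insert {J : Finset (Fin a × Fin b)} {x : Fin a × Fin b} (hx : x ∉ J) :
    cnt (insert x J) (fl x) = cnt J (fl x) + 1 := by
  unfold cnt
  have hc : ((x.2 : ℕ) : ℤ) - ((x.1 : ℕ) : ℤ) = fl x := rfl
  rw [Finset.filter_insert, if_pos hc,
    Finset.card_insert_of_notMem (fun h => hx (Finset.mem_filter.mp h).1)]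

lemma cnt_erase {J : Finset (Fin a × Fin b)} {x : Fin a × Fin b} (hx : x ∈ J) :
    cnt (J.erase x) (fl x) + 1 = cnt J (fl x) := by
  unfold cnt
  rw [Finset.filter_erase, Finset.card_erase_of_mem (by rw [Finset.mem_filter]; exact ⟨hx, rfl⟩)]
  have : (J.filter (fun p => ((p.2 : ℕ) : ℤ) - ((p.1 : ℕ) : ℤ) = fl x)).Nonempty :=
    ⟨x, by rw [Finset.mem_filter]; exact ⟨hx, rfl⟩⟩
  have := Finset.card_pos.mpr this
  omega

end PromShift

namespace PromShift

variable {a b : ℕ}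

lemma exists_elem (a b : ℕ) (i j : ℤ) (h0 : 0 ≤ i) (h1 : i < (a : ℤ)) (h2 : 0 ≤ j)
    (h3 : j < (b : ℤ)) :
    ∃ z : Fin a × Fin b, ((z.1 : ℕ) : ℤ) = i ∧ ((z.2 : ℕ) : ℤ) = j :=
  ⟨(⟨i.toNat, by omega⟩, ⟨j.toNat, by omega⟩), Int.toNat_of_nonneg h0, Int.toNat_of_nonneg h2⟩

lemma le_iff_coord {p q : Fin a × Fin b} :
    p ≤ q ↔ ((p.1 : ℕ) : ℤ) ≤ ((q.1 : ℕ) : ℤ) ∧ ((p.2 : ℕ) : ℤ) ≤ ((q.2 : ℕ) : ℤ) := by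
  rw [Prod.le_def, Fin.le_def, Fin.le_def]
  constructor <;> rintro ⟨h1, h2⟩ <;> exact ⟨by omega, by omega⟩

lemma eq_coord {p q : Fin a × Fin b} (h : p = q) :
    ((p.1 : ℕ) : ℤ) = ((q.1 : ℕ) : ℤ) ∧ ((p.2 : ℕ) : ℤ) = ((q.2 : ℕ) : ℤ) := by
  rw [h]; exact ⟨rfl, rfl⟩

lemma eq_of_coord {p q : Fin a × Fin b} (h1 : ((p.1 : ℕ) : ℤ) = ((q.1 : ℕ) : ℤ))
    (h2 : ((p.2 : ℕ) : ℤ) = ((q.2 : ℕ) : ℤ)) : p = q := by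
  refine Prod.ext (Fin.ext ?_) (Fin.ext ?_) <;> omega

lemma lt_of_coord {p q : Fin a × Fin b} (h1 : ((p.1 : ℕ) : ℤ) ≤ ((q.1 : ℕ) : ℤ))
    (h2 : ((p.2 : ℕ) : ℤ) ≤ ((q.2 : ℕ) : ℤ))
    (h3 : ((p.1 : ℕ) : ℤ) + ((p.2 : ℕ) : ℤ) < ((q.1 : ℕ) : ℤ) + ((q.2 : ℕ) : ℤ)) : p < q :=
  lt_iff_le_and_ne.mpr ⟨le_iff_coord.mpr ⟨h1, h2⟩, fun he => by
    obtain ⟨e1, e2⟩ := eq_coord he; omega⟩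

lemma fl_coord (p : Fin a × Fin b) : ((p.2 : ℕ) : ℤ) = ((p.1 : ℕ) : ℤ) + fl p := by
  unfold fl; ring

lemma file_step (ha : 1 ≤ a) (hb : 1 ≤ b)
    (J : Finset (Fin a × Fin b)) (hJ : IsLowerSet (↑J : Set (Fin a × Fin b)))
    (k : ℤ) (hk1 : 1 - (a : ℤ) ≤ k) (hk2 : k ≤ (b : ℤ) - 1)
    (L : List (Fin a × Fin b)) (hnd : L.Nodup) (hLm : ∀ p : Fin a × Fin b, p ∈ L ↔ fl p = k) :
    IsLowerSet (↑(L.foldl (fun J p => toggle p J) J) : Set (Fin a × Fin b)) ∧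
    (∀ m : ℤ, m ≠ k → cnt (L.foldl (fun J p => toggle p J) J) m = cnt J m) ∧
    bd (L.foldl (fun J p => toggle p J) J) k = bd J (k - 1) + bd J (k + 1) - bd J k := by
  have hstep1 := bd_step hJ k
  have hstep2 := bd_step hJ (k + 1)
  have ek : k + 1 - 1 = k := by ring
  rw [ek] at hstep2
  have hlok := bd_lo J k
  have hlokm := bd_lo J (k - 1)
  have hlokp := bd_lo J (k + 1)
  have hub_km := bd_ub hJ (k - 1) (by omega) (by omega)
  have hub_kp := bd_ub hJ (k + 1) (by omega) (by omega)
  have hmemk := (mem_and_ex hJ k).1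
  have hmemkm := (mem_and_ex hJ (k - 1)).1
  have hmemkp := (mem_and_ex hJ (k + 1)).1
  have hc1 : bd J (k - 1) = bd J k ∨ bd J (k - 1) = bd J k + 1 := by omega
  have hc2 : bd J (k + 1) = bd J k - 1 ∨ bd J (k + 1) = bd J k := by omega
  rcases hc1 with h1 | h1 <;> rcases hc2 with h2 | h2
  · -- CASE B : remove x = (bd k - 1, bd k - 1 + k)
    obtain ⟨x, hx1, hx2⟩ := exists_elem a b (bd J k - 1) (bd J k - 1 + k)
      (by omega) (by omega) (by omega) (by omega)
    have hxfl : fl x = k := by unfold fl; omega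
    have hxJ : x ∈ J := by rw [hmemk x hxfl]; omega
    have hers : IsLowerSet (↑(J.erase x) : Set (Fin a × Fin b)) := by
      intro u v hvu hu
      simp only [Finset.coe_erase, Set.mem_diff, Finset.mem_coe, Set.mem_singleton_iff] at hu ⊢
      obtain ⟨huJ, hux⟩ := hu
      refine ⟨hJ hvu huJ, ?_⟩
      intro hvx
      obtain ⟨e1, e2⟩ := eq_coord hvx
      rw [hx1] at e1
      rw [hx2] at e2
      rw [le_iff_coord] at hvu
      have hum := fl_coord u
      rw [(mem_and_ex hJ (fl u)).1 u rfl] at huJ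
      have hne : ¬(((u.1 : ℕ) : ℤ) = bd J k - 1 ∧ ((u.2 : ℕ) : ℤ) = bd J k - 1 + k) := by
        rintro ⟨f1, f2⟩
        exact hux (eq_of_coord (by omega) (by omega))
      by_cases hq : bd J k ≤ ((u.1 : ℕ) : ℤ)
      · by_cases hm : k ≤ fl u
        · have := (bd_mono hJ k (fl u) hm).1
          omega
        · have := (bd_mono hJ (fl u) (k - 1) (by omega)).2
          omega
      · have hm : k + 1 ≤ fl u := by omega
        have := (bd_mono hJ (k + 1) (fl u) hm).1
        omega
    have htog : toggle x J = J.erase x := by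
      rw [toggle_eq (by rw [symmDiff_mem hxJ]; exact hers), symmDiff_mem hxJ]
    have hkey : ∀ S : Finset (Fin a × Fin b),
        (∀ q : Fin a × Fin b, q ≠ x → (q ∈ S ↔ q ∈ J)) →
        ∀ y : Fin a × Fin b, fl y = k → y ≠ x → toggle y S = S := by
      intro S hS y hyk hyx
      have hy2 := fl_coord y
      rw [hyk] at hy2
      have hy1a : ((y.1 : ℕ) : ℤ) < a := by exact_mod_cast y.1.isLt
      have hy2b : ((y.2 : ℕ) : ℤ) < b := by exact_mod_cast y.2.isLt
      by_cases hp : ((y.1 : ℕ) : ℤ) < bd J k - 1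
      · have hyJ : y ∈ J := by rw [hmemk y hyk]; omega
        obtain ⟨z, hz1, hz2⟩ := exists_elem a b (((y.1 : ℕ) : ℤ) + 1) ((y.2 : ℕ) : ℤ)
          (by omega) (by omega) (by omega) (by omega)
        have hzfl : fl z = k - 1 := by unfold fl; omega
        have hzJ : z ∈ J := by rw [hmemkm z hzfl]; omega
        have hzx : z ≠ x := fun he => by rw [he, hxfl] at hzfl; omega
        exact toggle_not_removable ((hS y hyx).mpr hyJ)
          (lt_of_coord (by omega) (by omega) (by omega)) ((hS z hzx).mpr hzJ)
      · have hp' : bd J k ≤ ((y.1 : ℕ) : ℤ) := by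
          have : ((y.1 : ℕ) : ℤ) ≠ bd J k - 1 :=
            fun he => hyx (eq_of_coord (by omega) (by omega))
          omega
        have hyJ : y ∉ J := by rw [hmemk y hyk]; omega
        obtain ⟨z, hz1, hz2⟩ := exists_elem a b (((y.1 : ℕ) : ℤ) - 1) ((y.2 : ℕ) : ℤ)
          (by omega) (by omega) (by omega) (by omega)
        have hzfl : fl z = k + 1 := by unfold fl; omega
        have hzJ : z ∉ J := by rw [hmemkp z hzfl]; omega
        have hzx : z ≠ x := fun he => by rw [he, hxfl] at hzfl; omega
        exact toggle_not_addable (fun h => hyJ ((hS y hyx).mp h))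
          (lt_of_coord (by omega) (by omega) (by omega))
          (fun h => hzJ ((hS z hzx).mp h))
    have hxL : x ∈ L := (hLm x).mpr hxfl
    obtain ⟨L₁, L₂, rfl⟩ := List.append_of_mem hxL
    rw [List.nodup_append, List.nodup_cons] at hnd
    obtain ⟨hn1, ⟨hx2L, hn2⟩, hdisj⟩ := hnd
    have hx1L : x ∉ L₁ := fun h => hdisj x h x (by simp) rfl
    rw [List.foldl_append, List.foldl_cons]
    have e1 : L₁.foldl (fun J p => toggle p J) J = J :=
      foldl_const _ _ (fun p hp => hkey J (fun q _ => Iff.rfl) p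
        ((hLm p).mp (by simp [hp])) (fun he => hx1L (he ▸ hp)))
    rw [e1, htog]
    have e2 : L₂.foldl (fun J p => toggle p J) (J.erase x) = J.erase x :=
      foldl_const _ _ (fun p hp => hkey (J.erase x)
        (fun q hq => by rw [Finset.mem_erase]; exact and_iff_right hq) p
        ((hLm p).mp (by simp [hp])) (fun he => hx2L (he ▸ hp)))
    rw [e2]
    refine ⟨hers, ?_, ?_⟩
    · intro m hm
      apply cnt_congr
      intro p hpm
      have : p ≠ x := fun he => hm (by rw [← hpm, he, hxfl])
      rw [Finset.mem_erase]
      exact and_iff_right this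
    · have hce := cnt_erase hxJ
      rw [hxfl] at hce
      unfold bd at h1 h2 ⊢
      omega
  · -- CASE D : bd (k-1) = bd k = bd (k+1), nothing active
    have hkey : ∀ y : Fin a × Fin b, fl y = k → toggle y J = J := by
      intro y hyk
      have hy2 := fl_coord y
      rw [hyk] at hy2
      have hy1a : ((y.1 : ℕ) : ℤ) < a := by exact_mod_cast y.1.isLt
      have hy2b : ((y.2 : ℕ) : ℤ) < b := by exact_mod_cast y.2.isLt
      by_cases hp : ((y.1 : ℕ) : ℤ) < bd J k
      · have hyJ : y ∈ J := by rw [hmemk y hyk]; omega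
        obtain ⟨z, hz1, hz2⟩ := exists_elem a b ((y.1 : ℕ) : ℤ) (((y.2 : ℕ) : ℤ) + 1)
          (by omega) (by omega) (by omega) (by omega)
        have hzfl : fl z = k + 1 := by unfold fl; omega
        have hzJ : z ∈ J := by rw [hmemkp z hzfl]; omega
        exact toggle_not_removable hyJ (lt_of_coord (by omega) (by omega) (by omega)) hzJ
      · have hyJ : y ∉ J := by rw [hmemk y hyk]; omega
        obtain ⟨z, hz1, hz2⟩ := exists_elem a b ((y.1 : ℕ) : ℤ) (((y.2 : ℕ) : ℤ) - 1)
          (by omega) (by omega) (by omega) (by omega)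
        have hzfl : fl z = k - 1 := by unfold fl; omega
        have hzJ : z ∉ J := by rw [hmemkm z hzfl]; omega
        exact toggle_not_addable hyJ (lt_of_coord (by omega) (by omega) (by omega)) hzJ
    have e1 : L.foldl (fun J p => toggle p J) J = J :=
      foldl_const _ _ (fun p hp => hkey p ((hLm p).mp hp))
    rw [e1]
    exact ⟨hJ, fun m _ => rfl, by omega⟩
  · -- CASE C : bd (k-1) = bd k + 1, bd (k+1) = bd k - 1, nothing active
    have hkey : ∀ y : Fin a × Fin b, fl y = k → toggle y J = J := by
      intro y hyk
      have hy2 := fl_coord y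
      rw [hyk] at hy2
      have hy1a : ((y.1 : ℕ) : ℤ) < a := by exact_mod_cast y.1.isLt
      have hy2b : ((y.2 : ℕ) : ℤ) < b := by exact_mod_cast y.2.isLt
      by_cases hp : ((y.1 : ℕ) : ℤ) < bd J k
      · have hyJ : y ∈ J := by rw [hmemk y hyk]; omega
        obtain ⟨z, hz1, hz2⟩ := exists_elem a b (((y.1 : ℕ) : ℤ) + 1) ((y.2 : ℕ) : ℤ)
          (by omega) (by omega) (by omega) (by omega)
        have hzfl : fl z = k - 1 := by unfold fl; omega
        have hzJ : z ∈ J := by rw [hmemkm z hzfl]; omega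
        exact toggle_not_removable hyJ (lt_of_coord (by omega) (by omega) (by omega)) hzJ
      · have hyJ : y ∉ J := by rw [hmemk y hyk]; omega
        obtain ⟨z, hz1, hz2⟩ := exists_elem a b (((y.1 : ℕ) : ℤ) - 1) ((y.2 : ℕ) : ℤ)
          (by omega) (by omega) (by omega) (by omega)
        have hzfl : fl z = k + 1 := by unfold fl; omega
        have hzJ : z ∉ J := by rw [hmemkp z hzfl]; omega
        exact toggle_not_addable hyJ (lt_of_coord (by omega) (by omega) (by omega)) hzJ
    have e1 : L.foldl (fun J p => toggle p J) J = J :=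
      foldl_const _ _ (fun p hp => hkey p ((hLm p).mp hp))
    rw [e1]
    exact ⟨hJ, fun m _ => rfl, by omega⟩
  · -- CASE A : bd (k-1) = bd k + 1, bd (k+1) = bd k : insert x = (bd k, bd k + k)
    obtain ⟨x, hx1, hx2⟩ := exists_elem a b (bd J k) (bd J k + k)
      (by omega) (by omega) (by omega) (by omega)
    have hxfl : fl x = k := by unfold fl; omega
    have hxJ : x ∉ J := by rw [hmemk x hxfl]; omega
    have hins : IsLowerSet (↑(insert x J) : Set (Fin a × Fin b)) := by
      intro u v hvu hu
      simp only [Finset.coe_insert, Set.mem_insert_iff, Finset.mem_coe] at hu ⊢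
      rcases hu with hux | huJ
      · by_cases hv : v = x
        · exact Or.inl hv
        · right
          obtain ⟨e1, e2⟩ := eq_coord hux
          rw [hx1] at e1
          rw [hx2] at e2
          rw [le_iff_coord] at hvu
          have hvm := fl_coord v
          rw [(mem_and_ex hJ (fl v)).1 v rfl]
          have hne : ¬(((v.1 : ℕ) : ℤ) = bd J k ∧ ((v.2 : ℕ) : ℤ) = bd J k + k) := by
            rintro ⟨f1, f2⟩
            exact hv (eq_of_coord (by omega) (by omega))
          by_cases hq : ((v.1 : ℕ) : ℤ) < bd J k
          · by_cases hm : fl v ≤ k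
            · have := (bd_mono hJ (fl v) k hm).1
              omega
            · have := (bd_mono hJ (k + 1) (fl v) (by omega)).2
              omega
          · have hm : fl v ≤ k - 1 := by omega
            have := (bd_mono hJ (fl v) (k - 1) hm).1
            omega
      · exact Or.inr (hJ hvu huJ)
    have htog : toggle x J = insert x J := by
      rw [toggle_eq (by rw [symmDiff_not_mem hxJ]; exact hins), symmDiff_not_mem hxJ]
    have hkey : ∀ S : Finset (Fin a × Fin b),
        (∀ q : Fin a × Fin b, q ≠ x → (q ∈ S ↔ q ∈ J)) →
        ∀ y : Fin a × Fin b, fl y = k → y ≠ x → toggle y S = S := by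
      intro S hS y hyk hyx
      have hy2 := fl_coord y
      rw [hyk] at hy2
      have hy1a : ((y.1 : ℕ) : ℤ) < a := by exact_mod_cast y.1.isLt
      have hy2b : ((y.2 : ℕ) : ℤ) < b := by exact_mod_cast y.2.isLt
      by_cases hp : ((y.1 : ℕ) : ℤ) < bd J k
      · have hyJ : y ∈ J := by rw [hmemk y hyk]; omega
        obtain ⟨z, hz1, hz2⟩ := exists_elem a b (((y.1 : ℕ) : ℤ) + 1) ((y.2 : ℕ) : ℤ)
          (by omega) (by omega) (by omega) (by omega)
        have hzfl : fl z = k - 1 := by unfold fl; omega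
        have hzJ : z ∈ J := by rw [hmemkm z hzfl]; omega
        have hzx : z ≠ x := fun he => by rw [he, hxfl] at hzfl; omega
        exact toggle_not_removable ((hS y hyx).mpr hyJ)
          (lt_of_coord (by omega) (by omega) (by omega)) ((hS z hzx).mpr hzJ)
      · have hp' : bd J k < ((y.1 : ℕ) : ℤ) := by
          have : ((y.1 : ℕ) : ℤ) ≠ bd J k :=
            fun he => hyx (eq_of_coord (by omega) (by omega))
          omega
        have hyJ : y ∉ J := by rw [hmemk y hyk]; omega
        obtain ⟨z, hz1, hz2⟩ := exists_elem a b (((y.1 : ℕ) : ℤ) - 1) ((y.2 : ℕ) : ℤ)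
          (by omega) (by omega) (by omega) (by omega)
        have hzfl : fl z = k + 1 := by unfold fl; omega
        have hzJ : z ∉ J := by rw [hmemkp z hzfl]; omega
        have hzx : z ≠ x := fun he => by rw [he, hxfl] at hzfl; omega
        exact toggle_not_addable (fun h => hyJ ((hS y hyx).mp h))
          (lt_of_coord (by omega) (by omega) (by omega))
          (fun h => hzJ ((hS z hzx).mp h))
    have hxL : x ∈ L := (hLm x).mpr hxfl
    obtain ⟨L₁, L₂, rfl⟩ := List.append_of_mem hxL
    rw [List.nodup_append, List.nodup_cons] at hnd
    obtain ⟨hn1, ⟨hx2L, hn2⟩, hdisj⟩ := hnd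
    have hx1L : x ∉ L₁ := fun h => hdisj x h x (by simp) rfl
    rw [List.foldl_append, List.foldl_cons]
    have e1 : L₁.foldl (fun J p => toggle p J) J = J :=
      foldl_const _ _ (fun p hp => hkey J (fun q _ => Iff.rfl) p
        ((hLm p).mp (by simp [hp])) (fun he => hx1L (he ▸ hp)))
    rw [e1, htog]
    have e2 : L₂.foldl (fun J p => toggle p J) (insert x J) = insert x J :=
      foldl_const _ _ (fun p hp => hkey (insert x J)
        (fun q hq => by rw [Finset.mem_insert]; exact or_iff_right hq) p
        ((hLm p).mp (by simp [hp])) (fun he => hx2L (he ▸ hp)))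
    rw [e2]
    refine ⟨hins, ?_, ?_⟩
    · intro m hm
      apply cnt_congr
      intro p hpm
      have : p ≠ x := fun he => hm (by rw [← hpm, he, hxfl])
      rw [Finset.mem_insert]
      exact or_iff_right this
    · have hci := cnt_insert hxJ
      rw [hxfl] at hci
      unfold bd at h1 h2 ⊢
      omega

end PromShift

namespace PromShift

variable {a b : ℕ}

lemma sorted_filter_append {α : Type*} (key : α → ℤ) (t : ℤ) :
    ∀ l : List α, l.Pairwise (fun x y => key x ≤ key y) →
      l.filter (fun x => decide (key x ≤ t)) ++ l.filter (fun x => decide (¬(key x ≤ t))) = l := by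
  intro l
  induction l with
  | nil => simp
  | cons x xs ih =>
      intro hs
      rw [List.pairwise_cons] at hs
      obtain ⟨hx, hxs⟩ := hs
      by_cases h : key x ≤ t
      · have hd : decide (key x ≤ t) = true := by simp [h]
        have hd2 : decide (¬ key x ≤ t) = false := by simp [h]
        simp only [List.filter_cons, hd, hd2, if_true, if_false, Bool.false_eq_true]
        rw [List.cons_append, ih hxs]
      · have hd : decide (key x ≤ t) = false := by simp [h]
        have hd2 : decide (¬ key x ≤ t) = true := by simp [h]
        have h1 : xs.filter (fun y => decide (key y ≤ t)) = [] := by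
          rw [List.filter_eq_nil_iff]
          intro y hy
          simp only [decide_eq_true_eq]
          exact fun hle => h ((hx y hy).trans hle)
        have h2 : xs.filter (fun y => decide (¬ key y ≤ t)) = xs := by
          rw [List.filter_eq_self]
          intro y hy
          simp only [decide_eq_true_eq]
          exact fun hle => h ((hx y hy).trans hle)
        simp only [List.filter_cons, hd, hd2, if_true, if_false, Bool.false_eq_true]
        rw [h1, h2]
        simp

lemma rec_lemma (ha : 1 ≤ a) (hb : 1 ≤ b) (t : ℤ) (ht0 : -(a : ℤ) ≤ t) :
    t ≤ (b : ℤ) - 1 →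
    ∀ l : List (Fin a × Fin b), l.Nodup → l.Pairwise (fun p q => fl p ≤ fl q) →
      (∀ p : Fin a × Fin b, p ∈ l ↔ fl p ≤ t) →
    ∀ J : Finset (Fin a × Fin b), IsLowerSet (↑J : Set (Fin a × Fin b)) →
      IsLowerSet (↑(l.foldl (fun J p => toggle p J) J) : Set (Fin a × Fin b)) ∧
      (∀ m : ℤ, -(a : ℤ) ≤ m → m ≤ t →
        bd (l.foldl (fun J p => toggle p J) J) m = bd J (m + 1) + a - bd J (1 - (a : ℤ))) ∧
      (∀ m : ℤ, t < m → cnt (l.foldl (fun J p => toggle p J) J) m = cnt J m) := by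
  refine Int.le_induction
    (motive := fun s _ => s ≤ (b : ℤ) - 1 →
      ∀ l : List (Fin a × Fin b), l.Nodup → l.Pairwise (fun p q => fl p ≤ fl q) →
        (∀ p : Fin a × Fin b, p ∈ l ↔ fl p ≤ s) →
      ∀ J : Finset (Fin a × Fin b), IsLowerSet (↑J : Set (Fin a × Fin b)) →
        IsLowerSet (↑(l.foldl (fun J p => toggle p J) J) : Set (Fin a × Fin b)) ∧
        (∀ m : ℤ, -(a : ℤ) ≤ m → m ≤ s →
          bd (l.foldl (fun J p => toggle p J) J) m = bd J (m + 1) + a - bd J (1 - (a : ℤ))) ∧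
        (∀ m : ℤ, s < m → cnt (l.foldl (fun J p => toggle p J) J) m = cnt J m)) ?_ ?_ t ht0
  · intro _ l hnd hsort hmem J hJ
    have hl : l = [] := by
      rw [List.eq_nil_iff_forall_not_mem]
      intro p hp
      have h1 := fl_lb p
      have h2 := (hmem p).mp hp
      omega
    subst hl
    simp only [List.foldl_nil]
    refine ⟨hJ, ?_, fun m _ => by simp⟩
    intro m hm1 hm2
    have hm : m = -(a : ℤ) := by omega
    have e0 : bd J (-(a : ℤ)) = a := by
      unfold bd
      rw [cnt_out J (-(a : ℤ)) (Or.inl le_rfl)]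
      omega
    rw [hm, e0, show -(a : ℤ) + 1 = 1 - (a : ℤ) from by ring]
    omega
  · intro n hn ih hnb l hnd hsort hmem J hJ
    have hkey := sorted_filter_append fl n l hsort
    have hfold : l.foldl (fun J p => toggle p J) J =
        (l.filter (fun p => decide (¬(fl p ≤ n)))).foldl (fun J p => toggle p J)
          ((l.filter (fun p => decide (fl p ≤ n))).foldl (fun J p => toggle p J) J) := by
      conv_lhs => rw [← hkey]
      rw [List.foldl_append]
    rw [hfold]
    have hmem1 : ∀ p : Fin a × Fin b,
        p ∈ l.filter (fun p => decide (fl p ≤ n)) ↔ fl p ≤ n := by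
      intro p
      rw [List.mem_filter]
      simp only [decide_eq_true_eq]
      constructor
      · exact fun h => h.2
      · exact fun h => ⟨(hmem p).mpr (by omega), h⟩
    obtain ⟨hJ1low, hJ1bd, hJ1cnt⟩ := ih (by omega) (l.filter (fun p => decide (fl p ≤ n)))
      (hnd.filter _) (hsort.filter _) hmem1 J hJ
    have hmem2 : ∀ p : Fin a × Fin b,
        p ∈ l.filter (fun p => decide (¬(fl p ≤ n))) ↔ fl p = n + 1 := by
      intro p
      rw [List.mem_filter]
      simp only [decide_eq_true_eq]
      constructor
      · rintro ⟨h1, h2⟩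
        have := (hmem p).mp h1
        omega
      · intro h
        exact ⟨(hmem p).mpr (by omega), by omega⟩
    obtain ⟨hlow2, hcnt2, hbd2⟩ := file_step ha hb _ hJ1low (n + 1) (by omega) (by omega)
      (l.filter (fun p => decide (¬(fl p ≤ n)))) (hnd.filter _) hmem2
    refine ⟨hlow2, ?_, ?_⟩
    · intro m hm1 hm2
      by_cases hmn : m ≤ n
      · rw [bd_congr (hcnt2 m (by omega))]
        exact hJ1bd m hm1 hmn
      · have hmeq : m = n + 1 := by omega
        subst hmeq
        rw [show n + 1 - 1 = n from by ring] at hbd2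
        rw [hbd2]
        rw [hJ1bd n (by omega) le_rfl, bd_congr (hJ1cnt (n + 1) (by omega)),
          bd_congr (hJ1cnt (n + 1 + 1) (by omega))]
        ring
    · intro m hm
      rw [hcnt2 m (by omega)]
      exact hJ1cnt m (by omega)

end PromShift

theorem promotion_sign_word_is_left_cyclic_shift
    (a b : ℕ) (ha : 1 ≤ a) (hb : 1 ≤ b)
    (l : List (Fin a × Fin b)) (hnd : l.Nodup) (hall : ∀ p : Fin a × Fin b, p ∈ l)
    (hsort : l.Pairwise (fun p q =>
      ((p.2 : ℕ) : ℤ) - ((p.1 : ℕ) : ℤ) ≤ ((q.2 : ℕ) : ℤ) - ((q.1 : ℕ) : ℤ)))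
    (I : Finset (Fin a × Fin b)) (hI : IsLowerSet (↑I : Set (Fin a × Fin b))) :
    (∀ i : ℕ, 1 ≤ i → i ≤ a + b - 1 →
      sgn a b (l.foldl (fun J p => toggle p J) I) i = sgn a b I (i + 1)) ∧
    sgn a b (l.foldl (fun J p => toggle p J) I) (a + b) = sgn a b I 1 := by
  classical
  have hsort' : l.Pairwise (fun p q => PromShift.fl p ≤ PromShift.fl q) := hsort
  have hmem : ∀ p : Fin a × Fin b, p ∈ l ↔ PromShift.fl p ≤ (b : ℤ) - 1 :=
    fun p => ⟨fun _ => PromShift.fl_ub p, fun _ => hall p⟩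
  obtain ⟨hlow, hbd, hcnt⟩ := PromShift.rec_lemma ha hb ((b : ℤ) - 1) (by omega) le_rfl
    l hnd hsort' hmem I hI
  have hIa : PromShift.bd I (-(a : ℤ)) = a := by
    unfold PromShift.bd
    rw [PromShift.cnt_out I (-(a : ℤ)) (Or.inl le_rfl)]
    omega
  have hIb : PromShift.bd I (b : ℤ) = 0 := by
    unfold PromShift.bd
    rw [PromShift.cnt_out I (b : ℤ) (Or.inr le_rfl)]
    omega
  have hDb : PromShift.bd (l.foldl (fun J p => toggle p J) I) (b : ℤ) = 0 :=
    (PromShift.bd_congr (hcnt (b : ℤ) (by omega))).trans hIb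
  constructor
  · intro i hi1 hi2
    unfold sgn
    simp only [PromShift.ht_eq_bd]
    have c1 : PromShift.bd (l.foldl (fun J p => toggle p J) I) ((i : ℤ) - a) =
        PromShift.bd I ((i : ℤ) - a + 1) + a - PromShift.bd I (1 - (a : ℤ)) :=
      hbd _ (by omega) (by omega)
    have c2 : PromShift.bd (l.foldl (fun J p => toggle p J) I) ((i : ℤ) - a - 1) =
        PromShift.bd I ((i : ℤ) - a - 1 + 1) + a - PromShift.bd I (1 - (a : ℤ)) :=
      hbd _ (by omega) (by omega)
    rw [show (i : ℤ) - a - 1 + 1 = (i : ℤ) - a from by ring] at c2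
    rw [c1, c2]
    rw [show ((i + 1 : ℕ) : ℤ) - a = (i : ℤ) - a + 1 from by push_cast; ring]
    rw [show (i : ℤ) - a + 1 - 1 = (i : ℤ) - a from by ring]
    ring
  · unfold sgn
    simp only [PromShift.ht_eq_bd]
    rw [show ((a + b : ℕ) : ℤ) - a = (b : ℤ) from by push_cast; ring]
    have c1 : PromShift.bd (l.foldl (fun J p => toggle p J) I) ((b : ℤ) - 1) =
        PromShift.bd I ((b : ℤ) - 1 + 1) + a - PromShift.bd I (1 - (a : ℤ)) :=
      hbd _ (by omega) le_rfl
    rw [show (b : ℤ) - 1 + 1 = (b : ℤ) from by ring] at c1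
    rw [c1, hDb, hIb]
    rw [show ((1 : ℕ) : ℤ) - a - 1 = -(a : ℤ) from by push_cast; ring]
    rw [hIa]
    push_cast
    ring
end

section
/- Let a, b be positive integers. The cardinality statistic I ↦ #I is ab/2-mesic under the action of promotion ∂ on J([a]×[b]): for every ∂-orbit O ⊆ J([a]×[b]), (1/#O)·Σ_{I∈O} #I = ab/2. -/
open scoped symmDiff

namespace PRaux

variable {a b : ℕ}

/-- number of elements of `J` in row `k`. -/
def dd (J : Finset (Fin a × Fin b)) (k : Fin a) : ℕ :=
  (Finset.univ.filter (fun ℓ : Fin b => (k, ℓ) ∈ J)).card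

/-- position of the `1` of row `k` in the binary word. -/
def pp (J : Finset (Fin a × Fin b)) (k : Fin a) : ℕ := dd J k + (a - 1 - k.val)

/-- the set of one-positions of the binary word of `J`. -/
def W (J : Finset (Fin a × Fin b)) : Finset ℕ := Finset.image (pp J) Finset.univ

lemma dd_le (J : Finset (Fin a × Fin b)) (k : Fin a) : dd J k ≤ b :=
  le_trans (Finset.card_filter_le _ _) (by simp)

lemma mem_iff_lt_dd {J : Finset (Fin a × Fin b)}
    (hJ : IsLowerSet (↑J : Set (Fin a × Fin b))) (k : Fin a) (ℓ : Fin b) :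
    (k, ℓ) ∈ J ↔ ℓ.val < dd J k := by
  constructor
  · intro h
    have hsub : Finset.Iic ℓ ⊆ Finset.univ.filter (fun ℓ' : Fin b => (k, ℓ') ∈ J) := by
      intro ℓ' hℓ'
      simp only [Finset.mem_Iic] at hℓ'
      simp only [Finset.mem_filter, Finset.mem_univ, true_and]
      exact hJ (show ((k, ℓ') : Fin a × Fin b) ≤ (k, ℓ) from ⟨le_refl _, hℓ'⟩) h
    have := Finset.card_le_card hsub
    rw [Fin.card_Iic] at this
    exact lt_of_lt_of_le (Nat.lt_succ_self _) this
  · intro h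
    by_contra hmem
    have hsub : Finset.univ.filter (fun ℓ' : Fin b => (k, ℓ') ∈ J) ⊆ Finset.Iio ℓ := by
      intro ℓ' hℓ'
      simp only [Finset.mem_filter, Finset.mem_univ, true_and] at hℓ'
      simp only [Finset.mem_Iio]
      by_contra hge
      push_neg at hge
      exact hmem (hJ (show ((k, ℓ) : Fin a × Fin b) ≤ (k, ℓ') from ⟨le_refl _, hge⟩) hℓ')
    have := Finset.card_le_card hsub
    rw [Fin.card_Iio] at this
    unfold dd at h
    omega

lemma dd_antitone {J : Finset (Fin a × Fin b)}
    (hJ : IsLowerSet (↑J : Set (Fin a × Fin b))) {k k' : Fin a} (h : k ≤ k') :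
    dd J k' ≤ dd J k := by
  by_contra hlt
  push_neg at hlt
  have hb : dd J k < b := lt_of_lt_of_le hlt (dd_le J k')
  set ℓ : Fin b := ⟨dd J k, hb⟩
  have h1 : (k', ℓ) ∈ J := (mem_iff_lt_dd hJ k' ℓ).2 hlt
  have h2 : (k, ℓ) ∈ J := hJ (show ((k, ℓ) : Fin a × Fin b) ≤ (k', ℓ) from ⟨h, le_refl _⟩) h1
  have := (mem_iff_lt_dd hJ k ℓ).1 h2
  simp [ℓ] at this

lemma pp_gap {J : Finset (Fin a × Fin b)}
    (hJ : IsLowerSet (↑J : Set (Fin a × Fin b))) {k k' : Fin a} (h : k'.val < k.val) :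
    pp J k + (k.val - k'.val) ≤ pp J k' := by
  have h1 : dd J k ≤ dd J k' := dd_antitone hJ (le_of_lt h)
  have h2 := k.isLt
  have h3 := k'.isLt
  unfold pp
  omega

lemma pp_inj {J : Finset (Fin a × Fin b)}
    (hJ : IsLowerSet (↑J : Set (Fin a × Fin b))) {k k' : Fin a}
    (h : pp J k = pp J k') : k = k' := by
  rcases lt_trichotomy k.val k'.val with hlt | heq | hlt
  · have := pp_gap hJ hlt; omega
  · exact Fin.ext heq
  · have := pp_gap hJ hlt; omega

lemma pp_lt (J : Finset (Fin a × Fin b)) (k : Fin a) : pp J k < a + b := by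
  have h1 := dd_le J k
  have h2 := k.isLt
  unfold pp
  omega

lemma pp_mem_W (J : Finset (Fin a × Fin b)) (k : Fin a) : pp J k ∈ W J :=
  Finset.mem_image_of_mem _ (Finset.mem_univ k)

lemma mem_W {J : Finset (Fin a × Fin b)} {v : ℕ} :
    v ∈ W J ↔ ∃ k : Fin a, pp J k = v := by
  simp [W]

lemma mem_W_lt {J : Finset (Fin a × Fin b)} {v : ℕ} (h : v ∈ W J) : v < a + b := by
  rcases mem_W.1 h with ⟨k, rfl⟩
  exact pp_lt J k

lemma card_W {J : Finset (Fin a × Fin b)}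
    (hJ : IsLowerSet (↑J : Set (Fin a × Fin b))) : (W J).card = a := by
  rw [W, Finset.card_image_of_injective _ (fun k k' h => pp_inj hJ h)]
  simp

lemma sum_W {J : Finset (Fin a × Fin b)}
    (hJ : IsLowerSet (↑J : Set (Fin a × Fin b))) :
    ∑ v ∈ W J, v = (∑ k : Fin a, dd J k) + ∑ k : Fin a, (a - 1 - k.val) := by
  rw [W, Finset.sum_image (fun k _ k' _ h => pp_inj hJ h)]
  rw [← Finset.sum_add_distrib]
  rfl

lemma card_eq_sum_dd (J : Finset (Fin a × Fin b)) :
    J.card = ∑ k : Fin a, dd J k := by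
  rw [Finset.card_eq_sum_card_fiberwise
    (f := fun p : Fin a × Fin b => p.1) (t := Finset.univ) (fun _ _ => Finset.mem_univ _)]
  refine Finset.sum_congr rfl fun k _ => ?_
  unfold dd
  refine Finset.card_nbij (fun p => p.2) ?_ ?_ ?_
  · intro p hp
    change p ∈ Finset.filter _ _ at hp
    simp only [Finset.mem_filter] at hp ⊢
    rcases hp with ⟨h1, h2⟩
    subst h2
    simp [h1]
  · intro p hp q hq h
    simp only [Finset.coe_filter, Set.mem_setOf_eq] at hp hq
    exact Prod.ext (hp.2.trans hq.2.symm) h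
  · intro ℓ hℓ
    simp only [Finset.coe_filter, Set.mem_setOf_eq, Set.mem_image] at hℓ ⊢
    exact ⟨(k, ℓ), ⟨by simp [hℓ.2], rfl⟩, rfl⟩


lemma symmDiff_not_mem {x : Fin a × Fin b} {J : Finset (Fin a × Fin b)} (h : x ∉ J) :
    J ∆ {x} = insert x J := by
  ext y
  simp only [Finset.mem_symmDiff, Finset.mem_singleton, Finset.mem_insert]
  constructor
  · rintro (⟨h1, _⟩ | ⟨rfl, _⟩) <;> tauto
  · rintro (rfl | h1)
    · exact Or.inr ⟨rfl, h⟩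
    · exact Or.inl ⟨h1, fun hy => h (hy ▸ h1)⟩

lemma symmDiff_mem {x : Fin a × Fin b} {J : Finset (Fin a × Fin b)} (h : x ∈ J) :
    J ∆ {x} = J.erase x := by
  ext y
  simp only [Finset.mem_symmDiff, Finset.mem_singleton, Finset.mem_erase]
  constructor
  · rintro (⟨h1, h2⟩ | ⟨rfl, h2⟩) <;> tauto
  · rintro ⟨h1, h2⟩; exact Or.inl ⟨h2, h1⟩

/-- the swap of positions `t-1` and `t`, as a function on `ℕ`. -/
def hsw (t : ℕ) (v : ℕ) : ℕ := if v = t - 1 then t else if v = t then t - 1 else v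

lemma hsw_hsw {t : ℕ} (ht : 1 ≤ t) (v : ℕ) : hsw t (hsw t v) = v := by
  unfold hsw; split_ifs <;> omega

lemma mem_image_hsw {t : ℕ} (ht : 1 ≤ t) {V : Finset ℕ} {v : ℕ} :
    v ∈ V.image (hsw t) ↔ hsw t v ∈ V := by
  constructor
  · rintro h
    rcases Finset.mem_image.1 h with ⟨w, hw, rfl⟩
    rwa [hsw_hsw ht]
  · intro h
    refine Finset.mem_image.2 ⟨hsw t v, h, hsw_hsw ht v⟩

section ToggleLemmas

variable {J : Finset (Fin a × Fin b)} (hJ : IsLowerSet (↑J : Set (Fin a × Fin b)))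
  (k : Fin a) (ℓ : Fin b)

include hJ

lemma toggle_add (h1 : dd J k = ℓ.val) (h2 : pp J k + 1 ∉ W J) :
    IsLowerSet (↑(insert (k, ℓ) J) : Set (Fin a × Fin b)) ∧
      toggle (k, ℓ) J = insert (k, ℓ) J := by
  have hx : (k, ℓ) ∉ J := by
    rw [mem_iff_lt_dd hJ]; omega
  have hup : ∀ hk : 0 < k.val, ((⟨k.val - 1, by omega⟩ : Fin a), ℓ) ∈ J := by
    intro hk
    set k' : Fin a := ⟨k.val - 1, by omega⟩ with hk'
    have hkv : k'.val = k.val - 1 := rfl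
    have hmono : dd J k ≤ dd J k' := dd_antitone hJ (Fin.le_def.mpr (by omega))
    rcases Nat.lt_or_ge ℓ.val (dd J k') with hlt | hge
    · exact (mem_iff_lt_dd hJ k' ℓ).2 hlt
    · exfalso
      have heq : dd J k' = ℓ.val := le_antisymm hge (by omega)
      have hpe : pp J k' = pp J k + 1 := by
        unfold pp
        have := k.isLt
        omega
      exact h2 (hpe ▸ pp_mem_W J k')
  have hlow : IsLowerSet (↑(insert (k, ℓ) J) : Set (Fin a × Fin b)) := by
    rw [Finset.coe_insert]
    intro u v hvu hu
    rcases Set.mem_insert_iff.mp hu with rfl | hu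
    · by_cases hvx : v = (k, ℓ)
      · exact hvx ▸ Set.mem_insert _ _
      · refine Set.mem_insert_of_mem _ ?_
        obtain ⟨hv1, hv2⟩ := hvu
        have hpf : ((k, ℓ) : Fin a × Fin b).1.val = k.val := rfl
        have hps : ((k, ℓ) : Fin a × Fin b).2.val = ℓ.val := rfl
        have hv1' : v.1.val ≤ ((k, ℓ) : Fin a × Fin b).1.val := Fin.le_def.mp hv1
        have hv2' : v.2.val ≤ ((k, ℓ) : Fin a × Fin b).2.val := Fin.le_def.mp hv2
        rcases Nat.lt_or_ge v.2.val ℓ.val with hlt | hge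
        · have : dd J k ≤ dd J v.1 := dd_antitone hJ hv1
          exact (mem_iff_lt_dd hJ v.1 v.2).2 (by omega)
        · have hve : v.2 = ℓ := Fin.ext (by omega)
          have hk1 : v.1.val < k.val := by
            rcases Nat.lt_or_ge v.1.val k.val with h | h
            · exact h
            · exact absurd (Prod.ext (Fin.ext (by omega)) hve) hvx
          have hmem := hup (by omega)
          have hmono : dd J (⟨k.val - 1, by omega⟩ : Fin a) ≤ dd J v.1 :=
            dd_antitone hJ (Fin.le_def.mpr (by show v.1.val ≤ k.val - 1; omega))
          have hddk' := (mem_iff_lt_dd hJ (⟨k.val - 1, by omega⟩ : Fin a) ℓ).1 hmem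
          refine (mem_iff_lt_dd hJ v.1 v.2).2 ?_
          rw [hve]
          omega
    · exact Set.mem_insert_of_mem _ (hJ hvu hu)
  refine ⟨hlow, ?_⟩
  have hd : J ∆ {(k, ℓ)} = insert (k, ℓ) J := symmDiff_not_mem hx
  have hcond : IsLowerSet (↑(J ∆ {(k, ℓ)}) : Set (Fin a × Fin b)) := by
    rw [hd]; exact hlow
  simp only [toggle, if_pos hcond, hd]

lemma dd_insert (hx : (k, ℓ) ∉ J) (k' : Fin a) :
    dd (insert (k, ℓ) J) k' = if k' = k then dd J k' + 1 else dd J k' := by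
  by_cases h : k' = k
  · subst h
    rw [if_pos rfl]
    have hset : Finset.univ.filter (fun ℓ' : Fin b => (k', ℓ') ∈ insert (k', ℓ) J)
        = insert ℓ (Finset.univ.filter (fun ℓ' : Fin b => (k', ℓ') ∈ J)) := by
      ext ℓ'
      simp only [Finset.mem_filter, Finset.mem_univ, true_and, Finset.mem_insert,
        Prod.mk.injEq, true_and]
      all_goals tauto
    unfold dd
    rw [hset, Finset.card_insert_of_notMem (by simp [hx])]
  · rw [if_neg h]
    unfold dd
    congr 1
    ext ℓ'
    simp only [Finset.mem_filter, Finset.mem_univ, true_and, Finset.mem_insert,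
      Prod.mk.injEq]
    constructor
    · intro hh
      rcases hh with hh | hh
      · exact absurd hh.1 h
      · exact hh
    · exact fun h1 => Or.inr h1

lemma W_insert (h1 : dd J k = ℓ.val) (h2 : pp J k + 1 ∉ W J) :
    W (insert (k, ℓ) J) = (W J).image (hsw (pp J k + 1)) := by
  have hx : (k, ℓ) ∉ J := by rw [mem_iff_lt_dd hJ]; omega
  unfold W
  rw [Finset.image_image]
  refine Finset.image_congr ?_
  intro k' _
  simp only [Function.comp_apply, hsw]
  by_cases h : k' = k
  · subst h
    have hdi := dd_insert hJ k' ℓ hx k'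
    rw [if_pos rfl] at hdi
    rw [if_pos (by unfold pp; omega)]
    unfold pp
    omega
  · have hne1 : pp J k' ≠ pp J k := fun hc => h (pp_inj hJ hc)
    have hne2 : pp J k' ≠ pp J k + 1 := fun hc => h2 (hc ▸ pp_mem_W J k')
    have hdi := dd_insert hJ k ℓ hx k'
    rw [if_neg h] at hdi
    rw [if_neg (by unfold pp at hne1 ⊢; omega), if_neg (by unfold pp at hne2 ⊢; omega)]
    unfold pp
    omega

lemma toggle_remove (h1 : dd J k = ℓ.val + 1) (h2 : ℓ.val + (a - 1 - k.val) ∉ W J) :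
    IsLowerSet (↑(J.erase (k, ℓ)) : Set (Fin a × Fin b)) ∧
      toggle (k, ℓ) J = J.erase (k, ℓ) := by
  have hx : (k, ℓ) ∈ J := by rw [mem_iff_lt_dd hJ]; omega
  have hdown : ∀ hk : k.val + 1 < a, dd J (⟨k.val + 1, hk⟩ : Fin a) ≤ ℓ.val := by
    intro hk
    set k' : Fin a := ⟨k.val + 1, hk⟩ with hk'
    have hkv : k'.val = k.val + 1 := rfl
    by_contra hgt
    push_neg at hgt
    have hmono : dd J k' ≤ dd J k := dd_antitone hJ (Fin.le_def.mpr (by omega))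
    have heq : dd J k' = ℓ.val + 1 := by omega
    have hpe : pp J k' = ℓ.val + (a - 1 - k.val) := by
      unfold pp
      omega
    exact h2 (hpe ▸ pp_mem_W J k')
  have hlow : IsLowerSet (↑(J.erase (k, ℓ)) : Set (Fin a × Fin b)) := by
    rw [Finset.coe_erase]
    intro u v hvu hu
    obtain ⟨hu1, hu2⟩ := hu
    refine ⟨hJ hvu hu1, ?_⟩
    intro hveq
    rw [Set.mem_singleton_iff] at hveq
    subst hveq
    obtain ⟨hv1, hv2⟩ := hvu
    have hpf : ((k, ℓ) : Fin a × Fin b).1.val = k.val := rfl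
    have hps : ((k, ℓ) : Fin a × Fin b).2.val = ℓ.val := rfl
    have hv1' : ((k, ℓ) : Fin a × Fin b).1.val ≤ u.1.val := Fin.le_def.mp hv1
    have hv2' : ((k, ℓ) : Fin a × Fin b).2.val ≤ u.2.val := Fin.le_def.mp hv2
    rw [Set.mem_singleton_iff] at hu2
    rcases Nat.lt_or_ge ℓ.val u.2.val with hlt | hge
    · have hb2 : ℓ.val + 1 < b := by have := u.2.isLt; omega
      have hmem : ((k, (⟨ℓ.val + 1, hb2⟩ : Fin b)) : Fin a × Fin b) ∈ J :=
        hJ (show ((k, (⟨ℓ.val + 1, hb2⟩ : Fin b)) : Fin a × Fin b) ≤ u from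
          ⟨hv1, Fin.le_def.mpr (by show ℓ.val + 1 ≤ u.2.val; omega)⟩) hu1
      have hc := (mem_iff_lt_dd hJ k _).1 hmem
      have : (⟨ℓ.val + 1, hb2⟩ : Fin b).val = ℓ.val + 1 := rfl
      omega
    · have hue : u.2 = ℓ := Fin.ext (by omega)
      have hk1 : k.val < u.1.val := by
        rcases Nat.lt_or_ge k.val u.1.val with h | h
        · exact h
        · exact absurd (Prod.ext (Fin.ext (by omega)) hue) hu2
      have hk2 : k.val + 1 < a := by have := u.1.isLt; omega
      have hmem : (((⟨k.val + 1, hk2⟩ : Fin a), ℓ) : Fin a × Fin b) ∈ J :=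
        hJ (show (((⟨k.val + 1, hk2⟩ : Fin a), ℓ) : Fin a × Fin b) ≤ u from
          ⟨Fin.le_def.mpr (by show k.val + 1 ≤ u.1.val; omega), hue ▸ le_refl _⟩) hu1
      have hc := (mem_iff_lt_dd hJ _ ℓ).1 hmem
      have := hdown hk2
      omega
  refine ⟨hlow, ?_⟩
  have hd : J ∆ {(k, ℓ)} = J.erase (k, ℓ) := symmDiff_mem hx
  have hcond : IsLowerSet (↑(J ∆ {(k, ℓ)}) : Set (Fin a × Fin b)) := by
    rw [hd]; exact hlow
  simp only [toggle, if_pos hcond, hd]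

lemma dd_erase (hx : (k, ℓ) ∈ J) (k' : Fin a) :
    dd (J.erase (k, ℓ)) k' = if k' = k then dd J k' - 1 else dd J k' := by
  by_cases h : k' = k
  · subst h
    rw [if_pos rfl]
    have hset : Finset.univ.filter (fun ℓ' : Fin b => (k', ℓ') ∈ J.erase (k', ℓ))
        = (Finset.univ.filter (fun ℓ' : Fin b => (k', ℓ') ∈ J)).erase ℓ := by
      ext ℓ'
      simp only [Finset.mem_filter, Finset.mem_univ, true_and, Finset.mem_erase,
        Prod.mk.injEq, Ne, true_and]
      all_goals tauto
    unfold dd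
    rw [hset, Finset.card_erase_of_mem (by simp [hx])]
  · rw [if_neg h]
    unfold dd
    congr 1
    ext ℓ'
    simp only [Finset.mem_filter, Finset.mem_univ, true_and, Finset.mem_erase,
      Prod.mk.injEq]
    constructor
    · exact fun h1 => h1.2
    · exact fun h1 => ⟨fun hc => h (Prod.ext_iff.mp hc).1, h1⟩

lemma W_erase (h1 : dd J k = ℓ.val + 1) (h2 : ℓ.val + (a - 1 - k.val) ∉ W J) :
    W (J.erase (k, ℓ)) = (W J).image (hsw (ℓ.val + (a - 1 - k.val) + 1)) := by
  have hx : (k, ℓ) ∈ J := by rw [mem_iff_lt_dd hJ]; omega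
  have hppk : pp J k = ℓ.val + (a - 1 - k.val) + 1 := by unfold pp; omega
  unfold W
  rw [Finset.image_image]
  refine Finset.image_congr ?_
  intro k' _
  simp only [Function.comp_apply, hsw]
  by_cases h : k' = k
  · subst h
    have hdi := dd_erase hJ k' ℓ hx k'
    rw [if_pos rfl] at hdi
    rw [if_neg (by unfold pp at hppk ⊢; omega), if_pos (by unfold pp at hppk ⊢; omega)]
    unfold pp at hppk ⊢
    omega
  · have hne1 : pp J k' ≠ pp J k := fun hc => h (pp_inj hJ hc)
    have hne2 : pp J k' ≠ ℓ.val + (a - 1 - k.val) := fun hc => h2 (hc ▸ pp_mem_W J k')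
    have hdi := dd_erase hJ k ℓ hx k'
    rw [if_neg h] at hdi
    rw [if_neg (by unfold pp at hne2 ⊢; omega),
      if_neg (by unfold pp at hne1 hppk ⊢; omega)]
    unfold pp
    omega

lemma toggle_none (h1 : dd J k ≠ ℓ.val) (h2 : dd J k ≠ ℓ.val + 1) :
    toggle (k, ℓ) J = J := by
  by_cases hx : (k, ℓ) ∈ J
  · have hlt : ℓ.val < dd J k := (mem_iff_lt_dd hJ k ℓ).1 hx
    have hge : ℓ.val + 2 ≤ dd J k := by omega
    have hb2 : ℓ.val + 1 < b := by have := dd_le J k; omega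
    have hy : ((k, (⟨ℓ.val + 1, hb2⟩ : Fin b)) : Fin a × Fin b) ∈ J := by
      rw [mem_iff_lt_dd hJ]
      show ℓ.val + 1 < dd J k
      omega
    have hd : J ∆ {(k, ℓ)} = J.erase (k, ℓ) := symmDiff_mem hx
    have hnl : ¬ IsLowerSet (↑(J ∆ {(k, ℓ)}) : Set (Fin a × Fin b)) := by
      rw [hd]
      intro hlow
      have hmm : ((k, ℓ) : Fin a × Fin b) ∈ (↑(J.erase (k, ℓ)) : Set (Fin a × Fin b)) := by
        refine hlow (show ((k, ℓ) : Fin a × Fin b) ≤ (k, ⟨ℓ.val + 1, hb2⟩) from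
          ⟨le_refl _, Fin.le_def.mpr (by show ℓ.val ≤ ℓ.val + 1; omega)⟩) ?_
        rw [Finset.coe_erase]
        refine ⟨hy, ?_⟩
        rw [Set.mem_singleton_iff]
        intro hc
        have := congrArg (fun p : Fin a × Fin b => p.2.val) hc
        simp at this
      rw [Finset.coe_erase] at hmm
      exact hmm.2 rfl
    simp only [toggle, if_neg hnl]
  · have hge : dd J k ≤ ℓ.val := by
      by_contra hc
      exact hx ((mem_iff_lt_dd hJ k ℓ).2 (by omega))
    have hlt : dd J k < ℓ.val := by omega
    have hl1 : 0 < ℓ.val := by omega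
    have hy : ((k, (⟨ℓ.val - 1, by omega⟩ : Fin b)) : Fin a × Fin b) ∉ J := by
      rw [mem_iff_lt_dd hJ]
      show ¬ (ℓ.val - 1 < dd J k)
      omega
    have hd : J ∆ {(k, ℓ)} = insert (k, ℓ) J := symmDiff_not_mem hx
    have hnl : ¬ IsLowerSet (↑(J ∆ {(k, ℓ)}) : Set (Fin a × Fin b)) := by
      rw [hd]
      intro hlow
      have hmm : ((k, (⟨ℓ.val - 1, by omega⟩ : Fin b)) : Fin a × Fin b)
          ∈ (↑(insert (k, ℓ) J) : Set (Fin a × Fin b)) := by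
        refine hlow (show ((k, (⟨ℓ.val - 1, by omega⟩ : Fin b)) : Fin a × Fin b) ≤ (k, ℓ) from
          ⟨le_refl _, Fin.le_def.mpr (by show ℓ.val - 1 ≤ ℓ.val; omega)⟩) ?_
        rw [Finset.coe_insert]
        exact Set.mem_insert _ _
      rw [Finset.coe_insert] at hmm
      rcases Set.mem_insert_iff.mp hmm with heq | hmem
      · have := congrArg (fun p : Fin a × Fin b => p.2.val) heq
        simp only at this
        omega
      · exact hy hmem
    simp only [toggle, if_neg hnl]

lemma toggle_blocked_add (h1 : dd J k = ℓ.val) (h2 : ℓ.val + (a - 1 - k.val) + 1 ∈ W J) :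
    toggle (k, ℓ) J = J := by
  have hppk : pp J k = ℓ.val + (a - 1 - k.val) := by unfold pp; omega
  rcases mem_W.1 h2 with ⟨k', hk'⟩
  have hlt : k'.val < k.val := by
    rcases lt_trichotomy k'.val k.val with h | h | h
    · exact h
    · exfalso; have hkk : k' = k := Fin.ext h; rw [hkk, hppk] at hk'; omega
    · exfalso; have := pp_gap hJ h; omega
  have hstep : k'.val + 1 = k.val := by
    have := pp_gap hJ hlt
    omega
  have hdd' : dd J k' = ℓ.val := by
    unfold pp at hk'
    have := k.isLt
    omega
  have hx : (k, ℓ) ∉ J := by rw [mem_iff_lt_dd hJ]; omega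
  have hd : J ∆ {(k, ℓ)} = insert (k, ℓ) J := symmDiff_not_mem hx
  have hnl : ¬ IsLowerSet (↑(J ∆ {(k, ℓ)}) : Set (Fin a × Fin b)) := by
    rw [hd]
    intro hlow
    have hmm : ((k', ℓ) : Fin a × Fin b) ∈ (↑(insert (k, ℓ) J) : Set (Fin a × Fin b)) := by
      refine hlow (show ((k', ℓ) : Fin a × Fin b) ≤ (k, ℓ) from
        ⟨Fin.le_def.mpr (show k'.val ≤ k.val by omega), le_refl _⟩) ?_
      rw [Finset.coe_insert]
      exact Set.mem_insert _ _
    rw [Finset.coe_insert] at hmm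
    rcases Set.mem_insert_iff.mp hmm with heq | hmem
    · have := congrArg (fun p : Fin a × Fin b => p.1.val) heq
      simp only at this
      omega
    · have := (mem_iff_lt_dd hJ k' ℓ).1 hmem
      omega
  simp only [toggle, if_neg hnl]

lemma toggle_blocked_remove (h1 : dd J k = ℓ.val + 1) (h2 : ℓ.val + (a - 1 - k.val) ∈ W J) :
    toggle (k, ℓ) J = J := by
  have hppk : pp J k = ℓ.val + (a - 1 - k.val) + 1 := by unfold pp; omega
  rcases mem_W.1 h2 with ⟨k', hk'⟩
  have hlt : k.val < k'.val := by
    rcases lt_trichotomy k.val k'.val with h | h | h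
    · exact h
    · exfalso; have hkk : k' = k := Fin.ext h.symm; rw [hkk, hppk] at hk'; omega
    · exfalso; have := pp_gap hJ h; omega
  have hstep : k.val + 1 = k'.val := by
    have := pp_gap hJ hlt
    omega
  have hdd' : dd J k' = ℓ.val + 1 := by
    unfold pp at hk'
    have := k'.isLt
    omega
  have hx : (k, ℓ) ∈ J := by rw [mem_iff_lt_dd hJ]; omega
  have hy : ((k', ℓ) : Fin a × Fin b) ∈ J := by rw [mem_iff_lt_dd hJ]; omega
  have hd : J ∆ {(k, ℓ)} = J.erase (k, ℓ) := symmDiff_mem hx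
  have hnl : ¬ IsLowerSet (↑(J ∆ {(k, ℓ)}) : Set (Fin a × Fin b)) := by
    rw [hd]
    intro hlow
    have hmm : ((k, ℓ) : Fin a × Fin b) ∈ (↑(J.erase (k, ℓ)) : Set (Fin a × Fin b)) := by
      refine hlow (show ((k, ℓ) : Fin a × Fin b) ≤ (k', ℓ) from
        ⟨Fin.le_def.mpr (show k.val ≤ k'.val by omega), le_refl _⟩) ?_
      rw [Finset.coe_erase]
      refine ⟨hy, ?_⟩
      rw [Set.mem_singleton_iff]
      intro hc
      have := congrArg (fun p : Fin a × Fin b => p.1.val) hc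
      simp only at this
      omega
    rw [Finset.coe_erase] at hmm
    exact hmm.2 rfl
  simp only [toggle, if_neg hnl]

end ToggleLemmas

lemma toggle_lower {J : Finset (Fin a × Fin b)} (x : Fin a × Fin b)
    (hJ : IsLowerSet (↑J : Set (Fin a × Fin b))) :
    IsLowerSet (↑(toggle x J) : Set (Fin a × Fin b)) := by
  unfold toggle
  split_ifs with h
  · exact h
  · exact hJ

lemma fold_lower : ∀ (L : List (Fin a × Fin b)) (J : Finset (Fin a × Fin b)),
    IsLowerSet (↑J : Set (Fin a × Fin b)) →
    IsLowerSet (↑(L.foldl (fun J'' p => toggle p J'') J) : Set (Fin a × Fin b))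
  | [], J, hJ => hJ
  | x :: tl, J, hJ => by
    rw [List.foldl_cons]
    exact fold_lower tl _ (toggle_lower x hJ)

lemma fold_fix {J : Finset (Fin a × Fin b)} :
    ∀ (L : List (Fin a × Fin b)), (∀ x ∈ L, toggle x J = J) →
      L.foldl (fun J'' p => toggle p J'') J = J
  | [], _ => rfl
  | x :: tl, h => by
    rw [List.foldl_cons, h x (List.mem_cons_self)]
    exact fold_fix tl fun y hy => h y (List.mem_cons_of_mem x hy)

lemma fold_one {J J1 : Finset (Fin a × Fin b)} {x0 : Fin a × Fin b} :
    ∀ {L : List (Fin a × Fin b)}, L.Nodup → x0 ∈ L → toggle x0 J = J1 →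
      (∀ x ∈ L, x ≠ x0 → toggle x J = J ∧ toggle x J1 = J1) →
      L.foldl (fun J'' p => toggle p J'') J = J1 := by
  intro L
  induction L with
  | nil => intro _ h; exact absurd h List.not_mem_nil
  | cons y tl ih =>
    intro hnd hmem htog hoth
    rw [List.foldl_cons]
    by_cases hy : y = x0
    · subst hy
      rw [htog]
      refine fold_fix tl fun x hx => ?_
      have hne : x ≠ y := by
        intro hc
        subst hc
        exact (List.nodup_cons.mp hnd).1 hx
      exact (hoth x (List.mem_cons_of_mem y hx) hne).2
    · rw [(hoth y (List.mem_cons_self) hy).1]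
      refine ih (List.nodup_cons.mp hnd).2 ?_ htog
        (fun x hx hne => hoth x (List.mem_cons_of_mem y hx) hne)
      rcases List.mem_cons.mp hmem with hc | hc
      · exact absurd hc.symm hy
      · exact hc

lemma block_fold {J : Finset (Fin a × Fin b)} (hJ : IsLowerSet (↑J : Set (Fin a × Fin b)))
    {t : ℕ} (ht1 : 1 ≤ t) (ht2 : t < a + b)
    {L : List (Fin a × Fin b)} (hnd : L.Nodup)
    (hLmem : ∀ x : Fin a × Fin b, x ∈ L ↔ x.2.val + (a - 1 - x.1.val) + 1 = t) :
    W (L.foldl (fun J'' p => toggle p J'') J) = (W J).image (hsw t) := by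
  by_cases h1 : (t - 1) ∈ W J <;> by_cases h2 : t ∈ W J
  · -- both present: nothing moves
    have hfix : ∀ x ∈ L, toggle x J = J := by
      intro x hx
      obtain ⟨k, ℓ⟩ := x
      have hpos : ℓ.val + (a - 1 - k.val) + 1 = t := (hLmem _).1 hx
      by_cases hc1 : dd J k = ℓ.val
      · exact toggle_blocked_add hJ k ℓ hc1 (by rw [hpos]; exact h2)
      · by_cases hc2 : dd J k = ℓ.val + 1
        · exact toggle_blocked_remove hJ k ℓ hc2
            (by rw [show ℓ.val + (a - 1 - k.val) = t - 1 by omega]; exact h1)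
        · exact toggle_none hJ k ℓ hc1 hc2
    rw [fold_fix L hfix]
    refine Finset.ext_iff.mpr fun v => ?_
    rw [mem_image_hsw ht1]
    unfold hsw
    split_ifs with hv1 hv2
    · rw [hv1]; simp [h1, h2]
    · rw [hv2]; simp [h1, h2]
    · exact Iff.rfl
  · -- t-1 present, t absent: unique insertion
    obtain ⟨k0, hk0⟩ := mem_W.1 h1
    have hℓb : dd J k0 < b := by
      by_contra hc
      push_neg at hc
      have hbb : dd J k0 = b := le_antisymm (dd_le J k0) hc
      rcases Nat.eq_zero_or_pos k0.val with h0 | h0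
      · unfold pp at hk0; omega
      · have hk1a : k0.val - 1 < a := by have := k0.isLt; omega
        set k1 : Fin a := ⟨k0.val - 1, hk1a⟩ with hk1
        have hkv : k1.val = k0.val - 1 := rfl
        have hmono : dd J k0 ≤ dd J k1 := dd_antitone hJ (Fin.le_def.mpr (by omega))
        have hb1 : dd J k1 = b := le_antisymm (dd_le J k1) (by omega)
        apply h2
        have hp := pp_mem_W J k1
        have hpv : pp J k1 = t := by unfold pp at hk0 ⊢; omega
        rwa [hpv] at hp
    obtain ⟨ℓ0, hℓ0v⟩ : ∃ ℓ0 : Fin b, ℓ0.val = dd J k0 := ⟨⟨dd J k0, hℓb⟩, rfl⟩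
    have hd1 : dd J k0 = ℓ0.val := hℓ0v.symm
    have hppx : pp J k0 = t - 1 := hk0
    have h2' : pp J k0 + 1 ∉ W J := by
      rw [show pp J k0 + 1 = t by omega]
      exact h2
    obtain ⟨hlow1, htog⟩ := toggle_add hJ k0 ℓ0 hd1 h2'
    have hx0 : (k0, ℓ0) ∉ J := by rw [mem_iff_lt_dd hJ]; omega
    have hdd1 : dd (insert (k0, ℓ0) J) k0 = dd J k0 + 1 := by
      have := dd_insert hJ k0 ℓ0 hx0 k0
      rwa [if_pos rfl] at this
    have hx0L : (k0, ℓ0) ∈ L := by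
      refine (hLmem _).2 ?_
      show ℓ0.val + (a - 1 - k0.val) + 1 = t
      unfold pp at hk0
      omega
    have hW1 : W (insert (k0, ℓ0) J) = (W J).image (hsw t) := by
      have := W_insert hJ k0 ℓ0 hd1 h2'
      rwa [show pp J k0 + 1 = t by omega] at this
    have hm1 : (t - 1) ∉ W (insert (k0, ℓ0) J) := by
      rw [hW1, mem_image_hsw ht1]
      unfold hsw
      rw [if_pos rfl]
      exact h2
    have hm2 : t ∈ W (insert (k0, ℓ0) J) := by
      rw [hW1, mem_image_hsw ht1]
      unfold hsw
      rw [if_neg (by omega), if_pos rfl]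
      exact h1
    have hothers : ∀ x ∈ L, x ≠ (k0, ℓ0) →
        toggle x J = J ∧ toggle x (insert (k0, ℓ0) J) = insert (k0, ℓ0) J := by
      intro x hx hne
      obtain ⟨k, ℓ⟩ := x
      have hpos : ℓ.val + (a - 1 - k.val) + 1 = t := (hLmem _).1 hx
      constructor
      · by_cases hc1 : dd J k = ℓ.val
        · exfalso
          have hpv : pp J k = t - 1 := by unfold pp; omega
          have hkk : k = k0 := pp_inj hJ (by rw [hpv, hk0])
          apply hne
          refine Prod.ext hkk (Fin.ext ?_)
          show ℓ.val = ℓ0.val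
          rw [hℓ0v, ← hkk]
          omega
        · by_cases hc2 : dd J k = ℓ.val + 1
          · exfalso
            apply h2
            have hp := pp_mem_W J k
            have hpv : pp J k = t := by unfold pp; omega
            rwa [hpv] at hp
          · exact toggle_none hJ k ℓ hc1 hc2
      · by_cases hc1 : dd (insert (k0, ℓ0) J) k = ℓ.val
        · exfalso
          apply hm1
          have hp := pp_mem_W (insert (k0, ℓ0) J) k
          have hpv : pp (insert (k0, ℓ0) J) k = t - 1 := by unfold pp; omega
          rwa [hpv] at hp
        · by_cases hc2 : dd (insert (k0, ℓ0) J) k = ℓ.val + 1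
          · exfalso
            have hpv : pp (insert (k0, ℓ0) J) k = t := by unfold pp; omega
            have hpv0 : pp (insert (k0, ℓ0) J) k0 = t := by
              unfold pp
              rw [hdd1]
              unfold pp at hk0
              omega
            have hkk : k = k0 := pp_inj hlow1 (by rw [hpv, hpv0])
            apply hne
            refine Prod.ext hkk (Fin.ext ?_)
            show ℓ.val = ℓ0.val
            rw [hℓ0v]
            rw [hkk] at hc2
            omega
          · exact toggle_none hlow1 k ℓ hc1 hc2
    rw [fold_one hnd hx0L htog hothers]
    exact hW1
  · -- t present, t-1 absent: unique removal
    obtain ⟨k0, hk0⟩ := mem_W.1 h2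
    have hdpos : 1 ≤ dd J k0 := by
      by_contra hc
      push_neg at hc
      have hdd0 : dd J k0 = 0 := by omega
      have hk2a : k0.val + 1 < a := by unfold pp at hk0; omega
      set k1 : Fin a := ⟨k0.val + 1, hk2a⟩ with hk1
      have hkv : k1.val = k0.val + 1 := rfl
      have hmono : dd J k1 ≤ dd J k0 := dd_antitone hJ (Fin.le_def.mpr (by omega))
      apply h1
      have hp := pp_mem_W J k1
      have hpv : pp J k1 = t - 1 := by unfold pp at hk0 ⊢; omega
      rwa [hpv] at hp
    have hℓb : dd J k0 - 1 < b := by have := dd_le J k0; omega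
    obtain ⟨ℓ0, hℓ0v⟩ : ∃ ℓ0 : Fin b, ℓ0.val = dd J k0 - 1 := ⟨⟨dd J k0 - 1, hℓb⟩, rfl⟩
    have hd1 : dd J k0 = ℓ0.val + 1 := by omega
    have hpxval : ℓ0.val + (a - 1 - k0.val) = t - 1 := by unfold pp at hk0; omega
    have h2' : ℓ0.val + (a - 1 - k0.val) ∉ W J := by rw [hpxval]; exact h1
    obtain ⟨hlow1, htog⟩ := toggle_remove hJ k0 ℓ0 hd1 h2'
    have hx0 : (k0, ℓ0) ∈ J := by rw [mem_iff_lt_dd hJ]; omega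
    have hdd1 : dd (J.erase (k0, ℓ0)) k0 = dd J k0 - 1 := by
      have := dd_erase hJ k0 ℓ0 hx0 k0
      rwa [if_pos rfl] at this
    have hx0L : (k0, ℓ0) ∈ L := by
      refine (hLmem _).2 ?_
      show ℓ0.val + (a - 1 - k0.val) + 1 = t
      omega
    have hW1 : W (J.erase (k0, ℓ0)) = (W J).image (hsw t) := by
      have := W_erase hJ k0 ℓ0 hd1 h2'
      rwa [show ℓ0.val + (a - 1 - k0.val) + 1 = t by omega] at this
    have hm1 : (t - 1) ∈ W (J.erase (k0, ℓ0)) := by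
      rw [hW1, mem_image_hsw ht1]
      unfold hsw
      rw [if_pos rfl]
      exact h2
    have hm2 : t ∉ W (J.erase (k0, ℓ0)) := by
      rw [hW1, mem_image_hsw ht1]
      unfold hsw
      rw [if_neg (by omega), if_pos rfl]
      exact h1
    have hothers : ∀ x ∈ L, x ≠ (k0, ℓ0) →
        toggle x J = J ∧ toggle x (J.erase (k0, ℓ0)) = J.erase (k0, ℓ0) := by
      intro x hx hne
      obtain ⟨k, ℓ⟩ := x
      have hpos : ℓ.val + (a - 1 - k.val) + 1 = t := (hLmem _).1 hx
      constructor
      · by_cases hc1 : dd J k = ℓ.val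
        · exfalso
          apply h1
          have hp := pp_mem_W J k
          have hpv : pp J k = t - 1 := by unfold pp; omega
          rwa [hpv] at hp
        · by_cases hc2 : dd J k = ℓ.val + 1
          · exfalso
            have hpv : pp J k = t := by unfold pp; omega
            have hkk : k = k0 := pp_inj hJ (by rw [hpv, hk0])
            apply hne
            refine Prod.ext hkk (Fin.ext ?_)
            show ℓ.val = ℓ0.val
            rw [hℓ0v, ← hkk]
            omega
          · exact toggle_none hJ k ℓ hc1 hc2
      · by_cases hc1 : dd (J.erase (k0, ℓ0)) k = ℓ.val
        · exfalso
          have hpv : pp (J.erase (k0, ℓ0)) k = t - 1 := by unfold pp; omega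
          have hpv0 : pp (J.erase (k0, ℓ0)) k0 = t - 1 := by
            unfold pp
            rw [hdd1]
            unfold pp at hk0
            omega
          have hkk : k = k0 := pp_inj hlow1 (by rw [hpv, hpv0])
          apply hne
          refine Prod.ext hkk (Fin.ext ?_)
          show ℓ.val = ℓ0.val
          rw [hℓ0v]
          rw [hkk] at hc1
          omega
        · by_cases hc2 : dd (J.erase (k0, ℓ0)) k = ℓ.val + 1
          · exfalso
            apply hm2
            have hp := pp_mem_W (J.erase (k0, ℓ0)) k
            have hpv : pp (J.erase (k0, ℓ0)) k = t := by unfold pp; omega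
            rwa [hpv] at hp
          · exact toggle_none hlow1 k ℓ hc1 hc2
    rw [fold_one hnd hx0L htog hothers]
    exact hW1
  · -- both absent: nothing moves
    have hfix : ∀ x ∈ L, toggle x J = J := by
      intro x hx
      obtain ⟨k, ℓ⟩ := x
      have hpos : ℓ.val + (a - 1 - k.val) + 1 = t := (hLmem _).1 hx
      by_cases hc1 : dd J k = ℓ.val
      · exfalso
        apply h1
        have hp := pp_mem_W J k
        have hpv : pp J k = t - 1 := by unfold pp; omega
        rwa [hpv] at hp
      · by_cases hc2 : dd J k = ℓ.val + 1
        · exfalso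
          apply h2
          have hp := pp_mem_W J k
          have hpv : pp J k = t := by unfold pp; omega
          rwa [hpv] at hp
        · exact toggle_none hJ k ℓ hc1 hc2
    rw [fold_fix L hfix]
    refine Finset.ext_iff.mpr fun v => ?_
    rw [mem_image_hsw ht1]
    unfold hsw
    split_ifs with hv1 hv2
    · rw [hv1]; simp [h1, h2]
    · rw [hv2]; simp [h1, h2]
    · exact Iff.rfl

/-- partial rotation map on word positions. -/
def GG (T : ℕ) (s : ℕ) : ℕ := if s = 0 then T else if s ≤ T then s - 1 else s

lemma hsw_GG (T : ℕ) (s : ℕ) : hsw (T + 1) (GG T s) = GG (T + 1) s := by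
  unfold hsw GG
  split_ifs <;> omega

lemma foldl_congr_mem {α β : Type*} (f g : β → α → β) :
    ∀ (L : List α) (s : β), (∀ x ∈ L, ∀ st, f st x = g st x) →
      L.foldl f s = L.foldl g s
  | [], _, _ => rfl
  | x :: tl, s, h => by
    rw [List.foldl_cons, List.foldl_cons, h x (List.mem_cons_self)]
    exact foldl_congr_mem f g tl _ (fun y hy st => h y (List.mem_cons_of_mem x hy) st)

lemma sorted_split {α : Type*} (key : α → ℕ) (N : ℕ) :
    ∀ (L : List α), L.Pairwise (fun x y => key x ≤ key y) → (∀ x ∈ L, key x ≤ N) →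
      L = L.filter (fun x => key x ≠ N) ++ L.filter (fun x => key x = N) := by
  intro L
  induction L with
  | nil => intro _ _; rfl
  | cons x tl ih =>
    intro hs hbnd
    rw [List.pairwise_cons] at hs
    obtain ⟨hx, hstl⟩ := hs
    by_cases hk : key x = N
    · have hall : ∀ y ∈ tl, key y = N := fun y hy =>
        le_antisymm (hbnd y (List.mem_cons_of_mem x hy)) (hk ▸ hx y hy)
      have h1 : (x :: tl).filter (fun x => key x ≠ N) = [] := by
        rw [List.filter_eq_nil_iff]
        intro y hy
        rcases List.mem_cons.mp hy with rfl | hy'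
        · simp [hk]
        · simp [hall y hy']
      have h2 : (x :: tl).filter (fun x => key x = N) = x :: tl := by
        rw [List.filter_eq_self]
        intro y hy
        rcases List.mem_cons.mp hy with rfl | hy'
        · simp [hk]
        · simp [hall y hy']
      rw [h1, h2]
      rfl
    · have h1 : (x :: tl).filter (fun x => key x ≠ N) =
          x :: tl.filter (fun x => key x ≠ N) := by
        rw [List.filter_cons, if_pos (by simp [hk])]
      have h2 : (x :: tl).filter (fun x => key x = N) =
          tl.filter (fun x => key x = N) := by
        rw [List.filter_cons, if_neg (by simp [hk])]
      rw [h1, h2, List.cons_append]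
      congr 1
      exact ih hstl (fun y hy => hbnd y (List.mem_cons_of_mem x hy))

lemma fold_split {α β : Type*} (key : α → ℕ) (f : β → α → β) :
    ∀ (N : ℕ) (L : List α), L.Pairwise (fun x y => key x ≤ key y) → (∀ x ∈ L, key x < N) →
      ∀ s : β, L.foldl f s =
        (List.range N).foldl (fun st j => (L.filter (fun x => key x = j)).foldl f st) s := by
  intro N
  induction N with
  | zero =>
    intro L hs hb s
    cases L with
    | nil => rfl
    | cons x tl => exact absurd (hb x (List.mem_cons_self)) (by omega)
  | succ N ih =>
    intro L hs hb s
    have hsplit := sorted_split key N L hs (fun x hx => by have := hb x hx; omega)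
    have hAs : (L.filter (fun x => key x ≠ N)).Pairwise (fun x y => key x ≤ key y) :=
      hs.filter _
    have hAb : ∀ x ∈ L.filter (fun x => key x ≠ N), key x < N := by
      intro x hx
      rw [List.mem_filter] at hx
      have h1 := hb x hx.1
      have h2 := hx.2
      simp only [decide_not, Bool.not_eq_true', decide_eq_false_iff_not] at h2
      omega
    have hstep : L.foldl f s =
        (L.filter (fun x => key x = N)).foldl f
          ((L.filter (fun x => key x ≠ N)).foldl f s) := by
      conv_lhs => rw [hsplit]
      rw [List.foldl_append]
    rw [hstep, ih _ hAs hAb s]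
    rw [List.range_succ, List.foldl_append]
    simp only [List.foldl_cons, List.foldl_nil]
    congr 1
    · refine foldl_congr_mem _ _ (List.range N) s ?_
      intro j hj st
      congr 1
      rw [List.filter_filter]
      refine List.filter_congr ?_
      intro x hx
      have hjN : j < N := List.mem_range.mp hj
      by_cases hkey : key x = j
      · simp [hkey, show j ≠ N by omega]
      · simp [hkey]

lemma range_fold_lower {J : Finset (Fin a × Fin b)}
    (hJ : IsLowerSet (↑J : Set (Fin a × Fin b)))
    (g : ℕ → List (Fin a × Fin b)) :
    ∀ (js : List ℕ),
      IsLowerSet (↑(js.foldl (fun st j => ((g j).foldl (fun J'' p => toggle p J'') st)) J) :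
        Set (Fin a × Fin b))
  | [] => hJ
  | j :: tl => by
    rw [List.foldl_cons]
    exact range_fold_lower (fold_lower (g j) J hJ) g tl

lemma main_fold (ha : 1 ≤ a) (hb : 1 ≤ b) {J : Finset (Fin a × Fin b)}
    (hJ : IsLowerSet (↑J : Set (Fin a × Fin b)))
    (l : List (Fin a × Fin b)) (hnd : l.Nodup) (hall : ∀ p : Fin a × Fin b, p ∈ l)
    (hsortN : l.Pairwise (fun x y =>
      x.2.val + (a - 1 - x.1.val) + 1 ≤ y.2.val + (a - 1 - y.1.val) + 1)) :
    W (l.foldl (fun J'' p => toggle p J'') J) = (W J).image (GG (a + b - 1)) := by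
  set key : Fin a × Fin b → ℕ := fun x => x.2.val + (a - 1 - x.1.val) + 1 with hkey
  have hbound : ∀ x ∈ l, key x < a + b := by
    intro x _
    have h1 := x.1.isLt
    have h2 := x.2.isLt
    simp only [hkey]
    omega
  rw [fold_split key (fun J'' p => toggle p J'') (a + b) l hsortN hbound J]
  have key_ge_one : ∀ x : Fin a × Fin b, 1 ≤ key x := by
    intro x
    simp only [hkey]
    omega
  have main : ∀ T : ℕ, T ≤ a + b - 1 →
      W ((List.range (T + 1)).foldl
          (fun st j => ((l.filter (fun x => key x = j)).foldl
            (fun J'' p => toggle p J'') st)) J)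
        = (W J).image (GG T) := by
    intro T
    induction T with
    | zero =>
      intro _
      have hg0 : l.filter (fun x => key x = 0) = [] := by
        rw [List.filter_eq_nil_iff]
        intro x _
        have := key_ge_one x
        simp only [decide_eq_true_eq]
        omega
      rw [show List.range 1 = [0] from rfl, List.foldl_cons, List.foldl_nil, hg0,
        List.foldl_nil]
      rw [show (W J).image (GG 0) = (W J).image id from
        Finset.image_congr (fun v _ => by unfold GG; simp only [id_eq]; split_ifs <;> omega)]
      rw [Finset.image_id]
    | succ T ih =>
      intro hT
      have hprev := ih (by omega)
      have hlowprev : IsLowerSet (↑((List.range (T + 1)).foldl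
          (fun st j => ((l.filter (fun x => key x = j)).foldl
            (fun J'' p => toggle p J'') st)) J) :
          Set (Fin a × Fin b)) :=
        range_fold_lower hJ (fun j => l.filter (fun x => key x = j)) _
      rw [List.range_succ, List.foldl_append, List.foldl_cons, List.foldl_nil]
      rw [block_fold hlowprev (by omega : 1 ≤ T + 1) (by omega : T + 1 < a + b)
        (hnd.filter _) ?_]
      · rw [hprev, Finset.image_image]
        exact Finset.image_congr (fun v _ => hsw_GG T v)
      · intro x
        rw [List.mem_filter]
        simp only [decide_eq_true_eq]
        constructor
        · exact fun h => h.2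
        · exact fun h => ⟨hall x, h⟩
  have hfin := main (a + b - 1) (le_refl _)
  rwa [show a + b - 1 + 1 = a + b by omega] at hfin

lemma count_gt {J : Finset (Fin a × Fin b)}
    (hJ : IsLowerSet (↑J : Set (Fin a × Fin b))) (k : Fin a) :
    ((W J).filter (fun w => pp J k < w)).card = k.val := by
  rw [W, Finset.filter_image]
  rw [Finset.card_image_of_injOn (fun x _ y _ h => pp_inj hJ h)]
  have hset : Finset.univ.filter (fun k' : Fin a => pp J k < pp J k')
      = Finset.Iio k := by
    ext k'
    simp only [Finset.mem_filter, Finset.mem_univ, true_and, Finset.mem_Iio]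
    constructor
    · intro h
      rcases lt_trichotomy k'.val k.val with hh | hh | hh
      · exact hh
      · exact absurd (Fin.ext hh : k' = k) (by rintro rfl; omega)
      · have := pp_gap hJ hh; omega
    · intro h
      have := pp_gap hJ (show k'.val < k.val from h)
      omega
  rw [hset, Fin.card_Iio]

lemma W_inj {J J' : Finset (Fin a × Fin b)}
    (hJ : IsLowerSet (↑J : Set (Fin a × Fin b)))
    (hJ' : IsLowerSet (↑J' : Set (Fin a × Fin b)))
    (h : W J = W J') : J = J' := by
  have hpp : ∀ k, pp J k = pp J' k := by
    intro k
    have h1 : pp J k ∈ W J' := h ▸ pp_mem_W J k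
    obtain ⟨k', hk'⟩ := mem_W.1 h1
    have hc1 := count_gt hJ k
    have hc2 := count_gt hJ' k'
    rw [hk'] at hc2
    rw [h] at hc1
    have hkk : k' = k := Fin.ext (by rw [← hc2, ← hc1])
    rw [← hk', hkk]
  have hdd : ∀ k, dd J k = dd J' k := fun k => by
    have := hpp k; unfold pp at this; omega
  ext x
  obtain ⟨k, ℓ⟩ := x
  rw [mem_iff_lt_dd hJ, mem_iff_lt_dd hJ', hdd]

lemma GG_iter_formula {n : ℕ} (hn : 0 < n) {s : ℕ} (hs : s < n) (k : ℕ) :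
    (GG (n - 1))^[k] s = (s + (n - 1) * k) % n := by
  induction k with
  | zero => simp [Nat.mod_eq_of_lt hs]
  | succ k ih =>
    rw [Function.iterate_succ_apply', ih]
    have hvlt : (s + (n - 1) * k) % n < n := Nat.mod_lt _ hn
    have hre : (s + (n - 1) * (k + 1)) % n = ((s + (n - 1) * k) % n + (n - 1)) % n := by
      rw [Nat.mul_succ, ← Nat.add_assoc, Nat.mod_add_mod]
    rw [hre]
    set v := (s + (n - 1) * k) % n
    unfold GG
    split_ifs with h0 h1
    · rw [h0, Nat.zero_add, Nat.mod_eq_of_lt (by omega)]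
    · rw [show v + (n - 1) = (v - 1) + n by omega, Nat.add_mod_right,
        Nat.mod_eq_of_lt (by omega)]
    · omega

lemma mod_add_right_cancel {n c x y : ℕ} (hx : x < n) (hy : y < n)
    (h : (x + c) % n = (y + c) % n) : x = y := by
  have h4 : x ≡ y [MOD n] := Nat.ModEq.add_right_cancel' c h
  have hh1 := Nat.mod_eq_of_lt hx
  have hh2 := Nat.mod_eq_of_lt hy
  unfold Nat.ModEq at h4
  omega

lemma GG_iter_inj {n : ℕ} (hn : 0 < n) {s : ℕ} (hs : s < n) {k1 k2 : ℕ}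
    (h1 : k1 < n) (h2 : k2 < n)
    (he : (GG (n - 1))^[k1] s = (GG (n - 1))^[k2] s) : k1 = k2 := by
  obtain ⟨nn, rfl⟩ : ∃ nn, n = nn + 1 := ⟨n - 1, by omega⟩
  rw [GG_iter_formula hn hs, GG_iter_formula hn hs] at he
  simp only [Nat.add_sub_cancel] at he
  have e1 : nn * k1 + k1 = (nn + 1) * k1 := by ring
  have e2 : nn * k2 + k2 = (nn + 1) * k2 := by ring
  have key : (k2 + s + (nn + 1) * k1) % (nn + 1) = (k1 + s + (nn + 1) * k2) % (nn + 1) := by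
    rw [show k2 + s + (nn + 1) * k1 = s + nn * k1 + (k1 + k2) by omega,
      show k1 + s + (nn + 1) * k2 = s + nn * k2 + (k1 + k2) by omega,
      Nat.add_mod, he, ← Nat.add_mod]
  rw [Nat.add_mul_mod_self_left, Nat.add_mul_mod_self_left] at key
  have h4 : k2 ≡ k1 [MOD nn + 1] := Nat.ModEq.add_right_cancel' s key
  have hh1 := Nat.mod_eq_of_lt h1
  have hh2 := Nat.mod_eq_of_lt h2
  unfold Nat.ModEq at h4
  omega

lemma GG_iter_image {n : ℕ} (hn : 0 < n) {s : ℕ} (hs : s < n) :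
    (Finset.range n).image (fun k => (GG (n - 1))^[k] s) = Finset.range n := by
  apply Finset.eq_of_subset_of_card_le
  · intro v hv
    obtain ⟨k, _, rfl⟩ := Finset.mem_image.1 hv
    rw [GG_iter_formula hn hs]
    exact Finset.mem_range.2 (Nat.mod_lt _ hn)
  · rw [Finset.card_image_of_injOn ?_, Finset.card_range]
    intro k1 h1 k2 h2 he
    exact GG_iter_inj hn hs (Finset.mem_range.1 (Finset.mem_coe.1 h1))
      (Finset.mem_range.1 (Finset.mem_coe.1 h2)) he

lemma sum_GG_iter {n : ℕ} (hn : 0 < n) {s : ℕ} (hs : s < n) :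
    ∑ k ∈ Finset.range n, (GG (n - 1))^[k] s = ∑ j ∈ Finset.range n, j := by
  calc ∑ k ∈ Finset.range n, (GG (n - 1))^[k] s
      = ∑ j ∈ (Finset.range n).image (fun k => (GG (n - 1))^[k] s), j := by
        rw [Finset.sum_image (fun k1 h1 k2 h2 he =>
          GG_iter_inj hn hs (Finset.mem_range.1 h1) (Finset.mem_range.1 h2) he)]
    _ = ∑ j ∈ Finset.range n, j := by rw [GG_iter_image hn hs]

lemma GG_iter_n {n : ℕ} (hn : 0 < n) {s : ℕ} (hs : s < n) :
    (GG (n - 1))^[n] s = s := by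
  rw [GG_iter_formula hn hs, Nat.add_mul_mod_self_right, Nat.mod_eq_of_lt hs]

end PRaux

open PRaux in
theorem promotion_order_ideal_cardinality_homomesy
    (a b : ℕ) (ha : 1 ≤ a) (hb : 1 ≤ b)
    (l : List (Fin a × Fin b)) (hnd : l.Nodup) (hall : ∀ p : Fin a × Fin b, p ∈ l)
    (hsort : l.Pairwise (fun p q =>
      ((p.2 : ℕ) : ℤ) - ((p.1 : ℕ) : ℤ) ≤ ((q.2 : ℕ) : ℤ) - ((q.1 : ℕ) : ℤ)))
    (O : Finset (Finset (Fin a × Fin b)))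
    (hO : ∃ I : Finset (Fin a × Fin b), IsLowerSet (↑I : Set (Fin a × Fin b)) ∧
      ∀ J, J ∈ O ↔ ∃ k : ℕ, (fun J' => l.foldl (fun J'' p => toggle p J'') J')^[k] I = J) :
    (∑ J ∈ O, (J.card : ℚ)) / O.card = (a : ℚ) * (b : ℚ) / 2 := by
  classical
  obtain ⟨I, hIlow, hOmem⟩ := hO
  have hn : 0 < a + b := by omega
  set F : Finset (Fin a × Fin b) → Finset (Fin a × Fin b) :=
    fun J' => l.foldl (fun J'' p => toggle p J'') J' with hF
  have hsortN : l.Pairwise (fun x y =>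
      x.2.val + (a - 1 - x.1.val) + 1 ≤ y.2.val + (a - 1 - y.1.val) + 1) := by
    refine List.Pairwise.imp ?_ hsort
    intro x y h
    have h1 := x.1.isLt
    have h2 := y.1.isLt
    omega
  have hFW : ∀ J : Finset (Fin a × Fin b), IsLowerSet (↑J : Set (Fin a × Fin b)) →
      W (F J) = (W J).image (GG (a + b - 1)) := by
    intro J hJ
    exact main_fold ha hb hJ l hnd hall hsortN
  have hFlow : ∀ J : Finset (Fin a × Fin b), IsLowerSet (↑J : Set (Fin a × Fin b)) →
      IsLowerSet (↑(F J) : Set (Fin a × Fin b)) :=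
    fun J hJ => fold_lower l J hJ
  have hiterlow : ∀ k, IsLowerSet (↑(F^[k] I) : Set (Fin a × Fin b)) := by
    intro k
    induction k with
    | zero => exact hIlow
    | succ k ih =>
      rw [Function.iterate_succ_apply']
      exact hFlow _ ih
  have hiterW : ∀ k, W (F^[k] I) = (W I).image ((GG (a + b - 1))^[k]) := by
    intro k
    induction k with
    | zero => simp
    | succ k ih =>
      rw [Function.iterate_succ_apply', hFW _ (hiterlow k), ih, Finset.image_image,
        Function.iterate_succ']
  set CC := ∑ k : Fin a, (a - 1 - (k : Fin a).val) with hCCdef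
  have hcard : ∀ k : ℕ,
      (F^[k] I).card + CC = ∑ s ∈ W I, (GG (a + b - 1))^[k] s := by
    intro k
    have h1 := sum_W (hiterlow k)
    have h2 := card_eq_sum_dd (F^[k] I)
    have h3 : ∑ v ∈ W (F^[k] I), v = ∑ s ∈ W I, (GG (a + b - 1))^[k] s := by
      rw [hiterW k, Finset.sum_image]
      intro x hx y hy he
      have hx' := mem_W_lt hx
      have hy' := mem_W_lt hy
      rw [GG_iter_formula hn hx', GG_iter_formula hn hy'] at he
      exact mod_add_right_cancel hx' hy' he
    omega
  have htot : (∑ k ∈ Finset.range (a + b), (F^[k] I).card) + (a + b) * CC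
      = a * ∑ j ∈ Finset.range (a + b), j := by
    have h1 : ∑ k ∈ Finset.range (a + b), ((F^[k] I).card + CC)
        = ∑ k ∈ Finset.range (a + b), ∑ s ∈ W I, (GG (a + b - 1))^[k] s :=
      Finset.sum_congr rfl (fun k _ => hcard k)
    rw [Finset.sum_add_distrib, Finset.sum_const, Finset.card_range, smul_eq_mul,
      Finset.sum_comm] at h1
    have h2 : ∑ s ∈ W I, ∑ k ∈ Finset.range (a + b), (GG (a + b - 1))^[k] s
        = ∑ s ∈ W I, ∑ j ∈ Finset.range (a + b), j :=
      Finset.sum_congr rfl (fun s hs => sum_GG_iter hn (mem_W_lt hs))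
    rw [h2, Finset.sum_const, card_W hIlow, smul_eq_mul] at h1
    exact h1
  have hFn : F^[a + b] I = I := by
    apply W_inj (hiterlow (a + b)) hIlow
    rw [hiterW (a + b)]
    rw [show (W I).image ((GG (a + b - 1))^[a + b]) = (W I).image id from
      Finset.image_congr (fun s hs => by
        simp only [id_eq]
        exact GG_iter_n hn (mem_W_lt (Finset.mem_coe.1 hs)))]
    rw [Finset.image_id]
  have hex : ∃ p, 0 < p ∧ F^[p] I = I := ⟨a + b, hn, hFn⟩
  set m := Nat.find hex with hmdef
  obtain ⟨hmpos, hFm⟩ : 0 < m ∧ F^[m] I = I := Nat.find_spec hex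
  have hmin : ∀ p, 0 < p → F^[p] I = I → m ≤ p := fun p h1 h2 => Nat.find_le ⟨h1, h2⟩
  have hmul : ∀ q, F^[m * q] I = I := by
    intro q
    induction q with
    | zero => simp
    | succ q ih =>
      rw [Nat.mul_succ, Function.iterate_add_apply, hFm, ih]
  have hdvd : m ∣ (a + b) := by
    by_contra hc
    have hr : F^[(a + b) % m] I = I := by
      have heq : (a + b) % m + m * ((a + b) / m) = a + b := by
        have := Nat.div_add_mod (a + b) m
        omega
      calc F^[(a + b) % m] I = F^[(a + b) % m] (F^[m * ((a + b) / m)] I) := by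
            rw [hmul]
        _ = F^[(a + b) % m + m * ((a + b) / m)] I :=
            (Function.iterate_add_apply _ _ _ _).symm
        _ = F^[a + b] I := by rw [heq]
        _ = I := hFn
    have hpos : 0 < (a + b) % m :=
      Nat.pos_of_ne_zero fun h => hc (Nat.dvd_of_mod_eq_zero h)
    have h5 := hmin _ hpos hr
    have h6 := Nat.mod_lt (a + b) hmpos
    omega
  have hper : ∀ k, F^[k % m] I = F^[k] I := by
    intro k
    have heq : k % m + m * (k / m) = k := by
      have := Nat.div_add_mod k m
      omega
    calc F^[k % m] I = F^[k % m] (F^[m * (k / m)] I) := by rw [hmul]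
      _ = F^[k % m + m * (k / m)] I := (Function.iterate_add_apply _ _ _ _).symm
      _ = F^[k] I := by rw [heq]
  have hmn : m ≤ a + b := hmin _ hn hFn
  have hinj2 : ∀ k1 k2, k1 < k2 → k2 < m → F^[k1] I ≠ F^[k2] I := by
    intro k1 k2 h12 h2m he
    have hstep1 : F^[(a + b) - k2 + k1] I = I := by
      calc F^[(a + b) - k2 + k1] I = F^[(a + b) - k2] (F^[k1] I) :=
            Function.iterate_add_apply _ _ _ _
        _ = F^[(a + b) - k2] (F^[k2] I) := by rw [he]
        _ = F^[(a + b) - k2 + k2] I := (Function.iterate_add_apply _ _ _ _).symm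
        _ = F^[a + b] I := by rw [show (a + b) - k2 + k2 = a + b by omega]
        _ = I := hFn
    have hstep2 : F^[k2 - k1] I = I := by
      calc F^[k2 - k1] I = F^[k2 - k1] (F^[(a + b) - k2 + k1] I) := by rw [hstep1]
        _ = F^[k2 - k1 + ((a + b) - k2 + k1)] I :=
            (Function.iterate_add_apply _ _ _ _).symm
        _ = F^[a + b] I := by rw [show k2 - k1 + ((a + b) - k2 + k1) = a + b by omega]
        _ = I := hFn
    have := hmin _ (by omega) hstep2
    omega
  have hinjOn : ∀ k1 ∈ Finset.range m, ∀ k2 ∈ Finset.range m,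
      F^[k1] I = F^[k2] I → k1 = k2 := by
    intro k1 h1 k2 h2 he
    rcases lt_trichotomy k1 k2 with h | h | h
    · exact absurd he (hinj2 k1 k2 h (Finset.mem_range.1 h2))
    · exact h
    · exact absurd he.symm (hinj2 k2 k1 h (Finset.mem_range.1 h1))
  have hOimg : O = (Finset.range m).image (fun k => F^[k] I) := by
    ext J
    rw [hOmem J, Finset.mem_image]
    constructor
    · rintro ⟨k, rfl⟩
      exact ⟨k % m, Finset.mem_range.2 (Nat.mod_lt _ hmpos), hper k⟩
    · rintro ⟨k, _, rfl⟩
      exact ⟨k, rfl⟩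
  have hcardO : O.card = m := by
    rw [hOimg, Finset.card_image_of_injOn
      (fun k1 h1 k2 h2 he => hinjOn k1 (Finset.mem_coe.1 h1) k2 (Finset.mem_coe.1 h2) he),
      Finset.card_range]
  have hsumO : ∑ J ∈ O, (J.card : ℚ) = ∑ k ∈ Finset.range m, ((F^[k] I).card : ℚ) := by
    rw [hOimg, Finset.sum_image hinjOn]
  obtain ⟨c, hc⟩ := hdvd
  have hcpos : 0 < c := by
    rcases Nat.eq_zero_or_pos c with h | h
    · rw [h, Nat.mul_zero] at hc; omega
    · exact h
  have hrep : ∀ x q, F^[x + m * q] I = F^[x] I := by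
    intro x q
    rw [Function.iterate_add_apply, hmul]
  have hSnGen : ∀ c' : ℕ, ∑ k ∈ Finset.range (m * c'), (F^[k] I).card
      = c' * ∑ k ∈ Finset.range m, (F^[k] I).card := by
    intro c'
    induction c' with
    | zero => simp
    | succ c' ih =>
      have hsplit := Finset.sum_Ico_consecutive (fun k => (F^[k] I).card)
        (Nat.zero_le (m * c')) (show m * c' ≤ m * c' + m by omega)
      have htail : ∑ k ∈ Finset.Ico (m * c') (m * c' + m), (F^[k] I).card
          = ∑ k ∈ Finset.range m, (F^[k] I).card := by
        rw [Finset.sum_Ico_eq_sum_range]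
        rw [show m * c' + m - m * c' = m by omega]
        refine Finset.sum_congr rfl fun r _ => ?_
        rw [show m * c' + r = r + m * c' by omega, hrep]
      rw [show m * (c' + 1) = m * c' + m by ring, ← Finset.range_eq_Ico] at *
      rw [← Finset.range_eq_Ico] at hsplit
      rw [← hsplit, htail, ih]
      ring
  have hNSn : ∑ k ∈ Finset.range (a + b), (F^[k] I).card
      = c * ∑ k ∈ Finset.range m, (F^[k] I).card := by
    rw [hc]
    exact hSnGen c
  have hCC2 : CC * 2 = a * (a - 1) := by
    have h1 : CC = ∑ j ∈ Finset.range a, (a - 1 - j) := by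
      rw [hCCdef]
      exact Fin.sum_univ_eq_sum_range _ a
    have h2 : ∑ j ∈ Finset.range a, (a - 1 - j) = ∑ j ∈ Finset.range a, j :=
      Finset.sum_range_reflect (fun i => i) a
    rw [h1, h2, Finset.sum_range_id_mul_two]
  have hG2 : (∑ j ∈ Finset.range (a + b), j) * 2 = (a + b) * (a + b - 1) :=
    Finset.sum_range_id_mul_two _
  rw [hsumO, hcardO]
  have hcast : ∑ k ∈ Finset.range m, ((F^[k] I).card : ℚ)
      = ((∑ k ∈ Finset.range m, (F^[k] I).card : ℕ) : ℚ) := by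
    push_cast
    rfl
  rw [hcast]
  have hQtot : ((∑ k ∈ Finset.range (a + b), (F^[k] I).card : ℕ) : ℚ) + ((a : ℚ) + b) * CC
      = a * ((∑ j ∈ Finset.range (a + b), j : ℕ) : ℚ) := by
    exact_mod_cast htot
  have hQG : ((∑ j ∈ Finset.range (a + b), j : ℕ) : ℚ) * 2
      = ((a : ℚ) + b) * ((a : ℚ) + b - 1) := by
    have hcst : (((∑ j ∈ Finset.range (a + b), j) * 2 : ℕ) : ℚ)
        = (((a + b) * (a + b - 1) : ℕ) : ℚ) := congrArg (Nat.cast : ℕ → ℚ) hG2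
    push_cast [Nat.cast_sub (show 1 ≤ a + b by omega)] at hcst ⊢
    linarith
  have hQCC : (CC : ℚ) * 2 = (a : ℚ) * ((a : ℚ) - 1) := by
    have hcst : ((CC * 2 : ℕ) : ℚ) = ((a * (a - 1) : ℕ) : ℚ) :=
      congrArg (Nat.cast : ℕ → ℚ) hCC2
    push_cast [Nat.cast_sub ha] at hcst ⊢
    linarith
  have hQSn : ((∑ k ∈ Finset.range (a + b), (F^[k] I).card : ℕ) : ℚ) * 2
      = (a : ℚ) * ((a : ℚ) + b) * b := by
    linear_combination 2 * hQtot + (a : ℚ) * hQG - ((a : ℚ) + b) * hQCC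
  have hQc : ((∑ k ∈ Finset.range (a + b), (F^[k] I).card : ℕ) : ℚ)
      = (c : ℚ) * ((∑ k ∈ Finset.range m, (F^[k] I).card : ℕ) : ℚ) := by
    exact_mod_cast hNSn
  have hQab : (a : ℚ) + b = (m : ℚ) * c := by exact_mod_cast hc
  have hm0 : (m : ℚ) ≠ 0 := by
    have hq : (0 : ℚ) < m := by exact_mod_cast hmpos
    exact ne_of_gt hq
  have hc0 : (c : ℚ) ≠ 0 := by
    have hq : (0 : ℚ) < c := by exact_mod_cast hcpos
    exact ne_of_gt hq
  rw [div_eq_div_iff hm0 (by norm_num : (2 : ℚ) ≠ 0)]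
  have hkey : (c : ℚ) * (((∑ k ∈ Finset.range m, (F^[k] I).card : ℕ) : ℚ) * 2)
      = (c : ℚ) * ((a : ℚ) * b * m) := by
    calc (c : ℚ) * (((∑ k ∈ Finset.range m, (F^[k] I).card : ℕ) : ℚ) * 2)
        = ((∑ k ∈ Finset.range (a + b), (F^[k] I).card : ℕ) : ℚ) * 2 := by
          rw [hQc]; ring
      _ = (a : ℚ) * ((a : ℚ) + b) * b := hQSn
      _ = (c : ℚ) * ((a : ℚ) * b * m) := by rw [hQab]; ring
  exact mul_left_cancel₀ hc0 hkey
end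

section
/- Let a, b be positive integers, let I be an order ideal of [a]×[b] with sign-word s = s(I), and let s' = s(Φ_J(I)) be the sign-word of the rowmotion image of I. Then for every 1 ≤ i ≤ a+b−1, one has (s_i, s_{i+1}) = (−1, +1) if and only if (s'_i, s'_{i+1}) = (+1, −1). -/
open scoped Classical in
/-- Rowmotion on order ideals of a finite poset: `I` maps to the lower set
generated by the minimal elements of the complement of `I`. -/
noncomputable def rowmotion {P : Type*} [PartialOrder P] [Fintype P]
    (I : Finset P) : Finset P :=
  Finset.univ.filter (fun y => ∃ m, m ∉ I ∧ (∀ z ∉ I, z ≤ m → z = m) ∧ y ≤ m)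

namespace RowAux


variable {a b : ℕ}

def fcnt (I : Finset (Fin a × Fin b)) (k : ℤ) : ℕ :=
  (I.filter (fun p => ((p.2 : ℕ) : ℤ) - ((p.1 : ℕ) : ℤ) = k)).card

lemma ht_eq (I : Finset (Fin a × Fin b)) (k : ℤ) : ht a b I k = |k| + 2 * fcnt I k := rfl

lemma sgn_eq (I : Finset (Fin a × Fin b)) (i : ℕ) :
    sgn a b I i = |(i : ℤ) - a| - |(i : ℤ) - a - 1|
      + 2 * ((fcnt I ((i : ℤ) - a) : ℤ) - (fcnt I ((i : ℤ) - a - 1) : ℤ)) := by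
  unfold sgn
  rw [ht_eq, ht_eq]
  ring

lemma mem_of_le {I : Finset (Fin a × Fin b)} (hI : IsLowerSet (↑I : Set (Fin a × Fin b)))
    {p q : Fin a × Fin b} (h : p ≤ q) (hq : q ∈ I) : p ∈ I :=
  Finset.mem_coe.mp (hI h (Finset.mem_coe.mpr hq))

lemma fcnt_le {I : Finset (Fin a × Fin b)} {k : ℤ} {c : ℕ}
    (h : ∀ p ∈ I, ((p.2 : ℕ) : ℤ) - ((p.1 : ℕ) : ℤ) = k → min (p.1 : ℕ) (p.2 : ℕ) < c) :
    fcnt I k ≤ c := by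
  have : (I.filter (fun p => ((p.2 : ℕ) : ℤ) - ((p.1 : ℕ) : ℤ) = k)).card
      ≤ (Finset.range c).card := by
    apply Finset.card_le_card_of_injOn (fun p => min (p.1 : ℕ) (p.2 : ℕ))
    · intro p hp
      simp only [Finset.mem_coe, Finset.mem_filter] at hp
      simp only [Finset.mem_coe, Finset.mem_range]
      exact h p hp.1 hp.2
    · intro p hp q hq hpq
      simp only [Finset.coe_filter, Set.mem_setOf_eq] at hp hq
      simp only at hpq
      have h1 : ((p.1 : ℕ) : ℤ) = ((q.1 : ℕ) : ℤ) ∧ ((p.2 : ℕ) : ℤ) = ((q.2 : ℕ) : ℤ) := by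
        have e1 := hp.2
        have e2 := hq.2
        omega
      exact Prod.ext (Fin.ext (by exact_mod_cast h1.1)) (Fin.ext (by exact_mod_cast h1.2))
  simpa [fcnt] using this

lemma mem_iff {I : Finset (Fin a × Fin b)} (hI : IsLowerSet (↑I : Set (Fin a × Fin b)))
    (p : Fin a × Fin b) :
    p ∈ I ↔ min (p.1 : ℕ) (p.2 : ℕ) < fcnt I (((p.2 : ℕ) : ℤ) - ((p.1 : ℕ) : ℤ)) := by
  obtain ⟨⟨x, hx⟩, ⟨y, hy⟩⟩ := p
  simp only
  constructor
  · intro hp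
    set m := min x y with hm
    have key : (Finset.range (m + 1)).card
        ≤ (I.filter (fun p => ((p.2 : ℕ) : ℤ) - ((p.1 : ℕ) : ℤ) = (y : ℤ) - (x : ℤ))).card := by
      apply Finset.card_le_card_of_injOn
        (fun t => ((⟨min (x - m + t) (a - 1), by omega⟩ : Fin a),
                   (⟨min (y - m + t) (b - 1), by omega⟩ : Fin b)))
      · intro t ht
        simp only [Finset.mem_coe, Finset.mem_range] at ht
        simp only [Finset.mem_coe, Finset.mem_filter]
        constructor
        · apply mem_of_le hI (q := (⟨⟨x, hx⟩, ⟨y, hy⟩⟩ : Fin a × Fin b)) _ hp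
          refine ⟨?_, ?_⟩ <;> simp only [Fin.mk_le_mk] <;> omega
        · omega
      · intro t ht' t' ht'' he
        simp only [Finset.mem_coe, Finset.mem_range] at ht' ht''
        have := congrArg (fun q => (q.1 : ℕ)) he
        simp only at this
        omega
    simpa [fcnt] using key
  · intro hlt
    by_contra hp
    have hbnd : fcnt I ((y : ℤ) - (x : ℤ)) ≤ min x y := by
      apply fcnt_le
      intro q hq hfq
      by_contra hcon
      push_neg at hcon
      apply hp
      apply mem_of_le hI (q := q) _ hq
      refine ⟨?_, ?_⟩ <;> simp only [Fin.le_def] <;> omega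
    omega

/-- convenient membership for explicit pairs -/
lemma mk_mem_iff {I : Finset (Fin a × Fin b)} (hI : IsLowerSet (↑I : Set (Fin a × Fin b)))
    (x y : ℕ) (hx : x < a) (hy : y < b) (k : ℤ) (hk : (y : ℤ) - (x : ℤ) = k) :
    (⟨⟨x, hx⟩, ⟨y, hy⟩⟩ : Fin a × Fin b) ∈ I ↔ min x y < fcnt I k := by
  rw [mem_iff hI]
  simp only
  rw [hk]

lemma mem_fcnt {I : Finset (Fin a × Fin b)} (hI : IsLowerSet (↑I : Set (Fin a × Fin b)))
    {z : Fin a × Fin b} (hz : z ∈ I) (k : ℤ) (hk : ((z.2 : ℕ) : ℤ) - ((z.1 : ℕ) : ℤ) = k) :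
    min (z.1 : ℕ) (z.2 : ℕ) < fcnt I k := by
  have := (mem_iff hI z).1 hz
  rwa [hk] at this

lemma not_mem_fcnt {I : Finset (Fin a × Fin b)} (hI : IsLowerSet (↑I : Set (Fin a × Fin b)))
    {z : Fin a × Fin b} (hz : z ∉ I) (k : ℤ) (hk : ((z.2 : ℕ) : ℤ) - ((z.1 : ℕ) : ℤ) = k) :
    fcnt I k ≤ min (z.1 : ℕ) (z.2 : ℕ) := by
  by_contra hcon
  push_neg at hcon
  exact hz ((mem_iff hI z).2 (by rwa [hk]))

/-- lower bound on counts from a member dominating an explicit pair -/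
lemma lt_fcnt_of_le {I : Finset (Fin a × Fin b)} (hI : IsLowerSet (↑I : Set (Fin a × Fin b)))
    {q : Fin a × Fin b} (hq : q ∈ I) (x y : ℕ) (hx : x < a) (hy : y < b)
    (h1 : x ≤ (q.1 : ℕ)) (h2 : y ≤ (q.2 : ℕ)) (k : ℤ) (hk : (y : ℤ) - (x : ℤ) = k) :
    min x y < fcnt I k := by
  have hm : (⟨⟨x, hx⟩, ⟨y, hy⟩⟩ : Fin a × Fin b) ∈ I := by
    apply mem_of_le hI (q := q) _ hq
    refine ⟨?_, ?_⟩ <;> simp only [Fin.le_def] <;> omega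
  exact (mk_mem_iff hI x y hx hy k hk).1 hm

/-- upper bound on counts from a non-member dominated by all high elements of the file -/
lemma fcnt_le_dom {I : Finset (Fin a × Fin b)} (hI : IsLowerSet (↑I : Set (Fin a × Fin b)))
    {p : Fin a × Fin b} (hp : p ∉ I) {k : ℤ} {c : ℕ}
    (hc : ∀ u v : ℕ, u < a → v < b → (v : ℤ) - (u : ℤ) = k → c ≤ min u v →
      (p.1 : ℕ) ≤ u ∧ (p.2 : ℕ) ≤ v) :
    fcnt I k ≤ c := by
  apply fcnt_le
  intro q hq hfq
  by_contra hcon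
  push_neg at hcon
  obtain ⟨h1, h2⟩ := hc (q.1 : ℕ) (q.2 : ℕ) q.1.isLt q.2.isLt hfq hcon
  apply hp
  apply mem_of_le hI (q := q) _ hq
  exact ⟨h1, h2⟩

/-- upper bound on counts from a maximal element dominated strictly by all high elements -/
lemma fcnt_le_max {I : Finset (Fin a × Fin b)}
    {p : Fin a × Fin b} (hmax : ∀ z ∈ I, p ≤ z → z = p) {k : ℤ} {c : ℕ}
    (hc : ∀ u v : ℕ, u < a → v < b → (v : ℤ) - (u : ℤ) = k → c ≤ min u v →
      (p.1 : ℕ) ≤ u ∧ (p.2 : ℕ) ≤ v ∧ ¬(u = (p.1 : ℕ) ∧ v = (p.2 : ℕ))) :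
    fcnt I k ≤ c := by
  apply fcnt_le
  intro q hq hfq
  by_contra hcon
  push_neg at hcon
  obtain ⟨h1, h2, h3⟩ := hc (q.1 : ℕ) (q.2 : ℕ) q.1.isLt q.2.isLt hfq hcon
  have heq := hmax q hq ⟨h1, h2⟩
  apply h3
  rw [heq]
  exact ⟨rfl, rfl⟩


lemma valley_iff (ha : 1 ≤ a) (hb : 1 ≤ b) (I : Finset (Fin a × Fin b))
    (hI : IsLowerSet (↑I : Set (Fin a × Fin b))) (i : ℕ) (hi1 : 1 ≤ i) (hi2 : i ≤ a + b - 1) :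
    (sgn a b I i = -1 ∧ sgn a b I (i + 1) = 1) ↔
      ∃ p : Fin a × Fin b, (p ∉ I ∧ ∀ z ∉ I, z ≤ p → z = p) ∧
        ((p.2 : ℕ) : ℤ) - ((p.1 : ℕ) : ℤ) = (i : ℤ) - a := by
  have hs1 := sgn_eq I i
  have hs2 := sgn_eq I (i + 1)
  have e1 : ((i + 1 : ℕ) : ℤ) - a = ((i : ℤ) - a) + 1 := by push_cast; ring
  rw [e1] at hs2
  have e2 : ((i : ℤ) - a) + 1 - 1 = (i : ℤ) - a := by ring
  rw [e2] at hs2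
  set k : ℤ := (i : ℤ) - a with hk
  rcases lt_trichotomy k 0 with hneg | hzero | hpos
  · -- case k ≤ -1
    have ha1 : |k| = -k := abs_of_nonpos (by omega)
    have ha2 : |k - 1| = -(k - 1) := abs_of_nonpos (by omega)
    have ha3 : |k + 1| = -(k + 1) := abs_of_nonpos (by omega)
    rw [ha1, ha2] at hs1
    rw [ha3, ha1] at hs2
    constructor
    · rintro ⟨hv1, hv2⟩
      rw [hs1] at hv1
      rw [hs2] at hv2
      set m := fcnt I k with hm
      have hbndA : fcnt I (k - 1) ≤ ((a : ℤ) + k - 1).toNat :=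
        fcnt_le (fun q hq hf => by have := q.1.isLt; have := q.2.isLt; omega)
      have hbndB : fcnt I (k + 1) ≤ b :=
        fcnt_le (fun q hq hf => by have := q.2.isLt; omega)
      have hma : ((m : ℤ) - k).toNat < a := by omega
      have hmb : m < b := by omega
      refine ⟨⟨⟨((m : ℤ) - k).toNat, hma⟩, ⟨m, hmb⟩⟩, ⟨?_, ?_⟩, ?_⟩
      · rw [mk_mem_iff hI _ _ _ _ k (by omega)]
        omega
      · intro z hz hzp
        obtain ⟨⟨u, hu⟩, ⟨v, hv⟩⟩ := z
        rw [Prod.mk_le_mk] at hzp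
        obtain ⟨hzu, hzv⟩ := hzp
        rw [Fin.mk_le_mk] at hzu hzv
        rcases lt_trichotomy ((v : ℤ) - u) k with hlt | heq | hgt
        · exact absurd (mem_of_le hI
            (q := (⟨⟨((m : ℤ) - k).toNat, hma⟩, ⟨m - 1, by omega⟩⟩ : Fin a × Fin b))
            ⟨by simp only [Fin.mk_le_mk]; omega, by simp only [Fin.mk_le_mk]; omega⟩
            ((mk_mem_iff hI _ _ _ _ (k - 1) (by omega)).2 (by omega))) hz
        · have hvm : v = m := by
            by_contra hne
            exact hz ((mk_mem_iff hI u v hu hv k heq).2 (by omega))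
          simp only [Prod.mk.injEq, Fin.mk.injEq]
          omega
        · exact absurd (mem_of_le hI
            (q := (⟨⟨((m : ℤ) - k - 1).toNat, by omega⟩, ⟨m, hmb⟩⟩ : Fin a × Fin b))
            ⟨by simp only [Fin.mk_le_mk]; omega, by simp only [Fin.mk_le_mk]; omega⟩
            ((mk_mem_iff hI _ _ _ _ (k + 1) (by omega)).2 (by omega))) hz
      · show ((m : ℤ)) - ((((m : ℤ) - k).toNat : ℕ) : ℤ) = k
        omega
    · rintro ⟨⟨⟨x, hx⟩, ⟨y, hy⟩⟩, ⟨hpn, hpm⟩, hpf⟩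
      have hpf' : (y : ℤ) - x = k := hpf
      rw [hs1, hs2]
      have hx1 : 1 ≤ x := by omega
      have f1 : fcnt I k ≤ min x y := not_mem_fcnt hI hpn k hpf
      have f2 : y ≤ fcnt I k := by
        rcases Nat.eq_zero_or_pos y with h0 | hypos
        · omega
        · have hzI : (⟨⟨x - 1, by omega⟩, ⟨y - 1, by omega⟩⟩ : Fin a × Fin b) ∈ I := by
            by_contra hzn
            have := hpm _ hzn
              ⟨by simp only [Fin.mk_le_mk]; omega, by simp only [Fin.mk_le_mk]; omega⟩
            simp only [Prod.mk.injEq, Fin.mk.injEq] at this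
            omega
          have := (mk_mem_iff hI (x - 1) (y - 1) (by omega) (by omega) k (by omega)).1 hzI
          omega
      have f3a : y ≤ fcnt I (k - 1) := by
        rcases Nat.eq_zero_or_pos y with h0 | hypos
        · omega
        · have hzI : (⟨⟨x, hx⟩, ⟨y - 1, by omega⟩⟩ : Fin a × Fin b) ∈ I := by
            by_contra hzn
            have := hpm _ hzn ⟨le_refl _, by simp only [Fin.mk_le_mk]; omega⟩
            simp only [Prod.mk.injEq, Fin.mk.injEq] at this
            omega
          have := (mk_mem_iff hI x (y - 1) hx (by omega) (k - 1) (by omega)).1 hzI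
          omega
      have f3b : fcnt I (k - 1) ≤ y :=
        fcnt_le_dom hI hpn
          (fun u v hu hv hf hm => ⟨show x ≤ u by omega, show y ≤ v by omega⟩)
      have f4a : fcnt I (k + 1) ≤ y + 1 :=
        fcnt_le_dom hI hpn
          (fun u v hu hv hf hm => ⟨show x ≤ u by omega, show y ≤ v by omega⟩)
      have f4b : y + 1 ≤ fcnt I (k + 1) := by
        have hzI : (⟨⟨x - 1, by omega⟩, ⟨y, hy⟩⟩ : Fin a × Fin b) ∈ I := by
          by_contra hzn
          have := hpm _ hzn ⟨by simp only [Fin.mk_le_mk]; omega, le_refl _⟩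
          simp only [Prod.mk.injEq, Fin.mk.injEq] at this
          omega
        have := (mk_mem_iff hI (x - 1) y (by omega) hy (k + 1) (by omega)).1 hzI
        omega
      constructor <;> omega
  · -- case k = 0
    have ha1 : |k| = 0 := by rw [hzero]; simp
    have ha2 : |k - 1| = 1 := by rw [hzero]; simp
    have ha3 : |k + 1| = 1 := by rw [hzero]; simp
    rw [ha1, ha2] at hs1
    rw [ha3, ha1] at hs2
    constructor
    · rintro ⟨hv1, hv2⟩
      rw [hs1] at hv1
      rw [hs2] at hv2
      set m := fcnt I k with hm
      have hbndA : fcnt I (k - 1) ≤ a - 1 :=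
        fcnt_le (fun q hq hf => by have := q.1.isLt; have := q.2.isLt; omega)
      have hbndB : fcnt I (k + 1) ≤ b - 1 :=
        fcnt_le (fun q hq hf => by have := q.1.isLt; have := q.2.isLt; omega)
      have hma : m < a := by omega
      have hmb : m < b := by omega
      refine ⟨⟨⟨m, hma⟩, ⟨m, hmb⟩⟩, ⟨?_, ?_⟩, ?_⟩
      · rw [mk_mem_iff hI _ _ _ _ k (by omega)]
        omega
      · intro z hz hzp
        obtain ⟨⟨u, hu⟩, ⟨v, hv⟩⟩ := z
        rw [Prod.mk_le_mk] at hzp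
        obtain ⟨hzu, hzv⟩ := hzp
        rw [Fin.mk_le_mk] at hzu hzv
        rcases lt_trichotomy ((v : ℤ) - u) k with hlt | heq | hgt
        · exact absurd (mem_of_le hI
            (q := (⟨⟨m, hma⟩, ⟨m - 1, by omega⟩⟩ : Fin a × Fin b))
            ⟨by simp only [Fin.mk_le_mk]; omega, by simp only [Fin.mk_le_mk]; omega⟩
            ((mk_mem_iff hI _ _ _ _ (k - 1) (by omega)).2 (by omega))) hz
        · have hum : u = m := by
            by_contra hne
            exact hz ((mk_mem_iff hI u v hu hv k heq).2 (by omega))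
          simp only [Prod.mk.injEq, Fin.mk.injEq]
          omega
        · exact absurd (mem_of_le hI
            (q := (⟨⟨m - 1, by omega⟩, ⟨m, hmb⟩⟩ : Fin a × Fin b))
            ⟨by simp only [Fin.mk_le_mk]; omega, by simp only [Fin.mk_le_mk]; omega⟩
            ((mk_mem_iff hI _ _ _ _ (k + 1) (by omega)).2 (by omega))) hz
      · show ((m : ℤ)) - ((m : ℤ)) = k
        omega
    · rintro ⟨⟨⟨x, hx⟩, ⟨y, hy⟩⟩, ⟨hpn, hpm⟩, hpf⟩
      have hpf' : (y : ℤ) - x = k := hpf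
      rw [hs1, hs2]
      have f1 : fcnt I k ≤ min x y := not_mem_fcnt hI hpn k hpf
      have f2 : x ≤ fcnt I k := by
        rcases Nat.eq_zero_or_pos x with h0 | hxpos
        · omega
        · have hzI : (⟨⟨x - 1, by omega⟩, ⟨y - 1, by omega⟩⟩ : Fin a × Fin b) ∈ I := by
            by_contra hzn
            have := hpm _ hzn
              ⟨by simp only [Fin.mk_le_mk]; omega, by simp only [Fin.mk_le_mk]; omega⟩
            simp only [Prod.mk.injEq, Fin.mk.injEq] at this
            omega
          have := (mk_mem_iff hI (x - 1) (y - 1) (by omega) (by omega) k (by omega)).1 hzI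
          omega
      have f3a : x ≤ fcnt I (k - 1) := by
        rcases Nat.eq_zero_or_pos x with h0 | hxpos
        · omega
        · have hzI : (⟨⟨x, hx⟩, ⟨y - 1, by omega⟩⟩ : Fin a × Fin b) ∈ I := by
            by_contra hzn
            have := hpm _ hzn ⟨le_refl _, by simp only [Fin.mk_le_mk]; omega⟩
            simp only [Prod.mk.injEq, Fin.mk.injEq] at this
            omega
          have := (mk_mem_iff hI x (y - 1) hx (by omega) (k - 1) (by omega)).1 hzI
          omega
      have f3b : fcnt I (k - 1) ≤ x :=
        fcnt_le_dom hI hpn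
          (fun u v hu hv hf hm => ⟨show x ≤ u by omega, show y ≤ v by omega⟩)
      have f4a : fcnt I (k + 1) ≤ x :=
        fcnt_le_dom hI hpn
          (fun u v hu hv hf hm => ⟨show x ≤ u by omega, show y ≤ v by omega⟩)
      have f4b : x ≤ fcnt I (k + 1) := by
        rcases Nat.eq_zero_or_pos x with h0 | hxpos
        · omega
        · have hzI : (⟨⟨x - 1, by omega⟩, ⟨y, hy⟩⟩ : Fin a × Fin b) ∈ I := by
            by_contra hzn
            have := hpm _ hzn ⟨by simp only [Fin.mk_le_mk]; omega, le_refl _⟩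
            simp only [Prod.mk.injEq, Fin.mk.injEq] at this
            omega
          have := (mk_mem_iff hI (x - 1) y (by omega) hy (k + 1) (by omega)).1 hzI
          omega
      constructor <;> omega
  · -- case 1 ≤ k
    have ha1 : |k| = k := abs_of_nonneg (by omega)
    have ha2 : |k - 1| = k - 1 := abs_of_nonneg (by omega)
    have ha3 : |k + 1| = k + 1 := abs_of_nonneg (by omega)
    rw [ha1, ha2] at hs1
    rw [ha3, ha1] at hs2
    constructor
    · rintro ⟨hv1, hv2⟩
      rw [hs1] at hv1
      rw [hs2] at hv2
      set m := fcnt I k with hm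
      have hbndA : fcnt I (k - 1) ≤ a :=
        fcnt_le (fun q hq hf => by have := q.1.isLt; omega)
      have hbndB : fcnt I (k + 1) ≤ (b - 1 - k).toNat :=
        fcnt_le (fun q hq hf => by have h2 := q.2.isLt; have h1 := q.1.isLt; omega)
      have hma : m < a := by omega
      have hmb : (m : ℤ) + k < b := by omega
      refine ⟨⟨⟨m, hma⟩, ⟨((m : ℤ) + k).toNat, by omega⟩⟩, ⟨?_, ?_⟩, ?_⟩
      · rw [mk_mem_iff hI _ _ _ _ k (by omega)]
        omega
      · intro z hz hzp
        obtain ⟨⟨u, hu⟩, ⟨v, hv⟩⟩ := z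
        rw [Prod.mk_le_mk] at hzp
        obtain ⟨hzu, hzv⟩ := hzp
        rw [Fin.mk_le_mk] at hzu hzv
        rcases lt_trichotomy ((v : ℤ) - u) k with hlt | heq | hgt
        · exact absurd (mem_of_le hI
            (q := (⟨⟨m, hma⟩, ⟨((m : ℤ) + k - 1).toNat, by omega⟩⟩ : Fin a × Fin b))
            ⟨by simp only [Fin.mk_le_mk]; omega, by simp only [Fin.mk_le_mk]; omega⟩
            ((mk_mem_iff hI _ _ _ _ (k - 1) (by omega)).2 (by omega))) hz
        · have hum : u = m := by
            by_contra hne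
            exact hz ((mk_mem_iff hI u v hu hv k heq).2 (by omega))
          simp only [Prod.mk.injEq, Fin.mk.injEq]
          omega
        · have hm1 : 1 ≤ m := by omega
          exact absurd (mem_of_le hI
            (q := (⟨⟨m - 1, by omega⟩, ⟨((m : ℤ) + k).toNat, by omega⟩⟩ : Fin a × Fin b))
            ⟨by simp only [Fin.mk_le_mk]; omega, by simp only [Fin.mk_le_mk]; omega⟩
            ((mk_mem_iff hI _ _ _ _ (k + 1) (by omega)).2 (by omega))) hz
      · show ((((m : ℤ) + k).toNat : ℕ) : ℤ) - ((m : ℕ) : ℤ) = k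
        omega
    · rintro ⟨⟨⟨x, hx⟩, ⟨y, hy⟩⟩, ⟨hpn, hpm⟩, hpf⟩
      have hpf' : (y : ℤ) - x = k := hpf
      rw [hs1, hs2]
      have f1 : fcnt I k ≤ min x y := not_mem_fcnt hI hpn k hpf
      have f2 : x ≤ fcnt I k := by
        rcases Nat.eq_zero_or_pos x with h0 | hxpos
        · omega
        · have hzI : (⟨⟨x - 1, by omega⟩, ⟨y - 1, by omega⟩⟩ : Fin a × Fin b) ∈ I := by
            by_contra hzn
            have := hpm _ hzn
              ⟨by simp only [Fin.mk_le_mk]; omega, by simp only [Fin.mk_le_mk]; omega⟩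
            simp only [Prod.mk.injEq, Fin.mk.injEq] at this
            omega
          have := (mk_mem_iff hI (x - 1) (y - 1) (by omega) (by omega) k (by omega)).1 hzI
          omega
      have f3a : x + 1 ≤ fcnt I (k - 1) := by
        have hy1 : 1 ≤ y := by omega
        have hzI : (⟨⟨x, hx⟩, ⟨y - 1, by omega⟩⟩ : Fin a × Fin b) ∈ I := by
          by_contra hzn
          have := hpm _ hzn ⟨le_refl _, by simp only [Fin.mk_le_mk]; omega⟩
          simp only [Prod.mk.injEq, Fin.mk.injEq] at this
          omega
        have := (mk_mem_iff hI x (y - 1) hx (by omega) (k - 1) (by omega)).1 hzI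
        omega
      have f3b : fcnt I (k - 1) ≤ x + 1 :=
        fcnt_le_dom hI hpn
          (fun u v hu hv hf hm => ⟨show x ≤ u by omega, show y ≤ v by omega⟩)
      have f4a : fcnt I (k + 1) ≤ x :=
        fcnt_le_dom hI hpn
          (fun u v hu hv hf hm => ⟨show x ≤ u by omega, show y ≤ v by omega⟩)
      have f4b : x ≤ fcnt I (k + 1) := by
        rcases Nat.eq_zero_or_pos x with h0 | hxpos
        · omega
        · have hzI : (⟨⟨x - 1, by omega⟩, ⟨y, hy⟩⟩ : Fin a × Fin b) ∈ I := by
            by_contra hzn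
            have := hpm _ hzn ⟨by simp only [Fin.mk_le_mk]; omega, le_refl _⟩
            simp only [Prod.mk.injEq, Fin.mk.injEq] at this
            omega
          have := (mk_mem_iff hI (x - 1) y (by omega) hy (k + 1) (by omega)).1 hzI
          omega
      constructor <;> omega

lemma peak_iff (ha : 1 ≤ a) (hb : 1 ≤ b) (J : Finset (Fin a × Fin b))
    (hJ : IsLowerSet (↑J : Set (Fin a × Fin b))) (i : ℕ) (hi1 : 1 ≤ i) (hi2 : i ≤ a + b - 1) :
    (sgn a b J i = 1 ∧ sgn a b J (i + 1) = -1) ↔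
      ∃ p : Fin a × Fin b, (p ∈ J ∧ ∀ z ∈ J, p ≤ z → z = p) ∧
        ((p.2 : ℕ) : ℤ) - ((p.1 : ℕ) : ℤ) = (i : ℤ) - a := by
  have hs1 := sgn_eq J i
  have hs2 := sgn_eq J (i + 1)
  have e1 : ((i + 1 : ℕ) : ℤ) - a = ((i : ℤ) - a) + 1 := by push_cast; ring
  rw [e1] at hs2
  have e2 : ((i : ℤ) - a) + 1 - 1 = (i : ℤ) - a := by ring
  rw [e2] at hs2
  set k : ℤ := (i : ℤ) - a with hk
  rcases lt_trichotomy k 0 with hneg | hzero | hpos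
  · -- case k ≤ -1
    have ha1 : |k| = -k := abs_of_nonpos (by omega)
    have ha2 : |k - 1| = -(k - 1) := abs_of_nonpos (by omega)
    have ha3 : |k + 1| = -(k + 1) := abs_of_nonpos (by omega)
    rw [ha1, ha2] at hs1
    rw [ha3, ha1] at hs2
    constructor
    · rintro ⟨hv1, hv2⟩
      rw [hs1] at hv1
      rw [hs2] at hv2
      set m := fcnt J k with hm
      have hm1 : 1 ≤ m := by omega
      have hbndK : fcnt J k ≤ ((a : ℤ) + k).toNat :=
        fcnt_le (fun q hq hf => by have := q.1.isLt; have := q.2.isLt; omega)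
      have hbndK2 : fcnt J k ≤ b :=
        fcnt_le (fun q hq hf => by have := q.2.isLt; omega)
      have hqa : ((m : ℤ) - 1 - k).toNat < a := by omega
      have hqb : m - 1 < b := by omega
      refine ⟨⟨⟨((m : ℤ) - 1 - k).toNat, hqa⟩, ⟨m - 1, hqb⟩⟩, ⟨?_, ?_⟩, ?_⟩
      · exact (mk_mem_iff hJ _ _ hqa hqb k (by omega)).2 (by omega)
      · intro z hz hqz
        obtain ⟨⟨u, hu⟩, ⟨v, hv⟩⟩ := z
        rw [Prod.mk_le_mk] at hqz
        obtain ⟨hzu, hzv⟩ := hqz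
        rw [Fin.mk_le_mk] at hzu hzv
        rcases lt_trichotomy ((v : ℤ) - u) k with hlt | heq | hgt
        · have := lt_fcnt_of_le hJ hz (((m : ℤ) - k).toNat) (m - 1)
            (by omega) (by omega) (show (((m : ℤ) - k).toNat) ≤ u from by omega) (show (m - 1) ≤ v from by omega) (k - 1) (by omega)
          omega
        · have hvm : v = m - 1 := by
            have h2 : min u v < fcnt J k := mem_fcnt hJ hz k heq
            omega
          simp only [Prod.mk.injEq, Fin.mk.injEq]
          omega
        · have := lt_fcnt_of_le hJ hz (((m : ℤ) - 1 - k).toNat) m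
            (by omega) (by omega) (show (((m : ℤ) - 1 - k).toNat) ≤ u from by omega) (show m ≤ v from by omega) (k + 1) (by omega)
          omega
      · show ((m - 1 : ℕ) : ℤ) - ((((m : ℤ) - 1 - k).toNat : ℕ) : ℤ) = k
        omega
    · rintro ⟨⟨⟨x, hx⟩, ⟨y, hy⟩⟩, ⟨hpin, hpm⟩, hpf⟩
      have hpf' : (y : ℤ) - x = k := hpf
      rw [hs1, hs2]
      have hx1 : 1 ≤ x := by omega
      have g1 : min x y < fcnt J k := mem_fcnt hJ hpin k hpf
      have g2 : fcnt J k ≤ y + 1 :=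
        fcnt_le_max hpm (fun u v hu hv hf hm =>
          ⟨show x ≤ u by omega, show y ≤ v by omega, by
            show ¬(u = x ∧ v = y); omega⟩)
      have g3a : fcnt J (k - 1) ≤ y :=
        fcnt_le_max hpm (fun u v hu hv hf hm =>
          ⟨show x ≤ u by omega, show y ≤ v by omega, by
            show ¬(u = x ∧ v = y); omega⟩)
      have g3b : y ≤ fcnt J (k - 1) := by
        rcases Nat.eq_zero_or_pos y with h0 | hypos
        · omega
        · have hzI : (⟨⟨x, hx⟩, ⟨y - 1, by omega⟩⟩ : Fin a × Fin b) ∈ J :=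
            mem_of_le hJ (q := (⟨⟨x, hx⟩, ⟨y, hy⟩⟩ : Fin a × Fin b)) ⟨le_refl _, by simp only [Fin.mk_le_mk]; omega⟩ hpin
          have := (mk_mem_iff hJ x (y - 1) hx (by omega) (k - 1) (by omega)).1 hzI
          omega
      have g4a : fcnt J (k + 1) ≤ y + 1 :=
        fcnt_le_max hpm (fun u v hu hv hf hm =>
          ⟨show x ≤ u by omega, show y ≤ v by omega, by
            show ¬(u = x ∧ v = y); omega⟩)
      have g4b : y + 1 ≤ fcnt J (k + 1) := by
        have hzI : (⟨⟨x - 1, by omega⟩, ⟨y, hy⟩⟩ : Fin a × Fin b) ∈ J :=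
          mem_of_le hJ (q := (⟨⟨x, hx⟩, ⟨y, hy⟩⟩ : Fin a × Fin b)) ⟨by simp only [Fin.mk_le_mk]; omega, le_refl _⟩ hpin
        have := (mk_mem_iff hJ (x - 1) y (by omega) hy (k + 1) (by omega)).1 hzI
        omega
      constructor <;> omega
  · -- case k = 0
    have ha1 : |k| = 0 := by rw [hzero]; simp
    have ha2 : |k - 1| = 1 := by rw [hzero]; simp
    have ha3 : |k + 1| = 1 := by rw [hzero]; simp
    rw [ha1, ha2] at hs1
    rw [ha3, ha1] at hs2
    constructor
    · rintro ⟨hv1, hv2⟩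
      rw [hs1] at hv1
      rw [hs2] at hv2
      set m := fcnt J k with hm
      have hm1 : 1 ≤ m := by omega
      have hbndK : fcnt J k ≤ a :=
        fcnt_le (fun q hq hf => by have := q.1.isLt; omega)
      have hbndK2 : fcnt J k ≤ b :=
        fcnt_le (fun q hq hf => by have := q.2.isLt; omega)
      have hqa : m - 1 < a := by omega
      have hqb : m - 1 < b := by omega
      refine ⟨⟨⟨m - 1, hqa⟩, ⟨m - 1, hqb⟩⟩, ⟨?_, ?_⟩, ?_⟩
      · exact (mk_mem_iff hJ _ _ hqa hqb k (by omega)).2 (by omega)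
      · intro z hz hqz
        obtain ⟨⟨u, hu⟩, ⟨v, hv⟩⟩ := z
        rw [Prod.mk_le_mk] at hqz
        obtain ⟨hzu, hzv⟩ := hqz
        rw [Fin.mk_le_mk] at hzu hzv
        rcases lt_trichotomy ((v : ℤ) - u) k with hlt | heq | hgt
        · have := lt_fcnt_of_le hJ hz m (m - 1)
            (by omega) (by omega) (show m ≤ u from by omega) (show (m - 1) ≤ v from by omega) (k - 1) (by omega)
          omega
        · have hvm : u = m - 1 := by
            have h2 : min u v < fcnt J k := mem_fcnt hJ hz k heq
            omega
          simp only [Prod.mk.injEq, Fin.mk.injEq]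
          omega
        · have := lt_fcnt_of_le hJ hz (m - 1) m
            (by omega) (by omega) (show (m - 1) ≤ u from by omega) (show m ≤ v from by omega) (k + 1) (by omega)
          omega
      · show ((m - 1 : ℕ) : ℤ) - ((m - 1 : ℕ) : ℤ) = k
        omega
    · rintro ⟨⟨⟨x, hx⟩, ⟨y, hy⟩⟩, ⟨hpin, hpm⟩, hpf⟩
      have hpf' : (y : ℤ) - x = k := hpf
      rw [hs1, hs2]
      have g1 : min x y < fcnt J k := mem_fcnt hJ hpin k hpf
      have g2 : fcnt J k ≤ x + 1 :=
        fcnt_le_max hpm (fun u v hu hv hf hm =>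
          ⟨show x ≤ u by omega, show y ≤ v by omega, by
            show ¬(u = x ∧ v = y); omega⟩)
      have g3a : fcnt J (k - 1) ≤ x :=
        fcnt_le_max hpm (fun u v hu hv hf hm =>
          ⟨show x ≤ u by omega, show y ≤ v by omega, by
            show ¬(u = x ∧ v = y); omega⟩)
      have g3b : x ≤ fcnt J (k - 1) := by
        rcases Nat.eq_zero_or_pos x with h0 | hxpos
        · omega
        · have hzI : (⟨⟨x, hx⟩, ⟨y - 1, by omega⟩⟩ : Fin a × Fin b) ∈ J :=
            mem_of_le hJ (q := (⟨⟨x, hx⟩, ⟨y, hy⟩⟩ : Fin a × Fin b)) ⟨le_refl _, by simp only [Fin.mk_le_mk]; omega⟩ hpin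
          have := (mk_mem_iff hJ x (y - 1) hx (by omega) (k - 1) (by omega)).1 hzI
          omega
      have g4a : fcnt J (k + 1) ≤ x :=
        fcnt_le_max hpm (fun u v hu hv hf hm =>
          ⟨show x ≤ u by omega, show y ≤ v by omega, by
            show ¬(u = x ∧ v = y); omega⟩)
      have g4b : x ≤ fcnt J (k + 1) := by
        rcases Nat.eq_zero_or_pos x with h0 | hxpos
        · omega
        · have hzI : (⟨⟨x - 1, by omega⟩, ⟨y, hy⟩⟩ : Fin a × Fin b) ∈ J :=
            mem_of_le hJ (q := (⟨⟨x, hx⟩, ⟨y, hy⟩⟩ : Fin a × Fin b)) ⟨by simp only [Fin.mk_le_mk]; omega, le_refl _⟩ hpin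
          have := (mk_mem_iff hJ (x - 1) y (by omega) hy (k + 1) (by omega)).1 hzI
          omega
      constructor <;> omega
  · -- case 1 ≤ k
    have ha1 : |k| = k := abs_of_nonneg (by omega)
    have ha2 : |k - 1| = k - 1 := abs_of_nonneg (by omega)
    have ha3 : |k + 1| = k + 1 := abs_of_nonneg (by omega)
    rw [ha1, ha2] at hs1
    rw [ha3, ha1] at hs2
    constructor
    · rintro ⟨hv1, hv2⟩
      rw [hs1] at hv1
      rw [hs2] at hv2
      set m := fcnt J k with hm
      have hm1 : 1 ≤ m := by omega
      have hbndK : fcnt J k ≤ ((b : ℤ) - k).toNat :=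
        fcnt_le (fun q hq hf => by have := q.1.isLt; have := q.2.isLt; omega)
      have hbndK2 : fcnt J k ≤ a :=
        fcnt_le (fun q hq hf => by have := q.1.isLt; omega)
      have hqa : m - 1 < a := by omega
      have hqb : ((m : ℤ) + k - 1).toNat < b := by omega
      refine ⟨⟨⟨m - 1, hqa⟩, ⟨((m : ℤ) + k - 1).toNat, hqb⟩⟩, ⟨?_, ?_⟩, ?_⟩
      · exact (mk_mem_iff hJ _ _ hqa hqb k (by omega)).2 (by omega)
      · intro z hz hqz
        obtain ⟨⟨u, hu⟩, ⟨v, hv⟩⟩ := z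
        rw [Prod.mk_le_mk] at hqz
        obtain ⟨hzu, hzv⟩ := hqz
        rw [Fin.mk_le_mk] at hzu hzv
        rcases lt_trichotomy ((v : ℤ) - u) k with hlt | heq | hgt
        · have := lt_fcnt_of_le hJ hz m (((m : ℤ) + k - 1).toNat)
            (by omega) (by omega) (show m ≤ u from by omega) (show (((m : ℤ) + k - 1).toNat) ≤ v from by omega) (k - 1) (by omega)
          omega
        · have hvm : u = m - 1 := by
            have h2 : min u v < fcnt J k := mem_fcnt hJ hz k heq
            omega
          simp only [Prod.mk.injEq, Fin.mk.injEq]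
          omega
        · have := lt_fcnt_of_le hJ hz (m - 1) (((m : ℤ) + k).toNat)
            (by omega) (by omega) (show (m - 1) ≤ u from by omega) (show (((m : ℤ) + k).toNat) ≤ v from by omega) (k + 1) (by omega)
          omega
      · show ((((m : ℤ) + k - 1).toNat : ℕ) : ℤ) - ((m - 1 : ℕ) : ℤ) = k
        omega
    · rintro ⟨⟨⟨x, hx⟩, ⟨y, hy⟩⟩, ⟨hpin, hpm⟩, hpf⟩
      have hpf' : (y : ℤ) - x = k := hpf
      rw [hs1, hs2]
      have g1 : min x y < fcnt J k := mem_fcnt hJ hpin k hpf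
      have g2 : fcnt J k ≤ x + 1 :=
        fcnt_le_max hpm (fun u v hu hv hf hm =>
          ⟨show x ≤ u by omega, show y ≤ v by omega, by
            show ¬(u = x ∧ v = y); omega⟩)
      have g3a : fcnt J (k - 1) ≤ x + 1 :=
        fcnt_le_max hpm (fun u v hu hv hf hm =>
          ⟨show x ≤ u by omega, show y ≤ v by omega, by
            show ¬(u = x ∧ v = y); omega⟩)
      have g3b : x + 1 ≤ fcnt J (k - 1) := by
        have hy1 : 1 ≤ y := by omega
        have hzI : (⟨⟨x, hx⟩, ⟨y - 1, by omega⟩⟩ : Fin a × Fin b) ∈ J :=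
          mem_of_le hJ (q := (⟨⟨x, hx⟩, ⟨y, hy⟩⟩ : Fin a × Fin b)) ⟨le_refl _, by simp only [Fin.mk_le_mk]; omega⟩ hpin
        have := (mk_mem_iff hJ x (y - 1) hx (by omega) (k - 1) (by omega)).1 hzI
        omega
      have g4a : fcnt J (k + 1) ≤ x :=
        fcnt_le_max hpm (fun u v hu hv hf hm =>
          ⟨show x ≤ u by omega, show y ≤ v by omega, by
            show ¬(u = x ∧ v = y); omega⟩)
      have g4b : x ≤ fcnt J (k + 1) := by
        rcases Nat.eq_zero_or_pos x with h0 | hxpos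
        · omega
        · have hzI : (⟨⟨x - 1, by omega⟩, ⟨y, hy⟩⟩ : Fin a × Fin b) ∈ J :=
            mem_of_le hJ (q := (⟨⟨x, hx⟩, ⟨y, hy⟩⟩ : Fin a × Fin b)) ⟨by simp only [Fin.mk_le_mk]; omega, le_refl _⟩ hpin
          have := (mk_mem_iff hJ (x - 1) y (by omega) hy (k + 1) (by omega)).1 hzI
          omega
      constructor <;> omega


lemma mem_rowmotion {P : Type*} [PartialOrder P] [Fintype P] (I : Finset P) (y : P) :
    y ∈ rowmotion I ↔ ∃ m, m ∉ I ∧ (∀ z ∉ I, z ≤ m → z = m) ∧ y ≤ m := by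
  simp [rowmotion]

lemma rowmotion_lower {P : Type*} [PartialOrder P] [Fintype P] (I : Finset P) :
    IsLowerSet (↑(rowmotion I) : Set P) := by
  intro u v huv hu
  rw [Finset.mem_coe, mem_rowmotion] at *
  obtain ⟨m, h1, h2, h3⟩ := hu
  exact ⟨m, h1, h2, le_trans huv h3⟩

lemma rowmotion_max_iff {P : Type*} [PartialOrder P] [Fintype P] (I : Finset P) (p : P) :
    (p ∈ rowmotion I ∧ ∀ z ∈ rowmotion I, p ≤ z → z = p) ↔
      (p ∉ I ∧ ∀ z ∉ I, z ≤ p → z = p) := by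
  constructor
  · rintro ⟨hp, hmax⟩
    rw [mem_rowmotion] at hp
    obtain ⟨m, h1, h2, h3⟩ := hp
    have hm : m ∈ rowmotion I := (mem_rowmotion I m).2 ⟨m, h1, h2, le_rfl⟩
    have hmp : m = p := hmax m hm h3
    subst hmp
    exact ⟨h1, h2⟩
  · rintro ⟨h1, h2⟩
    refine ⟨(mem_rowmotion I p).2 ⟨p, h1, h2, le_rfl⟩, ?_⟩
    intro z hz hpz
    rw [mem_rowmotion] at hz
    obtain ⟨m, hm1, hm2, hm3⟩ := hz
    have hpm : p = m := hm2 p h1 (le_trans hpz hm3)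
    rw [← hpm] at hm3
    exact le_antisymm hm3 hpz

end RowAux

theorem rowmotion_sign_word_blocks
    (a b : ℕ) (ha : 1 ≤ a) (hb : 1 ≤ b)
    (I : Finset (Fin a × Fin b)) (hI : IsLowerSet (↑I : Set (Fin a × Fin b)))
    (i : ℕ) (hi1 : 1 ≤ i) (hi2 : i ≤ a + b - 1) :
    (sgn a b I i = -1 ∧ sgn a b I (i + 1) = 1) ↔
      (sgn a b (rowmotion I) i = 1 ∧ sgn a b (rowmotion I) (i + 1) = -1) := by
  rw [RowAux.valley_iff ha hb I hI i hi1 hi2,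
    RowAux.peak_iff ha hb (rowmotion I) (RowAux.rowmotion_lower I) i hi1 hi2]
  constructor
  · rintro ⟨p, hp, hf⟩
    exact ⟨p, (RowAux.rowmotion_max_iff I p).2 hp, hf⟩
  · rintro ⟨p, hp, hf⟩
    exact ⟨p, (RowAux.rowmotion_max_iff I p).1 hp, hf⟩
end

section
/- Let a, b be positive integers. The cardinality statistic I ↦ #I is ab/2-mesic under the action of rowmotion Φ_J on J([a]×[b]): for every Φ_J-orbit O ⊆ J([a]×[b]), (1/#O)·Σ_{I∈O} #I = ab/2. -/
lemma mem_rowmotion {P : Type*} [PartialOrder P] [Fintype P] (I : Finset P) (y : P) :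
    y ∈ rowmotion I ↔ ∃ m, m ∉ I ∧ (∀ z ∉ I, z ≤ m → z = m) ∧ y ≤ m := by
  rw [rowmotion]
  simp only [Finset.mem_filter, Finset.mem_univ, true_and]

namespace Homomesy
open Finset
open scoped Classical
variable {a b : ℕ}

structure Shape (a b : ℕ) where
  lam : ℕ → ℕ
  anti : ∀ i j : ℕ, i ≤ j → lam j ≤ lam i
  lb : ∀ i, lam i ≤ b
  z : ∀ i, a ≤ i → lam i = 0

def Rv (a : ℕ) (l : ℕ → ℕ) : Finset ℕ := (range a).image l

def wd (a : ℕ) (l : ℕ → ℕ) (p : ℕ) : Prop :=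
  if p < a then l (p + 1) < l p else p - a + 1 ∉ Rv a l

noncomputable def cnt (a : ℕ) (l : ℕ → ℕ) (lo hi : ℕ) : ℕ :=
  ((Ico lo hi).filter (wd a l)).card

lemma lam_mem_Rv (S : Shape a b) {t : ℕ} (ht : t < a) : S.lam t ∈ Rv a S.lam :=
  mem_image_of_mem _ (mem_range.2 ht)

lemma T1 (S : Shape a b) :
    ∀ d i, i + d = a →
      ((Ico i a).filter (fun p => S.lam (p + 1) < S.lam p)).card
        = ((Icc 1 (S.lam i)).filter (fun v => v ∈ Rv a S.lam)).card := by
  intro d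
  induction d with
  | zero =>
    intro i hi
    have hia : i = a := by omega
    subst hia
    rw [S.z i le_rfl]
    simp
  | succ d ih =>
    intro i hi
    have hia : i < a := by omega
    have hIco : Ico i a = insert i (Ico (i + 1) a) := by
      ext p; simp only [mem_Ico, mem_insert]; omega
    by_cases hd : S.lam (i + 1) < S.lam i
    · have hsplit : Icc 1 (S.lam i)
          = Icc 1 (S.lam (i + 1)) ∪ Ioc (S.lam (i + 1)) (S.lam i) := by
        ext v; simp only [mem_Icc, mem_union, mem_Ioc]; omega
      have hdisj : Disjoint (Icc 1 (S.lam (i + 1))) (Ioc (S.lam (i + 1)) (S.lam i)) := by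
        rw [disjoint_left]; intro v hv hv'
        simp only [mem_Icc] at hv; simp only [mem_Ioc] at hv'; omega
      have hsing : (Ioc (S.lam (i + 1)) (S.lam i)).filter (fun v => v ∈ Rv a S.lam)
          = {S.lam i} := by
        ext v
        simp only [mem_filter, mem_Ioc, mem_singleton]
        constructor
        · rintro ⟨⟨h1, h2⟩, hv⟩
          obtain ⟨t, ht, rfl⟩ := mem_image.1 hv
          rcases le_or_gt t i with h | h
          · exact le_antisymm h2 (S.anti t i h)
          · exact absurd (S.anti (i + 1) t h) (by omega)
        · rintro rfl
          exact ⟨⟨hd, le_rfl⟩, lam_mem_Rv S hia⟩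
      rw [hIco, filter_insert, if_pos hd,
        card_insert_of_notMem (by simp [mem_Ico]),
        hsplit, filter_union, card_union_of_disjoint (disjoint_filter_filter hdisj),
        hsing, card_singleton, ih (i + 1) (by omega)]
    · have he : S.lam (i + 1) = S.lam i :=
        le_antisymm (S.anti i (i + 1) (by omega)) (not_lt.1 hd)
      rw [hIco, filter_insert, if_neg hd, ih (i + 1) (by omega), he]

lemma T2 (S : Shape a b) (j : ℕ) :
    ((Ico a (a + j)).filter (wd a S.lam)).card
      = ((Icc 1 j).filter (fun v => v ∉ Rv a S.lam)).card := by
  apply card_nbij' (fun p => p - a + 1) (fun v => a + v - 1)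
  · intro p hp
    simp only [mem_coe, mem_filter, mem_Ico] at hp
    obtain ⟨⟨h1, h2⟩, hw⟩ := hp
    rw [wd, if_neg (by omega)] at hw
    simp only [mem_coe, mem_filter, mem_Icc]
    exact ⟨⟨by omega, by omega⟩, hw⟩
  · intro v hv
    simp only [mem_coe, mem_filter, mem_Icc] at hv
    obtain ⟨⟨h1, h2⟩, hv⟩ := hv
    simp only [mem_coe, mem_filter, mem_Ico]
    refine ⟨⟨by omega, by omega⟩, ?_⟩
    rw [wd, if_neg (by omega)]
    have : a + v - 1 - a + 1 = v := by omega
    rw [this]; exact hv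
  · intro p hp
    simp only [mem_coe, mem_filter, mem_Ico] at hp ⊢
    omega
  · intro v hv
    simp only [mem_coe, mem_filter, mem_Icc] at hv ⊢
    omega

lemma cnt_split (S : Shape a b) (i j : ℕ) (hia : i ≤ a) :
    cnt a S.lam i (a + j)
      = ((Icc 1 (S.lam i)).filter (fun v => v ∈ Rv a S.lam)).card
        + ((Icc 1 j).filter (fun v => v ∉ Rv a S.lam)).card := by
  have hsplit : Ico i (a + j) = Ico i a ∪ Ico a (a + j) := by
    ext p; simp only [mem_Ico, mem_union]; omega
  have hdisj : Disjoint (Ico i a) (Ico a (a + j)) := by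
    rw [disjoint_left]; intro p hp hp'
    simp only [mem_Ico] at hp hp'; omega
  have h1 : (Ico i a).filter (wd a S.lam)
      = (Ico i a).filter (fun p => S.lam (p + 1) < S.lam p) := by
    apply filter_congr
    intro p hp
    simp only [mem_Ico] at hp
    rw [wd, if_pos hp.2]
  rw [cnt, hsplit, filter_union,
    card_union_of_disjoint (disjoint_filter_filter hdisj), h1,
    T1 S (a - i) i (by omega), T2 S j]

lemma lt_iff_cnt (S : Shape a b) {i j : ℕ} (hi : i < a) (hj : j < b) :
    j < S.lam i ↔ j + 1 ≤ cnt a S.lam i (a + j) := by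
  rw [cnt_split S i j (le_of_lt hi)]
  have htot : ((Icc 1 j).filter (fun v => v ∈ Rv a S.lam)).card
      + ((Icc 1 j).filter (fun v => v ∉ Rv a S.lam)).card = j := by
    rw [card_filter_add_card_filter_not]
    simp
  constructor
  · intro h
    have h1 : insert (S.lam i) ((Icc 1 j).filter (fun v => v ∈ Rv a S.lam))
        ⊆ (Icc 1 (S.lam i)).filter (fun v => v ∈ Rv a S.lam) := by
      intro v hv
      simp only [mem_insert, mem_filter, mem_Icc] at hv ⊢
      rcases hv with rfl | ⟨⟨h1, h2⟩, h3⟩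
      · exact ⟨⟨by omega, le_rfl⟩, lam_mem_Rv S hi⟩
      · exact ⟨⟨h1, by omega⟩, h3⟩
    have h2 := card_le_card h1
    rw [card_insert_of_notMem (by simp only [mem_filter, mem_Icc]; omega)] at h2
    omega
  · intro h
    by_contra hlt
    push_neg at hlt
    have h1 : (Icc 1 (S.lam i)).filter (fun v => v ∈ Rv a S.lam)
        ⊆ (Icc 1 j).filter (fun v => v ∈ Rv a S.lam) :=
      filter_subset_filter _ (Icc_subset_Icc_right hlt)
    have h2 := card_le_card h1
    omega

lemma cnt_total (S : Shape a b) : cnt a S.lam 0 (a + b) = b := by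
  rw [cnt_split S 0 b (Nat.zero_le a)]
  have h1 : (Icc 1 (S.lam 0)).filter (fun v => v ∈ Rv a S.lam)
      = (Icc 1 b).filter (fun v => v ∈ Rv a S.lam) := by
    ext v
    simp only [mem_filter, mem_Icc]
    constructor
    · rintro ⟨⟨h1, h2⟩, h3⟩
      exact ⟨⟨h1, le_trans h2 (S.lb 0)⟩, h3⟩
    · rintro ⟨⟨h1, h2⟩, h3⟩
      obtain ⟨t, ht, rfl⟩ := mem_image.1 h3
      exact ⟨⟨h1, S.anti 0 t (Nat.zero_le t)⟩, h3⟩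
  rw [h1, card_filter_add_card_filter_not]
  simp


noncomputable def shapeOf (I : Finset (Fin a × Fin b)) (i : ℕ) : ℕ :=
  (I.filter (fun x => (x.1 : ℕ) = i)).card

lemma shapeOf_z (I : Finset (Fin a × Fin b)) (i : ℕ) (hi : a ≤ i) : shapeOf I i = 0 := by
  rw [shapeOf, card_eq_zero, filter_eq_empty_iff]
  intro x _
  have := x.1.isLt
  omega

-- row membership characterization
lemma mem_iff_lt_shape {I : Finset (Fin a × Fin b)} (hI : IsLowerSet (↑I : Set (Fin a × Fin b)))
    (i : Fin a) (j : Fin b) : (i, j) ∈ I ↔ (j : ℕ) < shapeOf I (i : ℕ) := by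
  classical
  set S : Finset (Fin b) := univ.filter (fun j' : Fin b => (i, j') ∈ I) with hS
  have hcard : shapeOf I (i : ℕ) = S.card := by
    apply card_nbij (fun x => x.2)
    · intro x hx
      simp only [mem_coe, mem_filter] at hx
      simp only [hS, mem_coe, mem_filter, mem_univ, true_and]
      have hx1 : x.1 = i := Fin.ext hx.2
      rw [← hx1]; exact hx.1
    · intro x hx y hy hxy
      simp only [Set.mem_setOf_eq, mem_coe, mem_filter] at hx hy
      have : x.1 = y.1 := Fin.ext (by rw [hx.2, hy.2])
      exact Prod.ext this hxy
    · intro j' hj'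
      simp only [hS, coe_filter, mem_univ, true_and, Set.mem_setOf_eq] at hj'
      exact ⟨(i, j'), by simp [mem_coe, mem_filter, hj'], rfl⟩
  rw [hcard]
  constructor
  · intro h
    have hsub : Iic j ⊆ S := by
      intro j' hj'
      simp only [mem_Iic] at hj'
      simp only [hS, mem_filter, mem_univ, true_and]
      exact hI (show (i, j') ≤ (i, j) from ⟨le_refl i, hj'⟩) h
    have := card_le_card hsub
    have hIic : (Iic j).card = (j : ℕ) + 1 := by
      exact Fin.card_Iic j
    omega
  · intro h
    by_contra hmem
    have hsub : S ⊆ Iio j := by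
      intro j' hj'
      simp only [hS, mem_filter, mem_univ, true_and] at hj'
      simp only [mem_Iio]
      by_contra hle
      push_neg at hle
      exact hmem (hI (show (i, j) ≤ (i, j') from ⟨le_refl i, hle⟩) hj')
    have := card_le_card hsub
    have hIio : (Iio j).card = (j : ℕ) := Fin.card_Iio j
    omega

-- continuing stage 2
lemma shapeOf_lb {I : Finset (Fin a × Fin b)} (hI : IsLowerSet (↑I : Set (Fin a × Fin b)))
    (i : ℕ) : shapeOf I i ≤ b := by
  rcases Nat.lt_or_ge i a with hi | hi
  · by_contra h
    push_neg at h
    -- then b < shapeOf I i, so (i, b-1+1)... easier: j := b would be < shapeOf, but mem_iff needs j < b.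
    -- instead: card of filter ≤ b via injection x ↦ x.2
    have : (I.filter (fun x => (x.1 : ℕ) = i)).card ≤ (univ : Finset (Fin b)).card := by
      apply card_le_card_of_injOn (fun x => x.2) (fun x _ => mem_univ _)
      intro x hx y hy hxy
      simp only [mem_coe, mem_filter] at hx hy
      exact Prod.ext (Fin.ext (by rw [hx.2, hy.2])) hxy
    simp only [card_univ, Fintype.card_fin] at this
    exact absurd this (by rw [shapeOf] at h; omega)
  · rw [shapeOf_z I i hi]; exact Nat.zero_le b

lemma shapeOf_anti {I : Finset (Fin a × Fin b)} (hI : IsLowerSet (↑I : Set (Fin a × Fin b)))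
    (i j : ℕ) (hij : i ≤ j) : shapeOf I j ≤ shapeOf I i := by
  rcases Nat.lt_or_ge j a with hj | hj
  · have hi : i < a := lt_of_le_of_lt hij hj
    -- every column in row j is in row i
    rcases Nat.eq_zero_or_pos (shapeOf I j) with h0 | hpos
    · omega
    · have hblt : shapeOf I j ≤ b := shapeOf_lb hI j
      -- show ∀ c < shapeOf I j, c < shapeOf I i via membership
      have key : ∀ c : ℕ, c < shapeOf I j → c < shapeOf I i := by
        intro c hc
        have hcb : c < b := lt_of_lt_of_le hc hblt
        have h1 := (mem_iff_lt_shape hI ⟨j, hj⟩ ⟨c, hcb⟩).2 hc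
        have h2 : ((⟨i, hi⟩ : Fin a), (⟨c, hcb⟩ : Fin b)) ∈ I :=
          hI (show ((⟨i, hi⟩ : Fin a), (⟨c, hcb⟩ : Fin b)) ≤ (⟨j, hj⟩, ⟨c, hcb⟩) from
            ⟨hij, le_refl _⟩) h1
        exact (mem_iff_lt_shape hI ⟨i, hi⟩ ⟨c, hcb⟩).1 h2
      have := key (shapeOf I j - 1) (by omega)
      omega
  · rw [shapeOf_z I j hj]; exact Nat.zero_le _

noncomputable def Shape.ofIdeal {I : Finset (Fin a × Fin b)}
    (hI : IsLowerSet (↑I : Set (Fin a × Fin b))) : Shape a b :=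
  ⟨shapeOf I, shapeOf_anti hI, shapeOf_lb hI, shapeOf_z I⟩

lemma Shape.ofIdeal_lam {I : Finset (Fin a × Fin b)}
    (hI : IsLowerSet (↑I : Set (Fin a × Fin b))) : (Shape.ofIdeal hI).lam = shapeOf I := rfl

lemma card_eq_sum_shape (I : Finset (Fin a × Fin b)) :
    I.card = ∑ i ∈ range a, shapeOf I i := by
  rw [card_eq_sum_card_fiberwise (f := fun x : Fin a × Fin b => (x.1 : ℕ))
    (t := range a) (fun x _ => mem_range.2 x.1.isLt)]
  rfl

section S3
variable {I : Finset (Fin a × Fin b)}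

def AddP (S : Shape a b) (k : ℕ) : Prop :=
  k < a ∧ S.lam k < b ∧ (k = 0 ∨ S.lam k < S.lam (k - 1))

lemma rowmotion_lower (J : Finset (Fin a × Fin b)) :
    IsLowerSet (↑(rowmotion J) : Set (Fin a × Fin b)) := by
  intro x y hyx hx
  simp only [mem_coe, mem_rowmotion] at hx ⊢
  obtain ⟨m, hm1, hm2, hm3⟩ := hx
  exact ⟨m, hm1, hm2, le_trans hyx hm3⟩


def AddI (I : Finset (Fin a × Fin b)) (k : ℕ) : Prop :=
  k < a ∧ shapeOf I k < b ∧ (k = 0 ∨ shapeOf I k < shapeOf I (k - 1))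

lemma minimal_iff (hI : IsLowerSet (↑I : Set (Fin a × Fin b))) (m : Fin a × Fin b) :
    (m ∉ I ∧ ∀ z ∉ I, z ≤ m → z = m)
      ↔ (AddI I (m.1 : ℕ) ∧ (m.2 : ℕ) = shapeOf I (m.1 : ℕ)) := by
  obtain ⟨k, l⟩ := m
  simp only
  constructor
  · rintro ⟨hm, hmin⟩
    rw [mem_iff_lt_shape hI] at hm
    push_neg at hm
    have hlb' : shapeOf I (k : ℕ) ≤ (l : ℕ) := hm
    have hval : (l : ℕ) = shapeOf I (k : ℕ) := by
      by_contra hne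
      have hlt : shapeOf I (k : ℕ) < (l : ℕ) := by omega
      have hz : ((k, ⟨shapeOf I (k : ℕ), lt_trans hlt l.isLt⟩) : Fin a × Fin b) ∉ I := by
        rw [mem_iff_lt_shape hI]; simp
      have := hmin _ hz ⟨le_refl k, by rw [Fin.le_def]; simpa using le_of_lt hlt⟩
      have := congrArg (fun x : Fin a × Fin b => (x.2 : ℕ)) this
      simp at this
      omega
    refine ⟨⟨k.isLt, by rw [← hval]; exact l.isLt, ?_⟩, hval⟩
    by_cases hk0 : (k : ℕ) = 0
    · exact Or.inl hk0
    · right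
      by_contra hle
      push_neg at hle
      have hk1 : (k : ℕ) - 1 < a := by omega
      have hz : ((⟨(k : ℕ) - 1, hk1⟩, l) : Fin a × Fin b) ∉ I := by
        rw [mem_iff_lt_shape hI]
        simp only [not_lt]
        omega
      have := hmin _ hz ⟨by rw [Fin.le_def]; exact Nat.sub_le _ _, le_refl l⟩
      have := congrArg (fun x : Fin a × Fin b => (x.1 : ℕ)) this
      simp at this
      omega
  · rintro ⟨⟨hka, hkb, hadd⟩, hval⟩
    constructor
    · rw [mem_iff_lt_shape hI]; omega
    · rintro ⟨k', l'⟩ hz hle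
      rw [mem_iff_lt_shape hI] at hz
      push_neg at hz
      obtain ⟨hle1, hle2⟩ := Prod.mk_le_mk.1 hle
      rw [Fin.le_def] at hle1 hle2
      have hanti := shapeOf_anti hI (k' : ℕ) (k : ℕ) hle1
      have hl' : (l' : ℕ) = (l : ℕ) := by omega
      have hsh : shapeOf I (k' : ℕ) = shapeOf I (k : ℕ) := by omega
      have hk' : (k' : ℕ) = (k : ℕ) := by
        by_contra hne
        have hlt : (k' : ℕ) < (k : ℕ) := by omega
        rcases hadd with h0 | hstrict
        · omega
        · have := shapeOf_anti hI (k' : ℕ) ((k : ℕ) - 1) (by omega)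
          omega
      exact Prod.ext (Fin.ext hk') (Fin.ext hl')

lemma mem_rowmotion_iff (hI : IsLowerSet (↑I : Set (Fin a × Fin b))) (x : Fin a × Fin b) :
    x ∈ rowmotion I ↔ ∃ k : ℕ, (x.1 : ℕ) ≤ k ∧ AddI I k ∧ (x.2 : ℕ) ≤ shapeOf I k := by
  rw [mem_rowmotion]
  constructor
  · rintro ⟨m, hm1, hm2, hm3⟩
    obtain ⟨hadd, hval⟩ := (minimal_iff hI m).1 ⟨hm1, hm2⟩
    obtain ⟨hle1, hle2⟩ := Prod.le_def.1 hm3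
    rw [Fin.le_def] at hle1 hle2
    exact ⟨(m.1 : ℕ), hle1, hadd, by omega⟩
  · rintro ⟨k, hk1, hadd, hk2⟩
    have hka : k < a := hadd.1
    have hkb : shapeOf I k < b := hadd.2.1
    have hmin := (minimal_iff hI ((⟨k, hka⟩ : Fin a), (⟨shapeOf I k, hkb⟩ : Fin b))).2
      ⟨hadd, rfl⟩
    exact ⟨_, hmin.1, hmin.2, Prod.le_def.2
      ⟨by rw [Fin.le_def]; exact hk1, by rw [Fin.le_def]; exact hk2⟩⟩

end S3

section S3b
variable {I : Finset (Fin a × Fin b)}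

lemma shape_rm (hI : IsLowerSet (↑I : Set (Fin a × Fin b))) {i j : ℕ}
    (hi : i < a) (hj : j < b) :
    j < shapeOf (rowmotion I) i ↔ ∃ k, i ≤ k ∧ AddI I k ∧ j ≤ shapeOf I k := by
  have h1 := mem_iff_lt_shape (rowmotion_lower I) ⟨i, hi⟩ ⟨j, hj⟩
  have h2 := mem_rowmotion_iff hI ((⟨i, hi⟩ : Fin a), (⟨j, hj⟩ : Fin b))
  simp only [Fin.val_mk] at h1 h2
  rw [← h1, h2]

lemma lam'_eq (hI : IsLowerSet (↑I : Set (Fin a × Fin b))) (hb : 1 ≤ b) {i : ℕ}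
    (hi : i ≤ a) :
    shapeOf (rowmotion I) i
      = if h : ∃ k, i ≤ k ∧ AddI I k then shapeOf I (Nat.find h) + 1 else 0 := by
  rcases Nat.lt_or_ge i a with hia | hia
  · by_cases h : ∃ k, i ≤ k ∧ AddI I k
    · rw [dif_pos h]
      obtain ⟨hik0, hadd0⟩ := Nat.find_spec h
      have hge : shapeOf I (Nat.find h) < shapeOf (rowmotion I) i := by
        rw [shape_rm hI hia hadd0.2.1]
        exact ⟨Nat.find h, hik0, hadd0, le_rfl⟩
      have hle : shapeOf (rowmotion I) i ≤ shapeOf I (Nat.find h) + 1 := by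
        by_contra hgt
        push_neg at hgt
        have hlam'b : shapeOf (rowmotion I) i ≤ b := shapeOf_lb (rowmotion_lower I) i
        have hjb : shapeOf I (Nat.find h) + 1 < b := by omega
        obtain ⟨k, hik, haddk, hjk⟩ := (shape_rm hI hia hjb).1 (by omega)
        have hk0le := Nat.find_min' h ⟨hik, haddk⟩
        have := shapeOf_anti hI _ _ hk0le
        omega
      omega
    · rw [dif_neg h]
      by_contra hne
      obtain ⟨k, hik, haddk, _⟩ := (shape_rm hI hia hb).1 (by omega)
      exact h ⟨k, hik, haddk⟩
  · rw [shapeOf_z (rowmotion I) i hia, dif_neg]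
    rintro ⟨k, hik, hka, -⟩
    omega

lemma find_congr_succ (hI : IsLowerSet (↑I : Set (Fin a × Fin b))) {i : ℕ}
    (hnadd : ¬ AddI I i)
    (h1 : ∃ k, i ≤ k ∧ AddI I k) (h2 : ∃ k, i + 1 ≤ k ∧ AddI I k) :
    Nat.find h1 = Nat.find h2 := by
  apply le_antisymm
  · exact Nat.find_min' h1 ⟨le_trans (by omega) (Nat.find_spec h2).1, (Nat.find_spec h2).2⟩
  · apply Nat.find_min' h2
    constructor
    · have hge := (Nat.find_spec h1).1
      have : Nat.find h1 ≠ i := by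
        intro he
        exact hnadd (he ▸ (Nat.find_spec h1).2)
      omega
    · exact (Nat.find_spec h1).2

lemma exists_succ_of_not_add {i : ℕ} (hnadd : ¬ AddI I i) :
    (∃ k, i ≤ k ∧ AddI I k) ↔ (∃ k, i + 1 ≤ k ∧ AddI I k) := by
  constructor
  · rintro ⟨k, hk, ha'⟩
    refine ⟨k, ?_, ha'⟩
    have : k ≠ i := fun he => hnadd (he ▸ ha')
    omega
  · rintro ⟨k, hk, ha'⟩
    exact ⟨k, by omega, ha'⟩

lemma W1 (hI : IsLowerSet (↑I : Set (Fin a × Fin b))) (hb : 1 ≤ b) {i : ℕ}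
    (h1 : 1 ≤ i) (hia : i < a) :
    (shapeOf (rowmotion I) (i + 1) < shapeOf (rowmotion I) i)
      ↔ shapeOf I i < shapeOf I (i - 1) := by
  rw [lam'_eq hI hb (le_of_lt hia), lam'_eq hI hb (by omega : i + 1 ≤ a)]
  by_cases hd : shapeOf I i < shapeOf I (i - 1)
  · have haddi : AddI I i :=
      ⟨hia, lt_of_lt_of_le hd (shapeOf_lb hI (i - 1)), Or.inr hd⟩
    have h : ∃ k, i ≤ k ∧ AddI I k := ⟨i, le_rfl, haddi⟩
    rw [dif_pos h]
    have hfind : Nat.find h = i :=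
      le_antisymm (Nat.find_min' h ⟨le_rfl, haddi⟩) (Nat.find_spec h).1
    rw [hfind]
    apply iff_of_true _ hd
    by_cases h2 : ∃ k, i + 1 ≤ k ∧ AddI I k
    · rw [dif_pos h2]
      obtain ⟨hik, haddk⟩ := Nat.find_spec h2
      have hk1 : shapeOf I (Nat.find h2) < shapeOf I (Nat.find h2 - 1) := by
        rcases haddk.2.2 with h0 | h'
        · omega
        · exact h'
      have := shapeOf_anti hI i (Nat.find h2 - 1) (by omega)
      omega
    · rw [dif_neg h2]
      omega
  · have hnadd : ¬ AddI I i := by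
      rintro ⟨-, -, h0 | h'⟩
      · omega
      · exact hd h'
    apply iff_of_false _ hd
    by_cases h2 : ∃ k, i + 1 ≤ k ∧ AddI I k
    · have h1' : ∃ k, i ≤ k ∧ AddI I k := (exists_succ_of_not_add hnadd).2 h2
      rw [dif_pos h1', dif_pos h2, find_congr_succ hI hnadd h1' h2]
      omega
    · rw [dif_neg (fun hh => h2 ((exists_succ_of_not_add hnadd).1 hh)), dif_neg h2]
      omega

lemma W2 (hI : IsLowerSet (↑I : Set (Fin a × Fin b))) (ha : 1 ≤ a) (hb : 1 ≤ b) :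
    (shapeOf (rowmotion I) 1 < shapeOf (rowmotion I) 0) ↔ shapeOf I 0 < b := by
  rw [lam'_eq hI hb (Nat.zero_le a), lam'_eq hI hb (by omega : 1 ≤ a)]
  by_cases hd : shapeOf I 0 < b
  · have hadd0 : AddI I 0 := ⟨ha, hd, Or.inl rfl⟩
    have h : ∃ k, 0 ≤ k ∧ AddI I k := ⟨0, le_rfl, hadd0⟩
    rw [dif_pos h]
    have hfind : Nat.find h = 0 := le_antisymm (Nat.find_min' h ⟨le_rfl, hadd0⟩) (Nat.zero_le _)
    rw [hfind]
    apply iff_of_true _ hd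
    by_cases h2 : ∃ k, 1 ≤ k ∧ AddI I k
    · rw [dif_pos h2]
      obtain ⟨hik, haddk⟩ := Nat.find_spec h2
      have hk1 : shapeOf I (Nat.find h2) < shapeOf I (Nat.find h2 - 1) := by
        rcases haddk.2.2 with h0 | h'
        · omega
        · exact h'
      have := shapeOf_anti hI 0 (Nat.find h2 - 1) (Nat.zero_le _)
      omega
    · rw [dif_neg h2]
      omega
  · have hnadd : ¬ AddI I 0 := by
      rintro ⟨-, hb', -⟩
      exact hd hb'
    apply iff_of_false _ hd
    by_cases h2 : ∃ k, 1 ≤ k ∧ AddI I k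
    · have h1' : ∃ k, 0 ≤ k ∧ AddI I k := (exists_succ_of_not_add hnadd).2 h2
      rw [dif_pos h1', dif_pos h2, find_congr_succ hI hnadd h1' h2]
      omega
    · rw [dif_neg (fun hh => h2 ((exists_succ_of_not_add hnadd).1 hh)), dif_neg h2]
      omega

lemma W3 (hI : IsLowerSet (↑I : Set (Fin a × Fin b))) (hb : 1 ≤ b) {j : ℕ}
    (hj : j < b) :
    (j + 1 ∈ Rv a (shapeOf (rowmotion I))) ↔ j ∈ Rv a (shapeOf I) := by
  constructor
  · intro hmem
    obtain ⟨i, hia, hval⟩ := mem_image.1 hmem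
    rw [mem_range] at hia
    rw [lam'_eq hI hb (le_of_lt hia)] at hval
    by_cases h : ∃ k, i ≤ k ∧ AddI I k
    · rw [dif_pos h] at hval
      have hspec := (Nat.find_spec h).2
      have : shapeOf I (Nat.find h) = j := by omega
      exact mem_image.2 ⟨Nat.find h, mem_range.2 hspec.1, this⟩
    · rw [dif_neg h] at hval
      omega
  · intro hmem
    obtain ⟨t, hta, hval⟩ := mem_image.1 hmem
    rw [mem_range] at hta
    have h : ∃ t', shapeOf I t' = j ∧ t' < a := ⟨t, hval, hta⟩
    have hkv : shapeOf I (Nat.find h) = j := (Nat.find_spec h).1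
    have hka : Nat.find h < a := (Nat.find_spec h).2
    have haddk : AddI I (Nat.find h) := by
      refine ⟨hka, by omega, ?_⟩
      rcases Nat.eq_zero_or_pos (Nat.find h) with h0 | hpos
      · exact Or.inl h0
      · right
        have hle : shapeOf I (Nat.find h) ≤ shapeOf I (Nat.find h - 1) :=
          shapeOf_anti hI (Nat.find h - 1) (Nat.find h) (by omega)
        have hne : shapeOf I (Nat.find h - 1) ≠ j := by
          intro he
          exact Nat.find_min h (show Nat.find h - 1 < Nat.find h by omega) ⟨he, by omega⟩
        omega
    have h2 : ∃ k', Nat.find h ≤ k' ∧ AddI I k' := ⟨Nat.find h, le_rfl, haddk⟩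
    have hfind : Nat.find h2 = Nat.find h :=
      le_antisymm (Nat.find_min' h2 ⟨le_rfl, haddk⟩) (Nat.find_spec h2).1
    have hlam' : shapeOf (rowmotion I) (Nat.find h) = j + 1 := by
      rw [lam'_eq hI hb (le_of_lt hka), dif_pos h2, hfind, hkv]
    exact mem_image.2 ⟨Nat.find h, mem_range.2 hka, hlam'⟩

lemma b_notmem_Rv_iff (hI : IsLowerSet (↑I : Set (Fin a × Fin b))) (ha : 1 ≤ a) :
    (b ∉ Rv a (shapeOf I)) ↔ shapeOf I 0 < b := by
  constructor
  · intro h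
    have h1 : shapeOf I 0 ≤ b := shapeOf_lb hI 0
    have h2 : shapeOf I 0 ≠ b := by
      intro he
      exact h (mem_image.2 ⟨0, mem_range.2 ha, he⟩)
    omega
  · intro h hmem
    obtain ⟨t, hta, hval⟩ := mem_image.1 hmem
    have := shapeOf_anti hI 0 t (Nat.zero_le t)
    omega

lemma zero_mem_Rv_iff (hI : IsLowerSet (↑I : Set (Fin a × Fin b))) (ha : 1 ≤ a) :
    (0 ∈ Rv a (shapeOf I)) ↔ shapeOf I (a - 1) = 0 := by
  constructor
  · intro hmem
    obtain ⟨t, hta, hval⟩ := mem_image.1 hmem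
    rw [mem_range] at hta
    have := shapeOf_anti hI t (a - 1) (by omega)
    omega
  · intro h
    exact mem_image.2 ⟨a - 1, mem_range.2 (by omega), h⟩

lemma word_step (hI : IsLowerSet (↑I : Set (Fin a × Fin b))) (ha : 1 ≤ a) (hb : 1 ≤ b)
    {q : ℕ} (hq : q < a + b) :
    wd a (shapeOf (rowmotion I)) q ↔ wd a (shapeOf I) ((q + (a + b - 1)) % (a + b)) := by
  rcases Nat.eq_zero_or_pos q with rfl | hqpos
  · have hmod : (0 + (a + b - 1)) % (a + b) = a + b - 1 := by
      rw [Nat.zero_add, Nat.mod_eq_of_lt (by omega)]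
    rw [hmod, wd, wd, if_pos (by omega : 0 < a), if_neg (by omega : ¬ (a + b - 1 < a))]
    have : a + b - 1 - a + 1 = b := by omega
    rw [this]
    rw [W2 hI ha hb, b_notmem_Rv_iff hI ha]
  · have hmod : (q + (a + b - 1)) % (a + b) = q - 1 := by
      have h1 : q + (a + b - 1) - (a + b) = q - 1 := by omega
      rw [Nat.mod_eq_sub_mod (by omega), h1, Nat.mod_eq_of_lt (by omega)]
    rw [hmod]
    rcases Nat.lt_or_ge q a with hqa | hqa
    · rw [wd, wd, if_pos hqa, if_pos (by omega : q - 1 < a)]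
      have hq1 : q - 1 + 1 = q := by omega
      rw [hq1, W1 hI hb (by omega) hqa]
    · rw [wd, if_neg (by omega)]
      rcases Nat.eq_or_lt_of_le hqa with rfl | hqa'
      · rw [wd, if_pos (by omega : a - 1 < a)]
        have h1 : a - a + 1 = 0 + 1 := by omega
        have h2 : a - 1 + 1 = a := by omega
        rw [h1, h2, shapeOf_z I a le_rfl, W3 hI hb hb, zero_mem_Rv_iff hI ha]
        omega
      · rw [wd, if_neg (by omega : ¬ (q - 1 < a))]
        have h1 : q - 1 - a + 1 = q - a := by omega
        rw [h1, W3 hI hb (show q - a < b by omega)]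

end S3b

section S4
variable {I : Finset (Fin a × Fin b)}

lemma iterate_lower (hI : IsLowerSet (↑I : Set (Fin a × Fin b))) (r : ℕ) :
    IsLowerSet (↑(rowmotion^[r] I) : Set (Fin a × Fin b)) := by
  induction r with
  | zero => exact hI
  | succ r ih =>
    rw [Function.iterate_succ_apply']
    exact rowmotion_lower _

lemma word_iterate (hI : IsLowerSet (↑I : Set (Fin a × Fin b))) (ha : 1 ≤ a) (hb : 1 ≤ b)
    (r : ℕ) : ∀ {q : ℕ}, q < a + b →
    (wd a (shapeOf (rowmotion^[r] I)) q
      ↔ wd a (shapeOf I) ((q + r * (a + b - 1)) % (a + b))) := by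
  induction r with
  | zero =>
    intro q hq
    rw [Function.iterate_zero_apply, Nat.zero_mul, Nat.add_zero, Nat.mod_eq_of_lt hq]
  | succ r ih =>
    intro q hq
    rw [Function.iterate_succ_apply', word_step (iterate_lower hI r) ha hb hq,
      ih (Nat.mod_lt _ (by omega))]
    have he : ((q + (a + b - 1)) % (a + b) + r * (a + b - 1)) % (a + b)
        = (q + (r + 1) * (a + b - 1)) % (a + b) := by
      rw [Nat.mod_add_mod]
      congr 1
      ring
    rw [he]

noncomputable def cfun (I : Finset (Fin a × Fin b)) (r i j : ℕ) : ℕ :=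
  ((range (a + b)).filter
    (fun q => wd a (shapeOf I) q ∧ (q + r) % (a + b) ∈ Ico i (a + j))).card

lemma hmul_aux (r a b : ℕ) (hab : 1 ≤ a + b) : r * (a + b - 1) + r = r * (a + b) := by
  have h2 : a + b - 1 + 1 = a + b := by omega
  calc r * (a + b - 1) + r = r * (a + b - 1 + 1) := by ring
    _ = r * (a + b) := by rw [h2]

lemma cnt_iterate (hI : IsLowerSet (↑I : Set (Fin a × Fin b))) (ha : 1 ≤ a) (hb : 1 ≤ b)
    (r : ℕ) {i j : ℕ} (hi : i < a) (hj : j < b) :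
    cnt a (shapeOf (rowmotion^[r] I)) i (a + j) = cfun I r i j := by
  have hval : ∀ p : ℕ, p < a + b →
      ((p + r * (a + b - 1)) % (a + b) + r) % (a + b) = p := by
    intro p hp
    rw [Nat.mod_add_mod, Nat.add_assoc, hmul_aux r a b (by omega),
      Nat.add_mul_mod_self_right, Nat.mod_eq_of_lt hp]
  have hval2 : ∀ q : ℕ, q < a + b →
      ((q + r) % (a + b) + r * (a + b - 1)) % (a + b) = q := by
    intro q hq
    rw [Nat.mod_add_mod,
      show q + r + r * (a + b - 1) = q + r * (a + b) by
        rw [← hmul_aux r a b (by omega)]; ring,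
      Nat.add_mul_mod_self_right, Nat.mod_eq_of_lt hq]
  unfold cnt cfun
  apply card_nbij' (fun p => (p + r * (a + b - 1)) % (a + b))
    (fun q => (q + r) % (a + b))
  · intro p hp
    simp only [mem_coe, mem_filter, mem_Ico] at hp
    obtain ⟨⟨hip, hpaj⟩, hw⟩ := hp
    have hpn : p < a + b := by omega
    simp only [mem_coe, mem_filter, mem_range, mem_Ico]
    refine ⟨Nat.mod_lt _ (by omega), ?_, ?_⟩
    · exact (word_iterate hI ha hb r hpn).1 hw
    · rw [hval p hpn]
      exact ⟨hip, hpaj⟩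
  · intro q hq
    simp only [mem_coe, mem_filter, mem_range, mem_Ico] at hq
    obtain ⟨hqn, hw, hi1, hi2⟩ := hq
    simp only [mem_coe, mem_filter, mem_Ico]
    refine ⟨⟨hi1, hi2⟩, ?_⟩
    rw [word_iterate hI ha hb r (Nat.mod_lt _ (by omega)), hval2 q hqn]
    exact hw
  · intro p hp
    simp only [mem_coe, mem_filter, mem_Ico] at hp
    exact hval p (by omega)
  · intro q hq
    simp only [mem_coe, mem_filter, mem_range] at hq
    exact hval2 q hq.1

lemma sum_ind (m : ℕ) (hm : m ≤ b) :
    ∑ j ∈ range b, (if j < m then (1 : ℕ) else 0) = m := by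
  have h1 : (range b).filter (fun j => j < m) = range m := by
    ext x
    simp only [mem_filter, mem_range]
    omega
  rw [← Finset.sum_filter, h1, Finset.sum_const, card_range, smul_eq_mul, mul_one]

lemma card_iterate (hI : IsLowerSet (↑I : Set (Fin a × Fin b))) (ha : 1 ≤ a) (hb : 1 ≤ b)
    (r : ℕ) :
    (rowmotion^[r] I).card
      = ∑ i ∈ range a, ∑ j ∈ range b, (if j + 1 ≤ cfun I r i j then (1 : ℕ) else 0) := by
  rw [card_eq_sum_shape]
  refine Finset.sum_congr rfl (fun i hi => ?_)
  rw [mem_range] at hi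
  rw [← sum_ind (shapeOf (rowmotion^[r] I) i) (shapeOf_lb (iterate_lower hI r) i)]
  refine Finset.sum_congr rfl (fun j hj => ?_)
  rw [mem_range] at hj
  have hX := lt_iff_cnt (Shape.ofIdeal (iterate_lower hI r)) hi hj
  rw [Shape.ofIdeal_lam] at hX
  refine if_congr (hX.trans ?_) rfl rfl
  rw [cnt_iterate hI ha hb r hi hj]

lemma wcount (hI : IsLowerSet (↑I : Set (Fin a × Fin b))) :
    ((range (a + b)).filter (fun q => wd a (shapeOf I) q)).card = b := by
  have h := cnt_total (Shape.ofIdeal hI)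
  rw [cnt, Shape.ofIdeal_lam] at h
  rw [Finset.range_eq_Ico]
  exact h

lemma window_flip {i j x : ℕ} (hi : i < a) (hj : j < b) (hx : x < a + b) :
    ((x + (2 * (a + b) - (i + j + 1))) % (a + b) ∈ Ico (a - 1 - i) (a + (b - 1 - j)))
      ↔ ¬ (x ∈ Ico i (a + j)) := by
  simp only [mem_Ico, not_and, not_lt]
  rcases Nat.lt_or_ge x (i + j + 1) with hc | hc
  · have e1 : x + (2 * (a + b) - (i + j + 1)) - (a + b) = x + (a + b) - (i + j + 1) := by
      omega
    have h1 : (x + (2 * (a + b) - (i + j + 1))) % (a + b) = x + (a + b) - (i + j + 1) := by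
      rw [Nat.mod_eq_sub_mod (by omega), e1, Nat.mod_eq_of_lt (by omega)]
    rw [h1]
    omega
  · have e1 : x + (2 * (a + b) - (i + j + 1)) - (a + b) - (a + b) = x - (i + j + 1) := by
      omega
    have h1 : (x + (2 * (a + b) - (i + j + 1))) % (a + b) = x - (i + j + 1) := by
      rw [Nat.mod_eq_sub_mod (by omega), Nat.mod_eq_sub_mod (by omega), e1,
        Nat.mod_eq_of_lt (by omega)]
    rw [h1]
    omega

lemma cfun_flip (hI : IsLowerSet (↑I : Set (Fin a × Fin b))) (ha : 1 ≤ a) (hb : 1 ≤ b)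
    {i j : ℕ} (r : ℕ) (hi : i < a) (hj : j < b) :
    cfun I r i j + cfun I ((r + (2 * (a + b) - (i + j + 1))) % (a + b)) (a - 1 - i) (b - 1 - j)
      = b := by
  rw [cfun, cfun]
  have hkey : ∀ q ∈ range (a + b),
      ((wd a (shapeOf I) q ∧
        (q + (r + (2 * (a + b) - (i + j + 1))) % (a + b)) % (a + b)
          ∈ Ico (a - 1 - i) (a + (b - 1 - j)))
      ↔ (wd a (shapeOf I) q ∧ ¬ ((q + r) % (a + b) ∈ Ico i (a + j)))) := by
    intro q hq
    rw [mem_range] at hq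
    have h2 : (q + (r + (2 * (a + b) - (i + j + 1))) % (a + b)) % (a + b)
        = ((q + r) % (a + b) + (2 * (a + b) - (i + j + 1))) % (a + b) := by
      rw [Nat.add_mod_mod, Nat.mod_add_mod]
      congr 1
      omega
    rw [h2, window_flip hi hj (Nat.mod_lt _ (by omega))]
  rw [filter_congr hkey]
  have hsplit := card_filter_add_card_filter_not
    (s := (range (a + b)).filter (fun q => wd a (shapeOf I) q))
    (p := fun q => (q + r) % (a + b) ∈ Ico i (a + j))
  rw [filter_filter, filter_filter] at hsplit
  have hsplit' : ((range (a + b)).filter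
        (fun q => wd a (shapeOf I) q ∧ (q + r) % (a + b) ∈ Ico i (a + j))).card
      + ((range (a + b)).filter
        (fun q => wd a (shapeOf I) q ∧ ¬ ((q + r) % (a + b) ∈ Ico i (a + j)))).card
      = ((range (a + b)).filter (fun q => wd a (shapeOf I) q)).card := hsplit
  rw [wcount hI] at hsplit'
  omega

def sg (a b : ℕ) (t : ℕ × ℕ × ℕ) : ℕ × ℕ × ℕ :=
  (a - 1 - t.1, b - 1 - t.2.1, (t.2.2 + (2 * (a + b) - (t.1 + t.2.1 + 1))) % (a + b))

noncomputable def Ff (I : Finset (Fin a × Fin b)) (t : ℕ × ℕ × ℕ) : ℕ :=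
  if t.2.1 + 1 ≤ cfun I t.2.2 t.1 t.2.1 then 1 else 0

lemma double_count (hI : IsLowerSet (↑I : Set (Fin a × Fin b))) (ha : 1 ≤ a) (hb : 1 ≤ b) :
    2 * ∑ r ∈ range (a + b), (rowmotion^[r] I).card = a * b * (a + b) := by
  classical
  set T : Finset (ℕ × ℕ × ℕ) := (range a) ×ˢ ((range b) ×ˢ (range (a + b))) with hT
  have hsum : ∑ r ∈ range (a + b), (rowmotion^[r] I).card = ∑ t ∈ T, Ff I t := by
    calc ∑ r ∈ range (a + b), (rowmotion^[r] I).card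
        = ∑ r ∈ range (a + b), ∑ i ∈ range a, ∑ j ∈ range b,
            (if j + 1 ≤ cfun I r i j then (1 : ℕ) else 0) :=
          Finset.sum_congr rfl (fun r _ => card_iterate hI ha hb r)
      _ = ∑ i ∈ range a, ∑ r ∈ range (a + b), ∑ j ∈ range b,
            (if j + 1 ≤ cfun I r i j then (1 : ℕ) else 0) := Finset.sum_comm
      _ = ∑ i ∈ range a, ∑ j ∈ range b, ∑ r ∈ range (a + b),
            (if j + 1 ≤ cfun I r i j then (1 : ℕ) else 0) :=
          Finset.sum_congr rfl (fun i _ => Finset.sum_comm)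
      _ = ∑ t ∈ T, Ff I t := by
          rw [hT, Finset.sum_product]
          refine Finset.sum_congr rfl (fun i _ => ?_)
          rw [Finset.sum_product]
          rfl
  have hmem : ∀ t ∈ T, sg a b t ∈ T := by
    rintro ⟨i, j, r⟩ ht
    simp only [hT, sg, mem_product, mem_range] at ht ⊢
    obtain ⟨h1, h2, h3⟩ := ht
    exact ⟨by omega, by omega, Nat.mod_lt _ (by omega)⟩
  have hinv : ∀ t ∈ T, sg a b (sg a b t) = t := by
    rintro ⟨i, j, r⟩ ht
    simp only [hT, mem_product, mem_range] at ht
    obtain ⟨h1, h2, h3⟩ := ht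
    have e1 : a - 1 - (a - 1 - i) = i := by omega
    have e2 : b - 1 - (b - 1 - j) = j := by omega
    have e3 : ((r + (2 * (a + b) - (i + j + 1))) % (a + b)
        + (2 * (a + b) - (a - 1 - i + (b - 1 - j) + 1))) % (a + b) = r := by
      rw [Nat.mod_add_mod,
        show r + (2 * (a + b) - (i + j + 1))
              + (2 * (a + b) - (a - 1 - i + (b - 1 - j) + 1)) = r + 3 * (a + b) by omega,
        Nat.add_mul_mod_self_right, Nat.mod_eq_of_lt h3]
    simp only [sg, e1, e2, e3]
  have hswap : ∑ t ∈ T, Ff I (sg a b t) = ∑ t ∈ T, Ff I t :=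
    Finset.sum_nbij' (fun t => sg a b t) (fun t => sg a b t) hmem hmem hinv hinv
      (fun t _ => rfl)
  have hflip : ∀ t ∈ T, Ff I t + Ff I (sg a b t) = 1 := by
    rintro ⟨i, j, r⟩ ht
    simp only [hT, mem_product, mem_range] at ht
    obtain ⟨h1, h2, h3⟩ := ht
    have hcf := cfun_flip hI ha hb r h1 h2
    simp only [Ff, sg]
    have hle : cfun I r i j ≤ b := by omega
    show ((if j + 1 ≤ cfun I r i j then 1 else 0) + if b - 1 - j + 1
        ≤ cfun I ((r + (2 * (a + b) - (i + j + 1))) % (a + b)) (a - 1 - i) (b - 1 - j)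
        then 1 else 0) = 1
    split_ifs with hA hB hB <;> omega
  have h2 : 2 * ∑ t ∈ T, Ff I t = ∑ t ∈ T, (Ff I t + Ff I (sg a b t)) := by
    rw [Finset.sum_add_distrib, hswap, two_mul]
  rw [hsum, h2, Finset.sum_congr rfl hflip]
  simp only [Finset.sum_const, smul_eq_mul, mul_one, hT, card_product, card_range]
  ring

end S4

section S5
variable {I : Finset (Fin a × Fin b)}

lemma mem_iterate_iff (hI : IsLowerSet (↑I : Set (Fin a × Fin b))) (ha : 1 ≤ a)
    (hb : 1 ≤ b) (r : ℕ) (i : Fin a) (j : Fin b) :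
    (i, j) ∈ rowmotion^[r] I ↔ (j : ℕ) + 1 ≤ cfun I r (i : ℕ) (j : ℕ) := by
  rw [mem_iff_lt_shape (iterate_lower hI r) i j]
  have hX := lt_iff_cnt (Shape.ofIdeal (iterate_lower hI r)) i.isLt j.isLt
  rw [Shape.ofIdeal_lam] at hX
  rw [hX, cnt_iterate hI ha hb r i.isLt j.isLt]

lemma iterate_period (hI : IsLowerSet (↑I : Set (Fin a × Fin b))) (ha : 1 ≤ a)
    (hb : 1 ≤ b) : rowmotion^[a + b] I = I := by
  ext x
  obtain ⟨i, j⟩ := x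
  have h0 := mem_iterate_iff hI ha hb 0 i j
  rw [Function.iterate_zero_apply] at h0
  rw [mem_iterate_iff hI ha hb (a + b) i j]
  have hc : cfun I (a + b) (i : ℕ) (j : ℕ) = cfun I 0 (i : ℕ) (j : ℕ) := by
    unfold cfun
    congr 1
    apply filter_congr
    intro q hq
    have he : (q + (a + b)) % (a + b) = (q + 0) % (a + b) := by
      rw [Nat.add_mod_right, Nat.add_zero]
    rw [he]
  rw [hc, ← h0]

end S5
end Homomesy

theorem rowmotion_order_ideal_cardinality_homomesy
    (a b : ℕ) (ha : 1 ≤ a) (hb : 1 ≤ b)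
    (O : Finset (Finset (Fin a × Fin b)))
    (hO : ∃ I : Finset (Fin a × Fin b), IsLowerSet (↑I : Set (Fin a × Fin b)) ∧
      ∀ J, J ∈ O ↔ ∃ k : ℕ, rowmotion^[k] I = J) :
    (∑ J ∈ O, (J.card : ℚ)) / O.card = (a : ℚ) * (b : ℚ) / 2 := by
  classical
  obtain ⟨I, hI, hOmem⟩ := hO
  have hnpos : 0 < a + b := by omega
  have hper : Function.IsPeriodicPt rowmotion (a + b) I :=
    Homomesy.iterate_period hI ha hb
  have hdpos : 0 < Function.minimalPeriod rowmotion I := hper.minimalPeriod_pos hnpos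
  have hddvd : Function.minimalPeriod rowmotion I ∣ (a + b) := hper.minimalPeriod_dvd
  set d := Function.minimalPeriod rowmotion I with hd
  have hOeq : O = (Finset.range d).image (fun k => rowmotion^[k] I) := by
    ext J
    rw [hOmem J, Finset.mem_image]
    constructor
    · rintro ⟨k, rfl⟩
      exact ⟨k % d, Finset.mem_range.2 (Nat.mod_lt _ hdpos),
        Function.iterate_mod_minimalPeriod_eq⟩
    · rintro ⟨k, -, rfl⟩
      exact ⟨k, rfl⟩
  have hinj : Set.InjOn (fun k => rowmotion^[k] I) ↑(Finset.range d) := by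
    rw [Finset.coe_range]
    exact Function.iterate_injOn_Iio_minimalPeriod
  have hcardO : O.card = d := by
    rw [hOeq, Finset.card_image_of_injOn hinj, Finset.card_range]
  have hsumO : ∑ J ∈ O, J.card = ∑ k ∈ Finset.range d, (rowmotion^[k] I).card := by
    rw [hOeq, Finset.sum_image (fun x hx y hy hxy => hinj hx hy hxy)]
  have hgper : ∀ m k : ℕ, (rowmotion^[m * d + k] I) = rowmotion^[k] I := by
    intro m k
    rw [Nat.add_comm, Function.iterate_add_apply]
    congr 1
    have : Function.IsPeriodicPt rowmotion (d * m) I :=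
      (Function.isPeriodicPt_iff_minimalPeriod_dvd).2 ⟨m, rfl⟩
    rw [show m * d = d * m from Nat.mul_comm m d]
    exact this
  have hsplit : ∀ m : ℕ, ∑ k ∈ Finset.range (m * d), (rowmotion^[k] I).card
      = m * ∑ k ∈ Finset.range d, (rowmotion^[k] I).card := by
    intro m
    induction m with
    | zero => simp
    | succ m ih =>
      have he : (m + 1) * d = m * d + d := by ring
      rw [he, Finset.sum_range_add, ih]
      have h2 : ∑ i ∈ Finset.range d, (rowmotion^[m * d + i] I).card
          = ∑ i ∈ Finset.range d, (rowmotion^[i] I).card :=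
        Finset.sum_congr rfl (fun i _ => by rw [hgper m i])
      rw [h2]
      ring
  obtain ⟨m, hm⟩ := hddvd
  have hmpos : 0 < m := by
    rcases Nat.eq_zero_or_pos m with rfl | h
    · omega
    · exact h
  have hkey := Homomesy.double_count hI ha hb
  rw [show a + b = m * d from by rw [hm, Nat.mul_comm], hsplit m] at hkey
  -- hkey : 2 * (m * Sd) = a * b * (m * d)
  have hSd : 2 * ∑ k ∈ Finset.range d, (rowmotion^[k] I).card = a * b * d := by
    have h1 : m * (2 * ∑ k ∈ Finset.range d, (rowmotion^[k] I).card)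
        = m * (a * b * d) := by
      calc m * (2 * ∑ k ∈ Finset.range d, (rowmotion^[k] I).card)
          = 2 * (m * ∑ k ∈ Finset.range d, (rowmotion^[k] I).card) := by ring
        _ = a * b * (m * d) := hkey
        _ = m * (a * b * d) := by ring
    exact Nat.eq_of_mul_eq_mul_left hmpos h1
  have hcast : (∑ J ∈ O, (J.card : ℚ)) = ((∑ k ∈ Finset.range d, (rowmotion^[k] I).card : ℕ) : ℚ) := by
    rw [← hsumO]
    push_cast
    rfl
  rw [hcast, hcardO]
  have hdne : (d : ℚ) ≠ 0 := Nat.cast_ne_zero.2 (by omega)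
  have h2 : (2 : ℚ) * (∑ k ∈ Finset.range d, (rowmotion^[k] I).card : ℕ) = (a : ℚ) * b * d := by
    exact_mod_cast congrArg (fun x : ℕ => (x : ℚ)) hSd
  push_cast at h2 ⊢
  field_simp
  linarith
end
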